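/- arXiv:0904.3606 — 5 statements merged into one kernel-verified Lean document; each statement's English description precedes it below -/
import Mathlib

section
/- There is no integral convex polytope P ⊂ ℝ^N (for any N) of dimension 7 whose δ-vector equals (1, 0, 1, 0, 1, 1, 0, 0). In particular, the classification of Theorem 0.1 fails for sequences with Σ_{i=0}^d δ_i = 4: this sequence has δ_0 = 1, δ_1 ≥ δ_7, Σ δ_i = 4 and satisfies all of Stanley's inequalities and the inequalities δ_{d−1} + ⋯ + δ_{d−i} ≤ δ_2 + ⋯ + δ_{i+1}, yet it is not a δ-vector. -/
open Finset MeasureTheory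

/-- A point of `ℝ^N` has integer coordinates. -/
def IsLatticePt {N : ℕ} (x : Fin N → ℝ) : Prop := ∀ j, ∃ z : ℤ, x j = (z : ℝ)

/-- `P ⊂ ℝ^N` is an integral convex polytope of dimension `d`: the convex hull of a
nonempty finite set of lattice points, whose affine hull has dimension `d`. -/
def IsIntegralPolytope (N d : ℕ) (P : Set (Fin N → ℝ)) : Prop :=
  (∃ V : Finset (Fin N → ℝ), V.Nonempty ∧ (∀ v ∈ V, IsLatticePt v) ∧
    P = convexHull ℝ (V : Set (Fin N → ℝ))) ∧
  Module.finrank ℝ (vectorSpan ℝ P) = d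

/-- `i(P, n) = |nP ∩ ℤ^N|`, the number of lattice points in the `n`-th dilate of `P`. -/
noncomputable def ehrhart {N : ℕ} (P : Set (Fin N → ℝ)) (n : ℕ) : ℕ :=
  Set.ncard {x : Fin N → ℝ | x ∈ (fun p => (n : ℝ) • p) '' P ∧ IsLatticePt x}

/-- The `i`-th entry of the δ-vector of a `d`-dimensional polytope `P`, via the
formula `δ_i = Σ_{j=0}^i (−1)^j C(d+1, j) i(P, i−j)`, which is equivalent to the
generating-function definition `(1−λ)^{d+1}(1 + Σ_{n≥1} i(P,n) λ^n) = Σ_i δ_i λ^i`. -/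
noncomputable def deltaVector {N : ℕ} (d : ℕ) (P : Set (Fin N → ℝ)) (i : ℕ) : ℤ :=
  ∑ j ∈ Finset.range (i + 1),
    (-1 : ℤ) ^ j * (Nat.choose (d + 1) j : ℤ) * (ehrhart P (i - j) : ℤ)

/-- Stanley's inequalities: with `s = max{ i : δ_i ≠ 0 }` (computed among indices `≤ d`),
`δ_0 + δ_1 + ⋯ + δ_i ≤ δ_s + δ_{s−1} + ⋯ + δ_{s−i}` for all `0 ≤ i ≤ ⌊s/2⌋`. -/
def StanleyIneq (d : ℕ) (δ : ℕ → ℕ) : Prop :=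
  ∀ i ≤ (Nat.findGreatest (fun k => δ k ≠ 0) d) / 2,
    ∑ j ∈ Finset.range (i + 1), δ j ≤
      ∑ j ∈ Finset.range (i + 1), δ (Nat.findGreatest (fun k => δ k ≠ 0) d - j)

/-- The inequalities `δ_{d−1} + δ_{d−2} + ⋯ + δ_{d−i} ≤ δ_2 + δ_3 + ⋯ + δ_{i+1}`
for all `1 ≤ i ≤ ⌊(d−1)/2⌋`. -/
def HibiIneq (d : ℕ) (δ : ℕ → ℕ) : Prop :=
  ∀ i, 1 ≤ i → i ≤ (d - 1) / 2 →
    ∑ j ∈ Finset.Icc 1 i, δ (d - j) ≤ ∑ j ∈ Finset.Icc 2 (i + 1), δ j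

/-- The sequence `(1, 0, 1, 0, 1, 1, 0, 0)`. -/
def exampleDelta : ℕ → ℕ := fun i => if i = 0 ∨ i = 2 ∨ i = 4 ∨ i = 5 then 1 else 0

namespace NotDelta

variable {N : ℕ}

lemma lat_zero : IsLatticePt (0 : Fin N → ℝ) := fun _ => ⟨0, by simp⟩

lemma lat_sub {x y : Fin N → ℝ} (hx : IsLatticePt x) (hy : IsLatticePt y) :
    IsLatticePt (x - y) := fun j => by
  obtain ⟨a, ha⟩ := hx j; obtain ⟨b, hb⟩ := hy j
  exact ⟨a - b, by simp [ha, hb]⟩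

lemma lat_add {x y : Fin N → ℝ} (hx : IsLatticePt x) (hy : IsLatticePt y) :
    IsLatticePt (x + y) := fun j => by
  obtain ⟨a, ha⟩ := hx j; obtain ⟨b, hb⟩ := hy j
  exact ⟨a + b, by simp [ha, hb]⟩

lemma lat_zsmul {x : Fin N → ℝ} (hx : IsLatticePt x) (c : ℤ) :
    IsLatticePt ((c : ℝ) • x) := fun j => by
  obtain ⟨a, ha⟩ := hx j
  exact ⟨c * a, by simp [ha]⟩

lemma lat_sum {k : ℕ} (f : Fin k → Fin N → ℝ) (hf : ∀ i, IsLatticePt (f i)) :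
    IsLatticePt (∑ i, f i) := by
  induction k with
  | zero => simpa using lat_zero
  | succ k ih =>
      rw [Fin.sum_univ_succ]
      exact lat_add (hf 0) (ih _ (fun i => hf i.succ))

/-- linear combination map -/
def Phi (v : Fin 8 → Fin N → ℝ) (c : Fin 8 → ℝ) : Fin N → ℝ := ∑ i, c i • v i

lemma lat_phi_int (v : Fin 8 → Fin N → ℝ) (hv : ∀ i, IsLatticePt (v i)) (a : Fin 8 → ℤ) :
    IsLatticePt (Phi v (fun i => (a i : ℝ))) :=
  lat_sum _ (fun i => lat_zsmul (hv i) (a i))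

/-- box elements of height k -/
def BoxK (v : Fin 8 → Fin N → ℝ) (k : ℕ) : Set (Fin 8 → ℝ) :=
  {r | (∀ i, 0 ≤ r i ∧ r i < 1) ∧ IsLatticePt (Phi v r) ∧ ∑ i, r i = (k : ℝ)}

def SS (v : Fin 8 → Fin N → ℝ) (n : ℕ) : Set (Fin N → ℝ) :=
  {x | x ∈ (fun p => (n : ℝ) • p) '' (convexHull ℝ (Set.range v)) ∧ IsLatticePt x}

lemma uniq {v : Fin 8 → Fin N → ℝ} (hai : AffineIndependent ℝ v) {c c' : Fin 8 → ℝ}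
    (h1 : ∑ i, c i = ∑ i, c' i) (h2 : Phi v c = Phi v c') : c = c' := by
  rw [affineIndependent_iff] at hai
  have h := hai Finset.univ (c - c') (by simpa [Finset.sum_sub_distrib] using sub_eq_zero.2 h1)
    (by simp only [Pi.sub_apply, sub_smul, Finset.sum_sub_distrib]
        exact sub_eq_zero.2 h2)
  funext i
  simpa [sub_eq_zero] using h i (Finset.mem_univ i)

lemma mem_image_iff (v : Fin 8 → Fin N → ℝ) (n : ℕ) (hn : 0 < n) (x : Fin N → ℝ) :
    (x ∈ (fun p => (n : ℝ) • p) '' (convexHull ℝ (Set.range v))) ↔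
      ∃ c : Fin 8 → ℝ, (∀ i, 0 ≤ c i) ∧ ∑ i, c i = (n : ℝ) ∧ Phi v c = x := by
  have hn' : (n : ℝ) ≠ 0 := by positivity
  constructor
  · rintro ⟨p, hp, rfl⟩
    rw [convexHull_range_eq_exists_affineCombination] at hp
    obtain ⟨s, w, h0, h1, rfl⟩ := hp
    refine ⟨fun i => (n : ℝ) * (if i ∈ s then w i else 0), ?_, ?_, ?_⟩
    · intro i
      by_cases hi : i ∈ s <;> simp [hi]
      exact mul_nonneg (by positivity) (h0 i hi)
    · rw [← Finset.mul_sum, Finset.sum_ite_mem, Finset.univ_inter, h1, mul_one]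
    · rw [affineCombination_eq_linear_combination _ _ _ h1]
      show (∑ i : Fin 8, ((n : ℝ) * if i ∈ s then w i else 0) • v i)
          = (n : ℝ) • ∑ i ∈ s, w i • v i
      rw [Finset.smul_sum, ← Finset.univ_inter s,
        ← Finset.sum_ite_mem Finset.univ s (fun i => (n : ℝ) • (w i • v i))]
      refine Finset.sum_congr rfl fun i _ => ?_
      by_cases hi : i ∈ s <;> simp [hi, mul_smul]
  · rintro ⟨c, h0, h1, rfl⟩
    refine ⟨Phi v (fun i => c i / n), ?_, ?_⟩
    · rw [convexHull_range_eq_exists_affineCombination]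
      refine ⟨Finset.univ, fun i => c i / n, fun i _ => div_nonneg (h0 i) (by positivity), ?_, ?_⟩
      · rw [← Finset.sum_div, h1, div_self hn']
      · rw [affineCombination_eq_linear_combination]
        · rfl
        · rw [← Finset.sum_div, h1, div_self hn']
    · show (n : ℝ) • ∑ i : Fin 8, (c i / n) • v i = Phi v c
      rw [Phi, Finset.smul_sum]
      refine Finset.sum_congr rfl fun i _ => ?_
      rw [smul_smul, mul_div_cancel₀ _ hn']


lemma card_piAntidiag_fin8 (j : ℕ) :
    ((Finset.univ : Finset (Fin 8)).piAntidiag j).card = (j + 7).choose 7 := by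
  classical
  have e1 : {m : Fin 8 → ℕ // m ∈ (Finset.univ : Finset (Fin 8)).piAntidiag j}
      ≃ {m : Fin 8 → ℕ // ∑ i, m i = j} :=
    Equiv.subtypeEquivRight (fun m => by simp)
  have e2 : {m : Fin 8 → ℕ // ∑ i, m i = j}
      ≃ {f : Fin 8 →₀ ℕ // Multiset.card (Finsupp.toMultiset f) = j} :=
    (Finsupp.equivFunOnFinite.symm).subtypeEquiv (fun m => by
      rw [Finsupp.card_toMultiset, Finsupp.sum_fintype _ _ (fun _ => rfl)]
      simp)
  have e3 : {f : Fin 8 →₀ ℕ // Multiset.card (Finsupp.toMultiset f) = j}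
      ≃ Sym (Fin 8) j :=
    (Multiset.toFinsupp.toEquiv.symm.subtypeEquiv (fun f => by rfl))
  have := Sym.card_sym_eq_choose (α := Fin 8) j
  have hcard : Nat.card (Sym (Fin 8) j) = (j + 7).choose 7 := by
    rw [Nat.card_eq_fintype_card, this]
    simp only [Fintype.card_fin]
    rw [show 8 + j - 1 = j + 7 by omega, show (j+7).choose j = (j+7).choose 7 from by rw [← Nat.choose_symm (by omega : j ≤ j + 7)]; congr 1; omega]
  calc ((Finset.univ : Finset (Fin 8)).piAntidiag j).card
      = Nat.card {m : Fin 8 → ℕ // m ∈ (Finset.univ : Finset (Fin 8)).piAntidiag j} := by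
        rw [Nat.card_eq_fintype_card, Fintype.card_coe]
    _
      = Nat.card (Sym (Fin 8) j) := Nat.card_congr ((e1.trans e2).trans e3)
    _ = (j + 7).choose 7 := hcard

lemma phi_add (v : Fin 8 → Fin N → ℝ) (r : Fin 8 → ℝ) (m : Fin 8 → ℕ) :
    Phi v (fun i => r i + (m i : ℝ)) = Phi v r + Phi v (fun i => ((m i : ℤ) : ℝ)) := by
  simp only [Phi, add_smul, Finset.sum_add_distrib]
  push_cast
  ring_nf

lemma inj_core {v : Fin 8 → Fin N → ℝ} (hai : AffineIndependent ℝ v)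
    {r r' : Fin 8 → ℝ} {m m' : Fin 8 → ℕ}
    (hr : ∀ i, 0 ≤ r i ∧ r i < 1) (hr' : ∀ i, 0 ≤ r' i ∧ r' i < 1)
    (hsum : ∑ i, (r i + (m i : ℝ)) = ∑ i, (r' i + (m' i : ℝ)))
    (hphi : Phi v (fun i => r i + (m i : ℝ)) = Phi v (fun i => r' i + (m' i : ℝ))) :
    r = r' ∧ m = m' := by
  have hc := uniq hai hsum hphi
  have hfr : ∀ i, r i = r' i := by
    intro i
    have h := congrFun hc i
    have e1 : Int.fract (r i + (m i : ℝ)) = r i := by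
      rw [show ((m i : ℕ) : ℝ) = (((m i : ℕ) : ℤ) : ℝ) by push_cast; ring, Int.fract_add_intCast,
        Int.fract_eq_self.2 ⟨(hr i).1, (hr i).2⟩]
    have e2 : Int.fract (r' i + (m' i : ℝ)) = r' i := by
      rw [show ((m' i : ℕ) : ℝ) = (((m' i : ℕ) : ℤ) : ℝ) by push_cast; ring, Int.fract_add_intCast,
        Int.fract_eq_self.2 ⟨(hr' i).1, (hr' i).2⟩]
    rw [← e1, ← e2, h]
  refine ⟨funext hfr, funext fun i => ?_⟩
  have h := congrFun hc i
  have : ((m i : ℕ) : ℝ) = ((m' i : ℕ) : ℝ) := by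
    have := hfr i; linarith
  exact_mod_cast this

lemma boxk_lt8 {v : Fin 8 → Fin N → ℝ} {k : ℕ} {r : Fin 8 → ℝ} (h : r ∈ BoxK v k) : k < 8 := by
  have h1 : ∑ i, r i < ∑ _i : Fin 8, (1 : ℝ) :=
    Finset.sum_lt_sum_of_nonempty Finset.univ_nonempty (fun i _ => (h.1 i).2)
  rw [h.2.2] at h1
  simp only [Finset.sum_const, Finset.card_univ, Fintype.card_fin, nsmul_eq_mul, mul_one] at h1
  exact_mod_cast h1

lemma count {v : Fin 8 → Fin N → ℝ} (hv : ∀ i, IsLatticePt (v i))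
    (hai : AffineIndependent ℝ v) (n : ℕ) (hn : 0 < n) (hS : (SS v n).Finite)
    (hB : ∀ k, (BoxK v k).Finite) :
    (SS v n).ncard = ∑ k ∈ Finset.range (n + 1), (BoxK v k).ncard * (n - k + 7).choose 7 := by
  classical
  set g : ℕ → Finset (Fin N → ℝ) := fun k =>
    (((hB k).toFinset) ×ˢ ((Finset.univ : Finset (Fin 8)).piAntidiag (n - k))).image
      (fun p => Phi v (fun i => p.1 i + (p.2 i : ℝ))) with hg
  have hmemg : ∀ k, k ≤ n → ∀ x, x ∈ g k ↔
      ∃ (r : Fin 8 → ℝ) (m : Fin 8 → ℕ), r ∈ BoxK v k ∧ (∑ i, m i = n - k) ∧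
        Phi v (fun i => r i + (m i : ℝ)) = x := by
    intro k _ x
    simp only [hg, Finset.mem_image, Finset.mem_product, Set.Finite.mem_toFinset,
      Finset.mem_piAntidiag, Prod.exists]
    constructor
    · rintro ⟨r, m, ⟨h1, h2, _⟩, h3⟩
      exact ⟨r, m, h1, h2, h3⟩
    · rintro ⟨r, m, h1, h2, h3⟩
      exact ⟨r, m, ⟨h1, h2, fun i _ => Finset.mem_univ i⟩, h3⟩
  have hkey : hS.toFinset = (Finset.range (n + 1)).biUnion g := by
    ext x
    simp only [Set.Finite.mem_toFinset, Finset.mem_biUnion, Finset.mem_range]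
    constructor
    · rintro ⟨himg, hlat⟩
      obtain ⟨c, hc0, hcsum, hcx⟩ := (mem_image_iff v n hn x).1 himg
      set m : Fin 8 → ℕ := fun i => (⌊c i⌋).toNat with hm
      set r : Fin 8 → ℝ := fun i => Int.fract (c i) with hr
      have hfl : ∀ i, (0 : ℤ) ≤ ⌊c i⌋ := fun i => Int.le_floor.2 (by simpa using hc0 i)
      have hcrm : ∀ i, c i = r i + (m i : ℝ) := by
        intro i
        have : ((m i : ℕ) : ℝ) = ((⌊c i⌋ : ℤ) : ℝ) := by
          have h2 := Int.toNat_of_nonneg (hfl i)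
          exact_mod_cast congrArg (fun z : ℤ => (z : ℝ)) h2
        rw [hr]
        simp only [this]
        rw [Int.fract]
        ring
      have hr01 : ∀ i, 0 ≤ r i ∧ r i < 1 := fun i => ⟨Int.fract_nonneg _, Int.fract_lt_one _⟩
      have hrsum0 : (0 : ℝ) ≤ ∑ i, r i := Finset.sum_nonneg fun i _ => (hr01 i).1
      have hcsum' : ∑ i, c i = (∑ i, r i) + (∑ i, (m i : ℝ)) := by
        rw [← Finset.sum_add_distrib]
        exact Finset.sum_congr rfl fun i _ => hcrm i
      have hmn : ∑ i, m i ≤ n := by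
        have : ((∑ i, m i : ℕ) : ℝ) ≤ (n : ℝ) := by
          push_cast
          rw [hcsum'] at hcsum
          linarith
        exact_mod_cast this
      refine ⟨n - ∑ i, m i, by omega, ?_⟩
      rw [hmemg _ (by omega)]
      refine ⟨r, m, ⟨hr01, ?_, ?_⟩, by omega, ?_⟩
      · have hphi : Phi v c = Phi v r + Phi v (fun i => ((m i : ℤ) : ℝ)) := by
          rw [show c = fun i => r i + (m i : ℝ) from funext hcrm]
          exact phi_add v r m
        have : Phi v r = x - Phi v (fun i => ((m i : ℤ) : ℝ)) := by
          rw [← hcx, hphi]; abel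
        rw [this]
        exact lat_sub hlat (lat_phi_int v hv _)
      · have : ((n - ∑ i, m i : ℕ) : ℝ) = (n : ℝ) - (∑ i, (m i : ℝ)) := by
          push_cast [Nat.cast_sub hmn]
          ring
        rw [this]
        rw [hcsum'] at hcsum
        linarith
      · rw [show (fun i => r i + (m i : ℝ)) = c from (funext hcrm).symm]
        exact hcx
    · rintro ⟨k, hk, hx⟩
      rw [hmemg _ (by omega)] at hx
      obtain ⟨r, m, hrbox, hmsum, rfl⟩ := hx
      have hk' : k ≤ n := by omega
      constructor
      · rw [mem_image_iff v n hn]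
        refine ⟨fun i => r i + (m i : ℝ),
          fun i => add_nonneg (hrbox.1 i).1 (Nat.cast_nonneg _), ?_, rfl⟩
        rw [Finset.sum_add_distrib, hrbox.2.2, ← Nat.cast_sum, hmsum, Nat.cast_sub hk']
        ring
      · rw [phi_add]
        exact lat_add hrbox.2.1 (lat_phi_int v hv _)
  have hdisj : ∀ k1 ∈ Finset.range (n + 1), ∀ k2 ∈ Finset.range (n + 1), k1 ≠ k2 →
      Disjoint (g k1) (g k2) := by
    intro k1 hk1 k2 hk2 hne
    rw [Finset.disjoint_left]
    intro x hx1 hx2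
    rw [Finset.mem_range] at hk1 hk2
    rw [hmemg _ (by omega)] at hx1 hx2
    obtain ⟨r, m, hrb, hms, hphi⟩ := hx1
    obtain ⟨r', m', hrb', hms', hphi'⟩ := hx2
    have hsum : ∑ i, (r i + (m i : ℝ)) = ∑ i, (r' i + (m' i : ℝ)) := by
      rw [Finset.sum_add_distrib, Finset.sum_add_distrib, hrb.2.2, hrb'.2.2,
        ← Nat.cast_sum, ← Nat.cast_sum, hms, hms', Nat.cast_sub (by omega), Nat.cast_sub (by omega)]
      push_cast
      ring
    obtain ⟨hrr, _⟩ := inj_core hai hrb.1 hrb'.1 hsum (hphi.trans hphi'.symm)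
    apply hne
    have : (k1 : ℝ) = (k2 : ℝ) := by rw [← hrb.2.2, ← hrb'.2.2, hrr]
    exact_mod_cast this
  have hcardg : ∀ k ∈ Finset.range (n + 1), (g k).card =
      (BoxK v k).ncard * (n - k + 7).choose 7 := by
    intro k hk
    rw [Finset.mem_range] at hk
    rw [hg]
    rw [Finset.card_image_of_injOn, Finset.card_product, Set.ncard_eq_toFinset_card _ (hB k),
      card_piAntidiag_fin8]
    rintro ⟨r, m⟩ hp ⟨r', m'⟩ hp' heq
    simp only [Finset.coe_product, Set.mem_prod, Finset.mem_coe, Set.Finite.mem_toFinset,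
      Finset.mem_piAntidiag] at hp hp'
    have hrb := hp.1
    have hrb' := hp'.1
    have hms := hp.2.1
    have hms' := hp'.2.1
    have hsum : ∑ i, (r i + (m i : ℝ)) = ∑ i, (r' i + (m' i : ℝ)) := by
      rw [Finset.sum_add_distrib, Finset.sum_add_distrib, hrb.2.2, hrb'.2.2,
        ← Nat.cast_sum, ← Nat.cast_sum, hms, hms']
    obtain ⟨h1, h2⟩ := inj_core hai hrb.1 hrb'.1 hsum heq
    simp [Prod.ext_iff, h1, h2]
  rw [Set.ncard_eq_toFinset_card _ hS, hkey, Finset.card_biUnion hdisj]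
  exact Finset.sum_congr rfl hcardg

-- pointwise fract facts
lemma fract_half : Int.fract ((1:ℝ)/2) = 1/2 := Int.fract_eq_self.2 ⟨by norm_num, by norm_num⟩

lemma fract_neg_eq_zero_iff {a : ℝ} (h0 : 0 ≤ a) (h1 : a < 1) :
    Int.fract (-a) = 0 ↔ a = 0 := by
  rw [Int.fract_neg_eq_zero, Int.fract_eq_self.2 ⟨h0, h1⟩]

lemma fract_neg_of_pos {a : ℝ} (h0 : 0 < a) (h1 : a < 1) : Int.fract (-a) = 1 - a := by
  rw [Int.fract_neg (by rw [Int.fract_eq_self.2 ⟨le_of_lt h0, h1⟩]; exact ne_of_gt h0),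
    Int.fract_eq_self.2 ⟨le_of_lt h0, h1⟩]

lemma fract_neg_invol {a : ℝ} (h0 : 0 ≤ a) (h1 : a < 1) :
    Int.fract (-(Int.fract (-a))) = a := by
  rcases eq_or_lt_of_le h0 with h | h
  · rw [← h]; norm_num
  · rw [fract_neg_of_pos h h1]
    have : -(1 - a) = (a : ℝ) + ((-1 : ℤ) : ℝ) := by push_cast; ring
    rw [this, Int.fract_add_intCast, Int.fract_eq_self.2 ⟨h0, h1⟩]

lemma add_fract_neg {a : ℝ} (h0 : 0 ≤ a) (h1 : a < 1) :
    a + Int.fract (-a) = if a = 0 then 0 else 1 := by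
  rcases eq_or_lt_of_le h0 with h | h
  · rw [← h]; norm_num
  · rw [fract_neg_of_pos h h1, if_neg (ne_of_gt h)]; ring

lemma phi_sub (v : Fin 8 → Fin N → ℝ) (a b : Fin 8 → ℝ) :
    Phi v (fun i => a i - b i) = Phi v a - Phi v b := by
  simp only [Phi, sub_smul, Finset.sum_sub_distrib]

lemma box0 (v : Fin 8 → Fin N → ℝ) : BoxK v 0 = {0} := by
  ext r
  constructor
  · intro h
    have := (Finset.sum_eq_zero_iff_of_nonneg (fun i _ => (h.1 i).1)).1 (by
      rw [h.2.2]; norm_num)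
    show r = 0
    funext i
    exact this i (Finset.mem_univ i)
  · rintro rfl
    refine ⟨fun i => by norm_num, ?_, by simp⟩
    have : Phi v (0 : Fin 8 → ℝ) = 0 := by simp [Phi]
    rw [this]
    exact fun j => ⟨0, by simp⟩

lemma box_neg {v : Fin 8 → Fin N → ℝ} (hv : ∀ i, IsLatticePt (v i)) {k : ℕ} {r : Fin 8 → ℝ}
    (h : r ∈ BoxK v k) :
    ∃ k' : ℕ, (fun i => Int.fract (-(r i))) ∈ BoxK v k' ∧
      (k : ℝ) + (k' : ℝ) = ((Finset.univ.filter (fun i => r i ≠ 0)).card : ℝ) := by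
  classical
  have hb : ∀ i, 0 ≤ Int.fract (-(r i)) ∧ Int.fract (-(r i)) < 1 :=
    fun i => ⟨Int.fract_nonneg _, Int.fract_lt_one _⟩
  have hsum : (k : ℝ) + ∑ i, Int.fract (-(r i))
      = ((Finset.univ.filter (fun i => r i ≠ 0)).card : ℝ) := by
    rw [← h.2.2, ← Finset.sum_add_distrib]
    have : ∀ i ∈ Finset.univ, r i + Int.fract (-(r i)) = if r i ≠ 0 then (1:ℝ) else 0 := by
      intro i _
      rw [add_fract_neg (h.1 i).1 (h.1 i).2]
      by_cases hi : r i = 0 <;> simp [hi]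
    rw [Finset.sum_congr rfl this, Finset.sum_ite, Finset.sum_const, Finset.sum_const]
    simp
  have hnn : (0:ℝ) ≤ ∑ i, Int.fract (-(r i)) := Finset.sum_nonneg fun i _ => (hb i).1
  have hkle : k ≤ (Finset.univ.filter (fun i => r i ≠ 0)).card := by
    have : (k : ℝ) ≤ ((Finset.univ.filter (fun i => r i ≠ 0)).card : ℝ) := by linarith
    exact_mod_cast this
  refine ⟨(Finset.univ.filter (fun i => r i ≠ 0)).card - k, ⟨hb, ?_, ?_⟩, ?_⟩
  · have heq : (fun i => Int.fract (-(r i))) = fun i => ((-⌊-(r i)⌋ : ℤ) : ℝ) - r i := by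
      funext i
      rw [Int.fract]
      push_cast
      ring
    rw [heq, phi_sub]
    exact lat_sub (lat_phi_int v hv _) h.2.1
  · rw [Nat.cast_sub hkle]
    linarith
  · rw [Nat.cast_sub hkle]
    ring

lemma box_add {v : Fin 8 → Fin N → ℝ} (hv : ∀ i, IsLatticePt (v i)) {kr ks : ℕ}
    {r s : Fin 8 → ℝ} (hr : r ∈ BoxK v kr) (hs : s ∈ BoxK v ks) :
    ∃ k' : ℕ, (fun i => Int.fract (r i + s i)) ∈ BoxK v k' := by
  classical
  have hb : ∀ i, 0 ≤ Int.fract (r i + s i) ∧ Int.fract (r i + s i) < 1 :=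
    fun i => ⟨Int.fract_nonneg _, Int.fract_lt_one _⟩
  have hlat : IsLatticePt (Phi v (fun i => Int.fract (r i + s i))) := by
    have heq : (fun i => Int.fract (r i + s i))
        = fun i => (r i + s i) - ((⌊r i + s i⌋ : ℤ) : ℝ) := by
      funext i; rw [Int.fract]
    rw [heq]
    have : Phi v (fun i => (r i + s i) - ((⌊r i + s i⌋ : ℤ) : ℝ))
        = (Phi v r + Phi v s) - Phi v (fun i => ((⌊r i + s i⌋ : ℤ) : ℝ)) := by
      rw [phi_sub]
      congr 1
      simp only [Phi, add_smul, Finset.sum_add_distrib]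
    rw [this]
    exact lat_sub (lat_add hr.2.1 hs.2.1) (lat_phi_int v hv _)
  set M : ℤ := ∑ i, ⌊r i + s i⌋ with hM
  have hsum : ∑ i, Int.fract (r i + s i) = ((kr : ℝ) + ks) - (M : ℝ) := by
    simp only [Int.fract]
    rw [Finset.sum_sub_distrib, Finset.sum_add_distrib, hr.2.2, hs.2.2, hM]
    push_cast
    ring
  have hnn : (0:ℝ) ≤ ∑ i, Int.fract (r i + s i) := Finset.sum_nonneg fun i _ => (hb i).1
  have hMle : M ≤ (kr : ℤ) + ks := by
    have : (M : ℝ) ≤ (kr : ℝ) + ks := by linarith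
    exact_mod_cast this
  refine ⟨((kr : ℤ) + ks - M).toNat, hb, hlat, ?_⟩
  rw [hsum]
  have : (((kr : ℤ) + ks - M).toNat : ℤ) = (kr : ℤ) + ks - M := Int.toNat_of_nonneg (by omega)
  have h2 : ((((kr : ℤ) + ks - M).toNat : ℤ) : ℝ) = ((kr : ℤ) + ks - M : ℤ) := by
    exact_mod_cast congrArg (fun z : ℤ => (z : ℝ)) this
  push_cast at h2 ⊢
  linarith


lemma box_finite {v : Fin 8 → Fin N → ℝ} (hai : AffineIndependent ℝ v)
    (hSfin : ∀ n, 1 ≤ n → n ≤ 7 → (SS v n).Finite) (k : ℕ) : (BoxK v k).Finite := by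
  rcases Nat.eq_zero_or_pos k with rfl | hk
  · rw [box0]; exact Set.finite_singleton _
  rcases le_or_gt 8 k with h8 | h8
  · have : BoxK v k = ∅ := by
      ext r; simp only [Set.mem_empty_iff_false, iff_false]
      intro h; exact absurd (boxk_lt8 h) (by omega)
    rw [this]; exact Set.finite_empty
  have himg : (Phi v '' BoxK v k).Finite := by
    apply (hSfin k hk (by omega)).subset
    rintro x ⟨r, hr, rfl⟩
    exact ⟨(mem_image_iff v k hk _).2 ⟨r, fun i => (hr.1 i).1, hr.2.2, rfl⟩, hr.2.1⟩
  apply Set.Finite.of_finite_image himg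
  intro r hr r' hr' heq
  exact uniq hai (by rw [hr.2.2, hr'.2.2]) heq

end NotDelta

open NotDelta

/-- The sequence `(1,0,1,0,1,1,0,0)` has `δ_0 = 1`, `δ_1 ≥ δ_7`, `Σ δ_i = 4`, and
satisfies all of Stanley's inequalities and the inequalities (1.3) for `d = 7`,
yet it is not the δ-vector of any integral convex polytope `P ⊂ ℝ^N` of dimension `7`:
the classification of Theorem 0.1 fails when `Σ δ_i = 4`. -/


theorem not_delta_vector_example :
    (exampleDelta 0 = 1 ∧ exampleDelta 7 ≤ exampleDelta 1 ∧
      (∑ i ∈ Finset.range 8, exampleDelta i) = 4 ∧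
      StanleyIneq 7 exampleDelta ∧ HibiIneq 7 exampleDelta) ∧
    ¬ ∃ (N : ℕ) (P : Set (Fin N → ℝ)), IsIntegralPolytope N 7 P ∧
        ∀ i ≤ 7, deltaVector 7 P i = (exampleDelta i : ℤ) := by
  constructor
  · refine ⟨by decide, by decide, by decide, ?_, ?_⟩
    · intro i hi
      have hfg : Nat.findGreatest (fun k => exampleDelta k ≠ 0) 7 = 5 := by decide
      rw [hfg] at hi ⊢
      interval_cases i <;> decide
    · intro i h1 h2
      have : i ≤ 3 := by omega
      interval_cases i <;> decide
  · classical
  classical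
    rintro ⟨N, P, ⟨⟨V, hVne, hVlat, rfl⟩, hrank⟩, hδ⟩
    -- extract Ehrhart values
    set P := convexHull ℝ (V : Set (Fin N → ℝ)) with hPdef
    have c0 : Nat.choose 8 0 = 1 := by decide
    have c1 : Nat.choose 8 1 = 8 := by decide
    have c2 : Nat.choose 8 2 = 28 := by decide
    have c3 : Nat.choose 8 3 = 56 := by decide
    have c4 : Nat.choose 8 4 = 70 := by decide
    have c5 : Nat.choose 8 5 = 56 := by decide
    have c6 : Nat.choose 8 6 = 28 := by decide
    have c7 : Nat.choose 8 7 = 8 := by decide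
    have h0 := hδ 0 (by norm_num); have h1 := hδ 1 (by norm_num)
    have h2 := hδ 2 (by norm_num); have h3 := hδ 3 (by norm_num)
    have h4 := hδ 4 (by norm_num); have h5 := hδ 5 (by norm_num)
    have h6 := hδ 6 (by norm_num); have h7 := hδ 7 (by norm_num)
    simp only [deltaVector, Finset.sum_range_succ, Finset.sum_range_zero, exampleDelta] at h0 h1 h2 h3 h4 h5 h6 h7
    norm_num [c0, c1, c2, c3, c4, c5, c6, c7] at h0 h1 h2 h3 h4 h5 h6 h7
    have e0 : ehrhart P 0 = 1 := by omega
    have e1 : ehrhart P 1 = 8 := by omega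
    have e2 : ehrhart P 2 = 37 := by omega
    have e3 : ehrhart P 3 = 128 := by omega
    have e4 : ehrhart P 4 = 367 := by omega
    have e5 : ehrhart P 5 = 921 := by omega
    have e6 : ehrhart P 6 = 2090 := by omega
    have e7 : ehrhart P 7 = 4380 := by omega
    clear h0 h1 h2 h3 h4 h5 h6 h7
    have hrank' : Module.finrank ℝ (vectorSpan ℝ (V : Set (Fin N → ℝ))) = 7 := by
      have hv2 : vectorSpan ℝ P = vectorSpan ℝ (V : Set (Fin N → ℝ)) := by
        calc vectorSpan ℝ P = (affineSpan ℝ P).direction := (direction_affineSpan ℝ P).symm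
          _ = (affineSpan ℝ (V : Set (Fin N → ℝ))).direction := by
              rw [hPdef, affineSpan_convexHull]
          _ = vectorSpan ℝ (V : Set (Fin N → ℝ)) := direction_affineSpan ℝ _
      rw [← hv2]
      exact hrank
    have hS1fin : {x : Fin N → ℝ | x ∈ (fun p => ((1:ℕ) : ℝ) • p) '' P ∧ IsLatticePt x}.Finite := by
      by_contra hinf
      have hzero : ehrhart P 1 = 0 := Set.Infinite.ncard hinf
      omega
    have hge : 8 ≤ V.card := by
      by_contra hlt
      push_neg at hlt
      have hpos : 1 ≤ V.card := Finset.card_pos.2 hVne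
      have hle := finrank_vectorSpan_image_finset_le ℝ (id : (Fin N → ℝ) → (Fin N → ℝ)) V
        (n := V.card - 1) (by omega)
      rw [Finset.image_id] at hle
      rw [hrank'] at hle
      omega
    have hsub : (V : Set (Fin N → ℝ)) ⊆
        {x : Fin N → ℝ | x ∈ (fun p => ((1:ℕ) : ℝ) • p) '' P ∧ IsLatticePt x} := by
      intro u hu
      refine ⟨⟨u, ?_, by norm_num⟩, hVlat u hu⟩
      rw [hPdef]
      exact subset_convexHull ℝ _ hu
    have hle8 : V.card ≤ 8 := by
      have := Set.ncard_le_ncard hsub hS1fin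
      rw [Set.ncard_coe_finset] at this
      have : Set.ncard {x : Fin N → ℝ | x ∈ (fun p => ((1:ℕ) : ℝ) • p) '' P ∧ IsLatticePt x}
          = ehrhart P 1 := rfl
      omega
    have hcard : V.card = 8 := le_antisymm hle8 hge
    -- enumerate V
    let e : ↥V ≃ Fin 8 := V.equivFinOfCardEq hcard
    set v : Fin 8 → Fin N → ℝ := fun i => ((e.symm i : ↥V) : Fin N → ℝ) with hv
    have hres : Set.range v = (V : Set (Fin N → ℝ)) := by
      ext u
      constructor
      · rintro ⟨i, rfl⟩
        exact (e.symm i).2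
      · intro hu
        exact ⟨e ⟨u, hu⟩, by simp [hv]⟩
    have hvlat : ∀ i, IsLatticePt (v i) := fun i => hVlat _ (e.symm i).2
    have hai : AffineIndependent ℝ v := by
      rw [affineIndependent_iff_finrank_vectorSpan_eq ℝ v (by simp : Fintype.card (Fin 8) = 7 + 1)]
      rw [hres]
      exact hrank'
    have hSS : ∀ n : ℕ, ehrhart P n = (SS v n).ncard := by
      intro n
      unfold ehrhart SS
      rw [hres, hPdef]
    have hSfin : ∀ n, 1 ≤ n → n ≤ 7 → (SS v n).Finite := by
      intro n hn1 hn7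
      by_contra hinf
      have hzero : (SS v n).ncard = 0 := Set.Infinite.ncard hinf
      interval_cases n <;> (rw [← hSS] at hzero; omega)
    have hB : ∀ k, (BoxK v k).Finite := box_finite hai hSfin
    have g0 : Nat.choose 7 7 = 1 := by decide
    have g1 : Nat.choose 8 7 = 8 := by decide
    have g2 : Nat.choose 9 7 = 36 := by decide
    have g3 : Nat.choose 10 7 = 120 := by decide
    have g4 : Nat.choose 11 7 = 330 := by decide
    have g5 : Nat.choose 12 7 = 792 := by decide
    have g6 : Nat.choose 13 7 = 1716 := by decide
    have g7 : Nat.choose 14 7 = 3432 := by decide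
    have C1 := count hvlat hai 1 (by norm_num) (hSfin 1 (by norm_num) (by norm_num)) hB
    have C2 := count hvlat hai 2 (by norm_num) (hSfin 2 (by norm_num) (by norm_num)) hB
    have C3 := count hvlat hai 3 (by norm_num) (hSfin 3 (by norm_num) (by norm_num)) hB
    have C4 := count hvlat hai 4 (by norm_num) (hSfin 4 (by norm_num) (by norm_num)) hB
    have C5 := count hvlat hai 5 (by norm_num) (hSfin 5 (by norm_num) (by norm_num)) hB
    have C6 := count hvlat hai 6 (by norm_num) (hSfin 6 (by norm_num) (by norm_num)) hB
    have C7 := count hvlat hai 7 (by norm_num) (hSfin 7 (by norm_num) (by norm_num)) hB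
    rw [← hSS 1, e1] at C1
    rw [← hSS 2, e2] at C2
    rw [← hSS 3, e3] at C3
    rw [← hSS 4, e4] at C4
    rw [← hSS 5, e5] at C5
    rw [← hSS 6, e6] at C6
    rw [← hSS 7, e7] at C7
    norm_num [Finset.sum_range_succ, g0, g1, g2, g3, g4, g5, g6, g7] at C1 C2 C3 C4 C5 C6 C7
    have hb0 : (BoxK v 0).ncard = 1 := by rw [box0]; exact Set.ncard_singleton _
    have hb1 : (BoxK v 1).ncard = 0 := by omega
    have hb2 : (BoxK v 2).ncard = 1 := by omega
    have hb3 : (BoxK v 3).ncard = 0 := by omega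
    have hb4 : (BoxK v 4).ncard = 1 := by omega
    have hb5 : (BoxK v 5).ncard = 1 := by omega
    have hb6 : (BoxK v 6).ncard = 0 := by omega
    have hb7 : (BoxK v 7).ncard = 0 := by omega
    obtain ⟨x, hX⟩ := Set.ncard_eq_one.mp hb2
    obtain ⟨y, hY⟩ := Set.ncard_eq_one.mp hb4
    obtain ⟨z, hZ⟩ := Set.ncard_eq_one.mp hb5
    have hE1 : BoxK v 1 = ∅ := (Set.ncard_eq_zero (hB 1)).mp hb1
    have hE3 : BoxK v 3 = ∅ := (Set.ncard_eq_zero (hB 3)).mp hb3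
    have hE6 : BoxK v 6 = ∅ := (Set.ncard_eq_zero (hB 6)).mp hb6
    have hE7 : BoxK v 7 = ∅ := (Set.ncard_eq_zero (hB 7)).mp hb7
    have classify : ∀ (k : ℕ) (r : Fin 8 → ℝ), r ∈ BoxK v k →
        (r = 0 ∧ k = 0) ∨ (r = x ∧ k = 2) ∨ (r = y ∧ k = 4) ∨ (r = z ∧ k = 5) := by
      intro k r h
      have h8 := boxk_lt8 h
      interval_cases k
      · rw [box0] at h; exact Or.inl ⟨h, rfl⟩
      · rw [hE1] at h; cases h
      · rw [hX] at h; exact Or.inr (Or.inl ⟨h, rfl⟩)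
      · rw [hE3] at h; cases h
      · rw [hY] at h; exact Or.inr (Or.inr (Or.inl ⟨h, rfl⟩))
      · rw [hZ] at h; exact Or.inr (Or.inr (Or.inr ⟨h, rfl⟩))
      · rw [hE6] at h; cases h
      · rw [hE7] at h; cases h
    have hxmem : x ∈ BoxK v 2 := by rw [hX]; exact rfl
    have hymem : y ∈ BoxK v 4 := by rw [hY]; exact rfl
    have hzmem : z ∈ BoxK v 5 := by rw [hZ]; exact rfl
    have huniv8 : (Finset.univ : Finset (Fin 8)).card = 8 := by simp
    -- step 1 : the negative of z is x, and z has exactly 7 nonzero coordinates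
    obtain ⟨k', hneg, heq⟩ := box_neg hvlat hzmem
    have hfle : ((Finset.univ.filter (fun i => z i ≠ 0)).card : ℝ) ≤ 8 := by
      have := le_trans (Finset.card_filter_le Finset.univ (fun i => z i ≠ 0)) (le_of_eq huniv8)
      exact_mod_cast this
    have heq' : (5 : ℝ) + (k' : ℝ) = ((Finset.univ.filter (fun i => z i ≠ 0)).card : ℝ) := by
      exact_mod_cast heq
    have hk'3 : k' ≤ 3 := by
      have : (5 : ℝ) + (k' : ℝ) ≤ 8 := by rw [heq']; exact hfle
      have : (k' : ℝ) ≤ 3 := by linarith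
      exact_mod_cast this
    have hxz : (fun i => Int.fract (-(z i))) = x ∧ k' = 2 := by
      rcases classify k' _ hneg with ⟨h1, h2⟩ | ⟨h1, h2⟩ | ⟨h1, h2⟩ | ⟨h1, h2⟩
      · exfalso
        have hz00 : ∀ i, z i = 0 := by
          intro i
          have := congrFun h1 i
          exact (fract_neg_eq_zero_iff (hzmem.1 i).1 (hzmem.1 i).2).1 this
        have : ∑ i, z i = 0 := Finset.sum_eq_zero fun i _ => hz00 i
        rw [hzmem.2.2] at this
        norm_num at this
      · exact ⟨h1, h2⟩
      · omega
      · omega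
    have hcard7 : (Finset.univ.filter (fun i => z i ≠ 0)).card = 7 := by
      have h5 : (5 : ℝ) + ((2:ℕ) : ℝ) = ((Finset.univ.filter (fun i => z i ≠ 0)).card : ℝ) := by
        rw [← heq', hxz.2]
      have : ((7:ℕ) : ℝ) = ((Finset.univ.filter (fun i => z i ≠ 0)).card : ℝ) := by
        push_cast at h5 ⊢; linarith
      exact_mod_cast this.symm
    have hi0 : ∃ i0, z i0 = 0 := by
      by_contra hno
      push_neg at hno
      have : Finset.univ.filter (fun i => z i ≠ 0) = Finset.univ :=
        Finset.filter_eq_self.2 fun i _ => hno i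
      rw [this, huniv8] at hcard7
      omega
    obtain ⟨i0, hzi0⟩ := hi0
    have hxi0 : x i0 = 0 := by
      rw [← hxz.1]
      simp [hzi0]
    -- step 2 : y is its own negative and all its coordinates are 1/2
    obtain ⟨k'', hnegy, heqy⟩ := box_neg hvlat hymem
    have hfley : ((Finset.univ.filter (fun i => y i ≠ 0)).card : ℝ) ≤ 8 := by
      have := le_trans (Finset.card_filter_le Finset.univ (fun i => y i ≠ 0)) (le_of_eq huniv8)
      exact_mod_cast this
    have heqy' : (4 : ℝ) + (k'' : ℝ) = ((Finset.univ.filter (fun i => y i ≠ 0)).card : ℝ) := by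
      exact_mod_cast heqy
    have hk''4 : k'' ≤ 4 := by
      have : (4 : ℝ) + (k'' : ℝ) ≤ 8 := by rw [heqy']; exact hfley
      have : (k'' : ℝ) ≤ 4 := by linarith
      exact_mod_cast this
    have hinvz : ∀ i, Int.fract (-(x i)) = z i := by
      intro i
      rw [← hxz.1]
      exact fract_neg_invol (hzmem.1 i).1 (hzmem.1 i).2
    have hyy : (fun i => Int.fract (-(y i))) = y := by
      rcases classify k'' _ hnegy with ⟨h1, h2⟩ | ⟨h1, h2⟩ | ⟨h1, h2⟩ | ⟨h1, h2⟩
      · exfalso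
        have hy00 : ∀ i, y i = 0 := by
          intro i
          have := congrFun h1 i
          exact (fract_neg_eq_zero_iff (hymem.1 i).1 (hymem.1 i).2).1 this
        have : ∑ i, y i = 0 := Finset.sum_eq_zero fun i _ => hy00 i
        rw [hymem.2.2] at this
        norm_num at this
      · exfalso
        have hyz : y = z := by
          funext i
          have h1i := congrFun h1 i
          have : Int.fract (-(Int.fract (-(y i)))) = Int.fract (-(x i)) := by rw [h1i]
          rw [fract_neg_invol (hymem.1 i).1 (hymem.1 i).2, hinvz i] at this
          exact this
        have h4 := hymem.2.2
        rw [hyz, hzmem.2.2] at h4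
        norm_num at h4
      · exact h1
      · omega
    have hyhalf : ∀ i, y i = 1/2 := by
      have hcases : ∀ i, y i = 0 ∨ y i = 1/2 := by
        intro i
        rcases eq_or_lt_of_le (hymem.1 i).1 with h | h
        · exact Or.inl h.symm
        · right
          have := congrFun hyy i
          rw [fract_neg_of_pos h (hymem.1 i).2] at this
          linarith
      by_contra hne
      push_neg at hne
      obtain ⟨i1, hi1⟩ := hne
      have hlt : ∑ i, y i < ∑ _i : Fin 8, (1/2 : ℝ) := by
        apply Finset.sum_lt_sum (fun i _ => by rcases hcases i with h | h <;> rw [h] <;> norm_num)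
        refine ⟨i1, Finset.mem_univ i1, ?_⟩
        rcases hcases i1 with h | h
        · rw [h]; norm_num
        · exact absurd h hi1
      rw [hymem.2.2] at hlt
      norm_num at hlt
    -- step 3 : x ⊕ y gives the contradiction
    obtain ⟨k3, hw⟩ := box_add hvlat hxmem hymem
    have hwi0 : Int.fract (x i0 + y i0) = 1/2 := by
      rw [hxi0, hyhalf i0, zero_add]
      exact fract_half
    rcases classify k3 _ hw with ⟨h1, _⟩ | ⟨h1, _⟩ | ⟨h1, _⟩ | ⟨h1, _⟩
    · have := congrFun h1 i0
      rw [hwi0] at this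
      norm_num at this
    · have := congrFun h1 i0
      rw [hwi0, hxi0] at this
      norm_num at this
    · -- x ⊕ y = y : forces x = 0
      have hxi1 : ∃ i1, x i1 ≠ 0 := by
        by_contra hno
        push_neg at hno
        have : ∑ i, x i = 0 := Finset.sum_eq_zero fun i _ => hno i
        rw [hxmem.2.2] at this
        norm_num at this
      obtain ⟨i1, hxi1⟩ := hxi1
      have h1i := congrFun h1 i1
      rw [hyhalf i1] at h1i
      have hx0le : 0 ≤ x i1 := (hxmem.1 i1).1
      have hx1lt : x i1 < 1 := (hxmem.1 i1).2
      rcases lt_or_ge (x i1) (1/2) with hlt | hge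
      · rw [Int.fract_eq_self.2 ⟨by linarith, by linarith⟩] at h1i
        exact hxi1 (by linarith)
      · have hrw : x i1 + 1/2 = (x i1 - 1/2) + ((1 : ℤ) : ℝ) := by push_cast; ring
        rw [hrw, Int.fract_add_intCast, Int.fract_eq_self.2 ⟨by linarith, by linarith⟩] at h1i
        linarith
    · have := congrFun h1 i0
      rw [hwi0, hzi0] at this
      norm_num at this
end

section
/- Let d ≥ 3 and let (δ_0, δ_1, …, δ_d) be a sequence with every δ_i ∈ {0, 1}, δ_0 = 1, δ_1 ≥ δ_d, and Σ_{i=0}^d δ_i = 3. Then (δ_0, …, δ_d) satisfies all of Stanley's inequalities δ_0 + ⋯ + δ_i ≤ δ_s + ⋯ + δ_{s−i} for 0 ≤ i ≤ ⌊s/2⌋ (s = max{ i : δ_i ≠ 0 }) and all of the inequalities δ_{d−1} + ⋯ + δ_{d−i} ≤ δ_2 + ⋯ + δ_{i+1} for 1 ≤ i ≤ ⌊(d−1)/2⌋, if and only if either (δ_0, …, δ_d) = (1, 1, 1, 0, …, 0), or there exist integers m, n with 1 < m < n < d, δ_m = δ_n = 1, δ_j = 0 for j ∉ {0, m, n}, and,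 setting p = m − 1, q = n − m − 1, r = d − n, one has 0 ≤ q ≤ p ≤ r. -/
open Finset

private lemma sum_one_ind {T : Finset ℕ} {f : ℕ → ℕ} (a : ℕ)
    (hf : ∀ j ∈ T, f j = if j = a then 1 else 0) :
    ∑ j ∈ T, f j = if a ∈ T then 1 else 0 := by
  rw [Finset.sum_congr rfl hf, Finset.sum_ite_eq' T a (fun _ => 1)]

private lemma sum_two_ind {T : Finset ℕ} {f : ℕ → ℕ} (a b : ℕ)
    (hf : ∀ j ∈ T, f j = (if j = a then 1 else 0) + (if j = b then 1 else 0)) :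
    ∑ j ∈ T, f j = (if a ∈ T then 1 else 0) + (if b ∈ T then 1 else 0) := by
  rw [Finset.sum_congr rfl hf, Finset.sum_add_distrib,
    Finset.sum_ite_eq' T a (fun _ => 1), Finset.sum_ite_eq' T b (fun _ => 1)]

/-- Let `d ≥ 3` and let `(δ_0, …, δ_d)` be a `0/1` sequence with `δ_0 = 1`,
`δ_1 ≥ δ_d` and `Σ δ_i = 3`. The sequence satisfies Stanley's inequalities and the
inequalities (1.3) iff it equals `(1,1,1,0,…,0)`, or there are `1 < m < n < d` with
`δ_m = δ_n = 1`, all other entries `0`, and, with `p = m−1`, `q = n−m−1`, `r = d−n`,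
one has `0 ≤ q ≤ p ≤ r`. -/
theorem zero_one_delta_sum_three_ineq_iff
    (d : ℕ) (hd : 3 ≤ d) (δ : ℕ → ℕ)
    (h01 : ∀ i ≤ d, δ i ≤ 1)
    (h0 : δ 0 = 1) (h1 : δ d ≤ δ 1)
    (hsum : ∑ i ∈ Finset.range (d + 1), δ i = 3) :
    (StanleyIneq d δ ∧ HibiIneq d δ) ↔
      ((δ 1 = 1 ∧ δ 2 = 1 ∧ ∀ j ≤ d, j ≠ 0 → j ≠ 1 → j ≠ 2 → δ j = 0) ∨
        ∃ m n : ℕ, 1 < m ∧ m < n ∧ n < d ∧ δ m = 1 ∧ δ n = 1 ∧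
          (∀ j ≤ d, j ≠ 0 → j ≠ m → j ≠ n → δ j = 0) ∧
          n - m - 1 ≤ m - 1 ∧ m - 1 ≤ d - n) := by
  classical
  -- extract the two nonzero positions besides 0
  obtain ⟨m, n, hm0, hmn, hnd, hδm, hδn, hz⟩ :
      ∃ m n, 0 < m ∧ m < n ∧ n ≤ d ∧ δ m = 1 ∧ δ n = 1 ∧
        ∀ j ≤ d, j ≠ 0 → j ≠ m → j ≠ n → δ j = 0 := by
    set S := (Finset.range (d+1)).filter (fun i => δ i = 1) with hSdef
    have hmemS : ∀ j, j ∈ S ↔ (j ≤ d ∧ δ j = 1) := by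
      intro j
      simp [hSdef, Finset.mem_filter, Finset.mem_range, Nat.lt_succ_iff]
    have hcard : S.card = 3 := by
      have h1' : ∑ i ∈ S, δ i = S.card := by
        rw [Finset.card_eq_sum_ones]
        refine Finset.sum_congr rfl (fun i hi => ?_)
        exact ((hmemS i).mp hi).2
      have h2' : ∑ i ∈ (Finset.range (d+1)).filter (fun i => ¬ δ i = 1), δ i = 0 := by
        refine Finset.sum_eq_zero (fun i hi => ?_)
        simp only [Finset.mem_filter, Finset.mem_range] at hi
        have := h01 i (by omega)
        omega
      have h3' := Finset.sum_filter_add_sum_filter_not (Finset.range (d+1))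
        (fun i => δ i = 1) δ
      rw [← hSdef] at h3'
      omega
    obtain ⟨a, b, c, hab, hac, hbc, habc⟩ := Finset.card_eq_three.mp hcard
    have hmem : ∀ j, (j ≤ d ∧ δ j = 1) ↔ (j = a ∨ j = b ∨ j = c) := by
      intro j
      rw [← hmemS, habc]
      simp
    have h0' := (hmem 0).mp ⟨by omega, h0⟩
    have key : ∀ x y : ℕ, 0 < x → x < y →
        (∀ j, (j ≤ d ∧ δ j = 1) ↔ (j = 0 ∨ j = x ∨ j = y)) →
        ∃ m n, 0 < m ∧ m < n ∧ n ≤ d ∧ δ m = 1 ∧ δ n = 1 ∧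
          ∀ j ≤ d, j ≠ 0 → j ≠ m → j ≠ n → δ j = 0 := by
      intro x y hx hxy hmem'
      refine ⟨x, y, hx, hxy, ((hmem' y).mpr (by tauto)).1,
        ((hmem' x).mpr (by tauto)).2, ((hmem' y).mpr (by tauto)).2,
        fun j hj hj0 hjx hjy => ?_⟩
      have hb := h01 j hj
      by_contra hne
      have := (hmem' j).mp ⟨hj, by omega⟩
      tauto
    have main : ∀ x y : ℕ, x ≠ y → x ≠ 0 → y ≠ 0 →
        (∀ j, (j ≤ d ∧ δ j = 1) ↔ (j = 0 ∨ j = x ∨ j = y)) →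
        ∃ m n, 0 < m ∧ m < n ∧ n ≤ d ∧ δ m = 1 ∧ δ n = 1 ∧
          ∀ j ≤ d, j ≠ 0 → j ≠ m → j ≠ n → δ j = 0 := by
      intro x y hxy hx hy hmem'
      rcases lt_trichotomy x y with h | h | h
      · exact key x y (by omega) h hmem'
      · omega
      · exact key y x (by omega) h (fun j => by have := hmem' j; omega)
    rcases h0' with h | h | h
    · exact main b c hbc (by omega) (by omega) (fun j => by have := hmem j; omega)
    · exact main a c hac (by omega) (by omega) (fun j => by have := hmem j; omega)
    · exact main a b hab (by omega) (by omega) (fun j => by have := hmem j; omega)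
  have hs : Nat.findGreatest (fun k => δ k ≠ 0) d = n := by
    rw [Nat.findGreatest_eq_iff]
    refine ⟨hnd, fun _ => by simp [hδn], ?_⟩
    intro k hk hk'
    simp only [ne_eq, not_not]
    exact hz k hk' (by omega) (by omega) (by omega)
  have hSiff : StanleyIneq d δ ↔ ∀ i ≤ n / 2,
      ∑ j ∈ Finset.range (i + 1), δ j ≤ ∑ j ∈ Finset.range (i + 1), δ (n - j) := by
    unfold StanleyIneq
    rw [hs]
  by_cases hcase1 : m = 1 ∧ n = 2
  · obtain ⟨rfl, rfl⟩ := hcase1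
    refine iff_of_true ⟨?_, ?_⟩ (Or.inl ⟨hδm, hδn, hz⟩)
    · rw [hSiff]
      intro i hi
      have hi' : i = 0 ∨ i = 1 := by omega
      rcases hi' with rfl | rfl
      · norm_num [Finset.sum_range_one, h0, hδn]
      · norm_num [Finset.sum_range_succ, Finset.sum_range_one, h0, hδm, hδn]
    · intro i hi1 hi2
      have hL : ∑ j ∈ Finset.Icc 1 i, δ (d - j) =
          if d - 2 ∈ Finset.Icc 1 i then 1 else 0 := by
        refine sum_one_ind (d - 2) (fun j hj => ?_)
        simp only [Finset.mem_Icc] at hj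
        by_cases h : j = d - 2
        · rw [if_pos h, show d - j = 2 from by omega]
          exact hδn
        · rw [if_neg h]
          exact hz (d - j) (by omega) (by omega) (by omega) (by omega)
      rw [hL]
      have h2mem : (2:ℕ) ∈ Finset.Icc 2 (i+1) := by
        simp only [Finset.mem_Icc]; omega
      have hge := Finset.single_le_sum (f := δ) (fun i _ => Nat.zero_le _) h2mem
      rw [hδn] at hge
      split_ifs <;> omega
  · by_cases hcase2 : n = d
    · have hδd : δ d = 1 := by rw [← hcase2]; exact hδn
      have hδ1 : δ 1 = 1 := by have := h01 1 (by omega); omega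
      have hm1 : m = 1 := by
        by_contra hne
        have := hz 1 (by omega) (by omega) (by omega) (by omega)
        omega
      apply iff_of_false
      · rintro ⟨hS, -⟩
        have hst := (hSiff.mp hS) 1 (by omega)
        simp only [Finset.sum_range_succ, Finset.sum_range_one, Finset.sum_range_zero, Nat.sub_zero] at hst
        have hn1 : δ (n - 1) = 0 := hz (n - 1) (by omega) (by omega) (by omega) (by omega)
        omega
      · rintro (⟨h1', h2', hz'⟩ | ⟨m', n', h1', h2', h3', hm', hn', hz', -⟩)
        · have := hz' d (le_refl d) (by omega) (by omega) (by omega)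
          omega
        · have := hz m' (by omega) (by omega) (by omega) (by omega)
          omega
    · have hnd' : n < d := by omega
      by_cases hcase3 : m = 1
      · have hn3 : 3 ≤ n := by
          have : ¬ n = 2 := fun h => hcase1 ⟨hcase3, h⟩
          omega
        apply iff_of_false
        · rintro ⟨hS, -⟩
          have hst := (hSiff.mp hS) 1 (by omega)
          simp only [Finset.sum_range_succ, Finset.sum_range_one, Finset.sum_range_zero, Nat.sub_zero] at hst
          have hδ1 : δ 1 = 1 := by have h := hδm; rw [hcase3] at h; exact h
          have hn1 : δ (n - 1) = 0 := hz (n - 1) (by omega) (by omega) (by omega) (by omega)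
          omega
        · rintro (⟨h1', h2', hz'⟩ | ⟨m', n', h1', h2', h3', hm', hn', hz', -⟩)
          · have := hz 2 (by omega) (by omega) (by omega) (by omega)
            omega
          · by_cases hm'n : m' = n
            · have := hz n' (by omega) (by omega) (by omega) (by omega)
              omega
            · have := hz m' (by omega) (by omega) (by omega) (by omega)
              omega
      · have hm2 : 2 ≤ m := by omega
        -- auxiliary sum computations for the main case
        have hA : ∀ i : ℕ, i ≤ n / 2 → ∑ j ∈ Finset.range (i+1), δ j =
            (if 0 ∈ Finset.range (i+1) then 1 else 0) +
            (if m ∈ Finset.range (i+1) then 1 else 0) := by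
          intro i hi
          refine sum_two_ind 0 m (fun j hj => ?_)
          simp only [Finset.mem_range] at hj
          by_cases e1 : j = 0
          · rw [if_pos e1, if_neg (by omega : ¬ j = m), e1, h0]
          · by_cases e2 : j = m
            · rw [if_neg e1, if_pos e2, e2, hδm]
            · rw [if_neg e1, if_neg e2]
              exact hz j (by omega) e1 e2 (by omega)
        have hB : ∀ i : ℕ, i ≤ n / 2 → ∑ j ∈ Finset.range (i+1), δ (n - j) =
            (if 0 ∈ Finset.range (i+1) then 1 else 0) +
            (if n - m ∈ Finset.range (i+1) then 1 else 0) := by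
          intro i hi
          refine sum_two_ind 0 (n - m) (fun j hj => ?_)
          simp only [Finset.mem_range] at hj
          by_cases e1 : j = 0
          · rw [if_pos e1, if_neg (by omega : ¬ j = n - m), e1, Nat.sub_zero, hδn]
          · by_cases e2 : j = n - m
            · rw [if_neg e1, if_pos e2, show n - j = m from by omega, hδm]
            · rw [if_neg e1, if_neg e2]
              exact hz (n - j) (by omega) (by omega) (by omega) (by omega)
        constructor
        · rintro ⟨hS, hH⟩
          right
          refine ⟨m, n, by omega, hmn, hnd', hδm, hδn, hz, ?_, ?_⟩
          · -- q ≤ p via Stanley at i = m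
            by_contra hq
            have hmhalf : m ≤ n / 2 := by omega
            have hst := (hSiff.mp hS) m hmhalf
            rw [hA m hmhalf, hB m hmhalf] at hst
            simp only [Finset.mem_range] at hst
            split_ifs at hst <;> omega
          · -- p ≤ r via Hibi at i = d - n
            by_contra hp
            have hhi := hH (d - n) (by omega) (by omega)
            have hmem : d - n ∈ Finset.Icc 1 (d - n) := by
              simp only [Finset.mem_Icc]; omega
            have hge := Finset.single_le_sum (f := fun j => δ (d - j))
              (fun i _ => Nat.zero_le _) hmem
            simp only [show d - (d - n) = n from by omega, hδn] at hge
            have hR : ∑ j ∈ Finset.Icc 2 (d - n + 1), δ j = 0 := by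
              refine Finset.sum_eq_zero (fun j hj => ?_)
              simp only [Finset.mem_Icc] at hj
              exact hz j (by omega) (by omega) (by omega) (by omega)
            omega
        · rintro (⟨h1', -, -⟩ | ⟨m', n', h1', h2', h3', hm', hn', hz', hq, hp⟩)
          · have := hz 1 (by omega) (by omega) (by omega) (by omega)
            omega
          · have e1 : m' = m ∨ m' = n := by
              by_contra h
              push_neg at h
              have := hz m' (by omega) (by omega) h.1 h.2
              omega
            have e2 : n' = m ∨ n' = n := by
              by_contra h
              push_neg at h
              have := hz n' (by omega) (by omega) h.1 h.2
              omega
            have em : m' = m := by omega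
            have en : n' = n := by omega
            rw [em, en] at hq hp
            constructor
            · rw [hSiff]
              intro i hi
              rw [hA i hi, hB i hi]
              simp only [Finset.mem_range]
              split_ifs <;> omega
            · intro i hi1 hi2
              have hL : ∑ j ∈ Finset.Icc 1 i, δ (d - j) =
                  (if d - n ∈ Finset.Icc 1 i then 1 else 0) +
                  (if d - m ∈ Finset.Icc 1 i then 1 else 0) := by
                refine sum_two_ind (d - n) (d - m) (fun j hj => ?_)
                simp only [Finset.mem_Icc] at hj
                by_cases f1 : j = d - n
                · rw [if_pos f1, if_neg (by omega : ¬ j = d - m),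
                    show d - j = n from by omega, hδn]
                · by_cases f2 : j = d - m
                  · rw [if_neg f1, if_pos f2, show d - j = m from by omega, hδm]
                  · rw [if_neg f1, if_neg f2]
                    exact hz (d - j) (by omega) (by omega) (by omega) (by omega)
              have hR : ∑ j ∈ Finset.Icc 2 (i+1), δ j =
                  (if m ∈ Finset.Icc 2 (i+1) then 1 else 0) +
                  (if n ∈ Finset.Icc 2 (i+1) then 1 else 0) := by
                refine sum_two_ind m n (fun j hj => ?_)
                simp only [Finset.mem_Icc] at hj
                by_cases f1 : j = m
                · rw [if_pos f1, if_neg (by omega : ¬ j = n), f1, hδm]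
                · by_cases f2 : j = n
                  · rw [if_neg f1, if_pos f2, f2, hδn]
                  · rw [if_neg f1, if_neg f2]
                    exact hz j (by omega) (by omega) f1 f2
              rw [hL, hR]
              simp only [Finset.mem_Icc]
              split_ifs <;> omega
end

section
/- Let k ≥ 0 be an integer and d = 3k + 2. There exists an integral convex polytope P ⊂ ℝ^d of dimension d whose δ-vector (δ_0, …, δ_d) satisfies δ_0 = δ_{k+1} = δ_{2k+2} = 1 and δ_j = 0 for all j ∉ {0, k+1, 2k+2}. -/
open Finset MeasureTheory

set_option maxRecDepth 8000

section EquiAux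

open PowerSeries in
private lemma equi_coeff_one_sub_pow (N j : ℕ) :
    (PowerSeries.coeff (R := ℤ) j) ((1 - PowerSeries.X) ^ N) = (-1) ^ j * N.choose j := by
  have h : (1 - PowerSeries.X : ℤ⟦X⟧) ^ N
      = ∑ i ∈ Finset.range (N + 1), (-PowerSeries.X) ^ i * 1 ^ (N - i) * (N.choose i : ℤ⟦X⟧) := by
    rw [sub_eq_add_neg, add_comm]
    exact add_pow _ _ _
  have hterm : ∀ i, (-PowerSeries.X : ℤ⟦X⟧) ^ i * 1 ^ (N - i) * (N.choose i : ℤ⟦X⟧)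
      = ((-1) ^ i * N.choose i : ℤ) • PowerSeries.X ^ i := by
    intro i
    rw [neg_pow, one_pow, mul_one]
    rw [zsmul_eq_mul]
    push_cast
    ring
  rw [h, map_sum]
  rw [Finset.sum_eq_single j]
  · rw [hterm, map_zsmul, PowerSeries.coeff_X_pow, if_pos rfl]
    simp
  · intro i _ hij
    rw [hterm, map_zsmul, PowerSeries.coeff_X_pow, if_neg (Ne.symm hij)]
    simp
  · intro hj
    rw [Finset.mem_range, not_lt] at hj
    have : N.choose j = 0 := Nat.choose_eq_zero_of_lt (by omega)
    simp [this]

open PowerSeries in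
private lemma equi_keyK (D m : ℕ) :
    (∑ j ∈ Finset.range (m + 1),
        (-1 : ℤ) ^ j * ((D + 1).choose j : ℤ) * ((m - j + D).choose D : ℤ))
      = if m = 0 then 1 else 0 := by
  have h1 : ((1 - PowerSeries.X : ℤ⟦X⟧) ^ (D + 1)) * (invOneSubPow ℤ (D + 1)).val = 1 := by
    rw [← invOneSubPow_inv_eq_one_sub_pow]
    exact (invOneSubPow ℤ (D + 1)).inv_val
  have h2 := congrArg (PowerSeries.coeff (R := ℤ) m) h1
  rw [PowerSeries.coeff_mul, PowerSeries.coeff_one] at h2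
  rw [Finset.Nat.sum_antidiagonal_eq_sum_range_succ_mk] at h2
  rw [← h2]
  apply Finset.sum_congr rfl
  intro j hj
  rw [equi_coeff_one_sub_pow, invOneSubPow_val_succ_eq_mk_add_choose, PowerSeries.coeff_mk]
  rw [Nat.add_comm D (m - j)]

private lemma equi_keyK' (D c i : ℕ) :
    (∑ j ∈ Finset.range (i + 1), (-1 : ℤ) ^ j * ((D + 1).choose j : ℤ) *
        (if c ≤ i - j then ((i - j - c + D).choose D : ℤ) else 0))
      = if i = c then 1 else 0 := by
  rcases le_or_gt c i with h | h
  · have hsub : Finset.range (i - c + 1) ⊆ Finset.range (i + 1) := by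
      apply Finset.range_subset_range.2; omega
    rw [← Finset.sum_subset hsub (by
      intro j hj hj'
      rw [Finset.mem_range] at hj hj'
      have : ¬ c ≤ i - j := by omega
      rw [if_neg this, mul_zero])]
    have hK := equi_keyK D (i - c)
    rw [show (if i - c = 0 then (1:ℤ) else 0) = if i = c then 1 else 0 from by
      by_cases hic : i = c
      · simp [hic]
      · rw [if_neg hic, if_neg (by omega)]] at hK
    rw [← hK]
    apply Finset.sum_congr rfl
    intro j hj
    rw [Finset.mem_range] at hj
    have h1 : c ≤ i - j := by omega
    rw [if_pos h1, show i - j - c = i - c - j from by omega]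
  · rw [if_neg (by omega)]
    apply Finset.sum_eq_zero
    intro j hj
    rw [Finset.mem_range] at hj
    have : ¬ c ≤ i - j := by omega
    rw [if_neg this, mul_zero]

private lemma equi_list_range_map_sum (n : ℕ) (f : ℕ → ℕ) :
    ((List.range n).map f).sum = ∑ i ∈ Finset.range n, f i := by
  rw [Finset.sum, Finset.range_val,
    show Multiset.range n = ↑(List.range n) from rfl, Multiset.map_coe, Multiset.sum_coe]

private lemma equi_length_adt :
    ∀ (r n : ℕ), (List.Nat.antidiagonalTuple (r + 1) n).length = (n + r).choose r
  | 0, n => by rw [List.Nat.antidiagonalTuple_one]; simp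
  | (r + 1), n => by
    rw [show List.Nat.antidiagonalTuple (r + 2) n
        = (List.Nat.antidiagonal n).flatMap
            (fun ni => (List.Nat.antidiagonalTuple (r + 1) ni.2).map
              fun x => (Fin.cons ni.1 x : Fin (r + 2) → ℕ))
      from rfl]
    rw [List.length_flatMap]
    rw [show List.Nat.antidiagonal n = (List.range (n + 1)).map fun i => (i, n - i) from rfl]
    rw [List.map_map]
    have h1 : List.map
        ((List.length ∘ fun ni : ℕ × ℕ => List.map
          (fun x => (Fin.cons ni.1 x : Fin (r + 2) → ℕ)) (List.Nat.antidiagonalTuple (r + 1) ni.2))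
          ∘ fun i => (i, n - i)) (List.range (n + 1))
        = List.map (fun i => ((n - i) + r).choose r) (List.range (n + 1)) := by
      apply List.map_congr_left
      intro i _
      simp only [Function.comp, List.length_map]
      exact equi_length_adt r (n - i)
    erw [h1]; rw [equi_list_range_map_sum]
    have h2 : ∑ i ∈ Finset.range (n + 1), (n - i + r).choose r
        = ∑ i ∈ Finset.range (n + 1), (i + r).choose r := by
      rw [← Finset.sum_range_reflect (fun i => (i + r).choose r) (n + 1)]
      apply Finset.sum_congr rfl
      intro j hj
      rw [Finset.mem_range] at hj
      rw [show n + 1 - 1 - j = n - j from by omega]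
    rw [h2, Nat.sum_range_add_choose n r,
      show n + (r + 1) = n + r + 1 from by omega]

private lemma equi_card_adt (r m : ℕ) :
    (Finset.Nat.antidiagonalTuple (r + 1) m).card = (m + r).choose r := by
  show Multiset.card (Multiset.Nat.antidiagonalTuple (r + 1) m) = _
  rw [show Multiset.Nat.antidiagonalTuple (r + 1) m
      = ↑(List.Nat.antidiagonalTuple (r + 1) m) from rfl]
  rw [Multiset.coe_card, equi_length_adt]

private lemma equi_card_sumEq (r m : ℕ) :
    Nat.card {b : Fin (r + 1) → ℕ // ∑ i, b i = m} = (m + r).choose r := by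
  rw [Nat.card_congr (Equiv.subtypeEquivRight
      (fun b => (Finset.Nat.mem_antidiagonalTuple (n := m) (x := b)).symm))]
  rw [Nat.card_eq_fintype_card, Fintype.card_coe, equi_card_adt]

namespace EquiAux

variable (k : ℕ)


variable (k : ℕ)

def lst : Fin (3 * k + 2) := ⟨3 * k + 1, by omega⟩

def u (j : Fin (3 * k + 2)) : Fin (3 * k + 2) → ℝ :=
  if j = lst k then (fun i => if i = lst k then 3 else 2)
  else (fun i => if i = j then 1 else 0)

noncomputable def V : Finset (Fin (3 * k + 2) → ℝ) := by
  classical exact insert 0 (Finset.image (u k) Finset.univ)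

def P : Set (Fin (3 * k + 2) → ℝ) := convexHull ℝ (V k : Set (Fin (3 * k + 2) → ℝ))

lemma zero_mem_V : (0 : Fin (3 * k + 2) → ℝ) ∈ V k := by
  simp [V]

lemma u_mem_V (j : Fin (3 * k + 2)) : u k j ∈ V k := by
  simp only [V]
  classical
  exact Finset.mem_insert_of_mem (Finset.mem_image_of_mem _ (Finset.mem_univ j))

lemma mem_P_iff (x : Fin (3 * k + 2) → ℝ) :
    x ∈ P k ↔ ∃ μ : Fin (3 * k + 2) → ℝ,
      (∀ j, 0 ≤ μ j) ∧ (∑ j, μ j) ≤ 1 ∧ x = ∑ j, μ j • u k j := by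
  constructor
  · intro hx
    have hmin : P k ⊆ {x : Fin (3 * k + 2) → ℝ | ∃ μ : Fin (3 * k + 2) → ℝ,
        (∀ j, 0 ≤ μ j) ∧ (∑ j, μ j) ≤ 1 ∧ x = ∑ j, μ j • u k j} := by
      apply convexHull_min
      · intro v hv
        simp only [V, Finset.coe_insert, Set.mem_insert_iff, Finset.coe_image,
          Set.mem_image, Finset.mem_coe, Finset.mem_univ] at hv
        rcases hv with rfl | ⟨j, -, rfl⟩
        · exact ⟨0, fun j => le_refl 0, by simp, by simp⟩
        · refine ⟨fun i => if i = j then 1 else 0, fun i => by positivity, by simp, ?_⟩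
          have : ∀ i ∈ Finset.univ, ((fun i => if i = j then (1:ℝ) else 0) i) • u k i
              = if i = j then u k i else 0 := by
            intro i _
            by_cases hij : i = j <;> simp [hij]
          rw [Finset.sum_congr rfl this, Finset.sum_ite_eq' _ j (fun i => u k i)]
          simp
      · -- convexity of the target set
        rintro x ⟨μ, hμ0, hμs, rfl⟩ y ⟨ν, hν0, hνs, rfl⟩ a b ha hb hab
        refine ⟨fun j => a * μ j + b * ν j,
          fun j => add_nonneg (mul_nonneg ha (hμ0 j)) (mul_nonneg hb (hν0 j)), ?_, ?_⟩
        · rw [Finset.sum_add_distrib, ← Finset.mul_sum, ← Finset.mul_sum]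
          nlinarith
        · rw [Finset.smul_sum, Finset.smul_sum, ← Finset.sum_add_distrib]
          apply Finset.sum_congr rfl
          intro j _
          rw [smul_smul, smul_smul, ← add_smul]
    exact hmin hx
  · rintro ⟨μ, hμ0, hμs, rfl⟩
    have h := Finset.centerMass_mem_convexHull (t := (Finset.univ : Finset (Option (Fin (3*k+2)))))
      (w := fun o => Option.elim o (1 - ∑ j, μ j) μ)
      (z := fun o => Option.elim o 0 (u k))
      (by rintro (_ | j) _
          · simpa using sub_nonneg.2 hμs
          · exact hμ0 j)
      (by rw [Fintype.sum_option]; simp)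
      (by rintro (_ | j) _
          · exact zero_mem_V k
          · exact u_mem_V k j)
    rw [Finset.centerMass_eq_of_sum_1] at h
    · rw [Fintype.sum_option] at h
      simpa [P] using h
    · rw [Fintype.sum_option]; simp

lemma zero_mem_P : (0 : Fin (3 * k + 2) → ℝ) ∈ P k :=
  subset_convexHull ℝ _ (zero_mem_V k)

lemma mem_dilate_iff (n : ℕ) (x : Fin (3 * k + 2) → ℝ) :
    x ∈ (fun p => (n : ℝ) • p) '' P k ↔ ∃ ν : Fin (3 * k + 2) → ℝ,
      (∀ j, 0 ≤ ν j) ∧ (∑ j, ν j) ≤ (n : ℝ) ∧ x = ∑ j, ν j • u k j := by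
  constructor
  · rintro ⟨p, hp, rfl⟩
    obtain ⟨μ, hμ0, hμs, rfl⟩ := (mem_P_iff k p).1 hp
    refine ⟨fun j => (n : ℝ) * μ j,
      fun j => mul_nonneg (Nat.cast_nonneg n) (hμ0 j), ?_, ?_⟩
    · rw [← Finset.mul_sum]
      calc (n:ℝ) * ∑ j, μ j ≤ (n:ℝ) * 1 := by
            apply mul_le_mul_of_nonneg_left hμs (by positivity)
        _ = n := mul_one _
    · show (n : ℝ) • (∑ j, μ j • u k j) = _
      rw [Finset.smul_sum]
      apply Finset.sum_congr rfl
      intro j _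
      rw [smul_smul]
  · rintro ⟨ν, hν0, hνs, rfl⟩
    rcases Nat.eq_zero_or_pos n with hn | hn
    · subst hn
      refine ⟨0, zero_mem_P k, ?_⟩
      have hz : ∀ j, ν j = 0 := by
        intro j
        have h1 : ∑ j, ν j = 0 := le_antisymm (by simpa using hνs)
          (Finset.sum_nonneg fun j _ => hν0 j)
        exact (Finset.sum_eq_zero_iff_of_nonneg (fun j _ => hν0 j)).1 h1 j (Finset.mem_univ j)
      simp only [Nat.cast_zero, zero_smul]
      apply (Finset.sum_eq_zero ?_).symm
      intro j _
      rw [hz j, zero_smul]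
    · have hn' : (0:ℝ) < n := by exact_mod_cast hn
      refine ⟨∑ j, (ν j / n) • u k j, ?_, ?_⟩
      · rw [mem_P_iff]
        refine ⟨fun j => ν j / n, fun j => div_nonneg (hν0 j) (le_of_lt hn'), ?_, rfl⟩
        rw [← Finset.sum_div]
        rw [div_le_one hn']
        exact hνs
      · show (n : ℝ) • (∑ j, (ν j / n) • u k j) = _
        rw [Finset.smul_sum]
        apply Finset.sum_congr rfl
        intro j _
        rw [smul_smul]
        congr 1
        field_simp

lemma sum_smul_u_apply (ν : Fin (3 * k + 2) → ℝ) (i : Fin (3 * k + 2)) :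
    (∑ j, ν j • u k j) i = if i = lst k then 3 * ν (lst k) else ν i + 2 * ν (lst k) := by
  rw [Finset.sum_apply]
  rw [← Finset.add_sum_erase _ _ (Finset.mem_univ (lst k))]
  have h1 : (ν (lst k) • u k (lst k)) i = ν (lst k) * (if i = lst k then 3 else 2) := by
    simp [u]
  have h2 : ∑ j ∈ Finset.univ.erase (lst k), (ν j • u k j) i
      = if i ∈ Finset.univ.erase (lst k) then ν i else 0 := by
    have hterm : ∀ j ∈ Finset.univ.erase (lst k),
        (ν j • u k j) i = if j = i then ν i else 0 := by
      intro j hj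
      have hj' : j ≠ lst k := (Finset.mem_erase.1 hj).1
      simp only [Pi.smul_apply, smul_eq_mul, u, if_neg hj']
      by_cases hji : j = i
      · subst hji; simp
      · have hij : ¬ i = j := fun h => hji h.symm
        simp [hij, hji]
    rw [Finset.sum_congr rfl hterm]
    exact Finset.sum_ite_eq' _ i (fun _ => ν i)
  rw [h1, h2]
  by_cases hi : i = lst k
  · simp only [hi, Finset.mem_erase, ne_eq, not_true_eq_false, false_and, if_neg, if_pos rfl]
    simp
    ring
  · rw [if_neg hi, if_neg hi, if_pos (Finset.mem_erase.2 ⟨hi, Finset.mem_univ i⟩)]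
    ring

def cond (n : ℕ) (y : Fin (3 * k + 2) → ℤ) : Prop :=
  0 ≤ y (lst k) ∧ (∀ i, i ≠ lst k → 2 * y (lst k) ≤ 3 * y i) ∧
    3 * (∑ i ∈ Finset.univ.erase (lst k), y i) + y (lst k)
      ≤ 3 * (n : ℤ) + (6 * k + 2) * y (lst k)

lemma card_erase_lst : (Finset.univ.erase (lst k)).card = 3 * k + 1 := by
  rw [Finset.card_erase_of_mem (Finset.mem_univ _), Finset.card_univ, Fintype.card_fin]
  omega

lemma cast_mem_dilate_iff (n : ℕ) (y : Fin (3 * k + 2) → ℤ) :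
    (fun i => (y i : ℝ)) ∈ (fun p => (n : ℝ) • p) '' P k ↔ cond k n y := by
  rw [mem_dilate_iff]
  constructor
  · rintro ⟨ν, hν0, hνs, hx⟩
    have hcoord : ∀ i, (y i : ℝ) = if i = lst k then 3 * ν (lst k) else ν i + 2 * ν (lst k) := by
      intro i
      rw [← sum_smul_u_apply k ν i]
      exact congrFun hx i
    have hlst : (y (lst k) : ℝ) = 3 * ν (lst k) := by simpa using hcoord (lst k)
    have hmid : ∀ i, i ≠ lst k → (y i : ℝ) = ν i + 2 * ν (lst k) := by
      intro i hi
      have := hcoord i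
      rwa [if_neg hi] at this
    have hsplit : ∑ j, ν j = ν (lst k) + ∑ j ∈ Finset.univ.erase (lst k), ν j :=
      (Finset.add_sum_erase _ _ (Finset.mem_univ _)).symm
    refine ⟨?_, ?_, ?_⟩
    · have : (0:ℝ) ≤ (y (lst k) : ℝ) := by rw [hlst]; linarith [hν0 (lst k)]
      exact_mod_cast this
    · intro i hi
      have : (2 * y (lst k) : ℝ) ≤ 3 * y i := by
        rw [hlst, hmid i hi]; linarith [hν0 i]
      exact_mod_cast this
    · have hsum : ((∑ i ∈ Finset.univ.erase (lst k), y i : ℤ) : ℝ)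
          = ∑ i ∈ Finset.univ.erase (lst k), (ν i + 2 * ν (lst k)) := by
        push_cast
        apply Finset.sum_congr rfl
        intro i hi
        exact hmid i (Finset.mem_erase.1 hi).1
      have hsum2 : ∑ i ∈ Finset.univ.erase (lst k), (ν i + 2 * ν (lst k))
          = (∑ i ∈ Finset.univ.erase (lst k), ν i) + (3 * k + 1) * (2 * ν (lst k)) := by
        rw [Finset.sum_add_distrib, Finset.sum_const, card_erase_lst]
        push_cast
        ring
      have : (3 * (∑ i ∈ Finset.univ.erase (lst k), y i) + y (lst k) : ℝ)
          ≤ 3 * (n : ℝ) + (6 * k + 2) * y (lst k) := by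
        rw [hlst, hsum, hsum2]
        have h3 : ν (lst k) + ∑ j ∈ Finset.univ.erase (lst k), ν j ≤ (n:ℝ) := by
          rw [← hsplit]; exact hνs
        ring_nf
        nlinarith [h3]
      exact_mod_cast this
  · rintro ⟨h1, h2, h3⟩
    have h1' : (0:ℝ) ≤ (y (lst k) : ℝ) := by exact_mod_cast h1
    have h2' : ∀ i, i ≠ lst k → (2 * (y (lst k) : ℝ)) ≤ 3 * (y i : ℝ) := by
      intro i hi; exact_mod_cast h2 i hi
    have h3' := (@Int.cast_le ℝ _ _ _).mpr h3
    push_cast at h3'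
    refine ⟨fun i => if i = lst k then (y (lst k) : ℝ) / 3
      else (y i : ℝ) - 2 * (y (lst k) : ℝ) / 3, ?_, ?_, ?_⟩
    · intro i
      dsimp only
      by_cases hi : i = lst k
      · rw [if_pos hi]
        linarith
      · rw [if_neg hi]
        linarith [h2' i hi]
    · rw [← Finset.add_sum_erase _ _ (Finset.mem_univ (lst k)), if_pos rfl]
      have hsum : ∑ i ∈ Finset.univ.erase (lst k),
          (if i = lst k then (y (lst k) : ℝ) / 3 else (y i : ℝ) - 2 * (y (lst k) : ℝ) / 3)
          = (∑ i ∈ Finset.univ.erase (lst k), (y i : ℝ))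
            - (3 * k + 1) * (2 * (y (lst k) : ℝ) / 3) := by
        rw [Finset.sum_congr rfl (fun i hi => if_neg (Finset.mem_erase.1 hi).1)]
        rw [Finset.sum_sub_distrib, Finset.sum_const, card_erase_lst]
        push_cast
        ring
      rw [hsum]
      linarith
    · funext i
      rw [sum_smul_u_apply]
      by_cases hi : i = lst k
      · rw [if_pos hi, if_pos rfl, hi]
        ring
      · rw [if_neg hi, if_neg hi, if_pos rfl]
        ring

lemma lattice_set_eq (n : ℕ) :
    {x : Fin (3 * k + 2) → ℝ | x ∈ (fun p => (n : ℝ) • p) '' P k ∧ IsLatticePt x}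
      = (fun (y : Fin (3 * k + 2) → ℤ) => fun i => ((y i : ℝ))) '' {y | cond k n y} := by
  ext x
  constructor
  · rintro ⟨hmem, hlat⟩
    choose z hz using hlat
    have hx : x = fun i => ((z i : ℝ)) := funext fun i => hz i
    refine ⟨z, ?_, hx.symm⟩
    rw [Set.mem_setOf_eq, ← cast_mem_dilate_iff k n z]
    rwa [hx] at hmem
  · rintro ⟨y, hy, rfl⟩
    exact ⟨(cast_mem_dilate_iff k n y).2 hy, fun i => ⟨y i, rfl⟩⟩

abbrev Ctype (n t : ℕ) : Type :=
  {sa : ℕ × (Fin (3 * k + 2) → ℕ) // sa.1 + (∑ j, sa.2 j) + (k + 1) * t = n}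

def Uset (n t : ℕ) : Set (Fin (3 * k + 2) → ℤ) :=
  {y | cond k n y ∧ (y (lst k)) % 3 = (t : ℤ)}

def gfun (t : ℕ) (a : Fin (3 * k + 2) → ℕ) : Fin (3 * k + 2) → ℤ :=
  fun i => if i = lst k then 3 * (a (lst k) : ℤ) + t else (a i : ℤ) + 2 * (a (lst k) : ℤ) + t

lemma sum_erase_gfun (t : ℕ) (a : Fin (3 * k + 2) → ℕ) :
    ∑ i ∈ Finset.univ.erase (lst k), gfun k t a i
      = (∑ i ∈ Finset.univ.erase (lst k), (a i : ℤ))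
        + (3 * k + 1) * (2 * (a (lst k) : ℤ) + t) := by
  rw [Finset.sum_congr rfl (fun i hi => by
    rw [gfun, if_neg (Finset.mem_erase.1 hi).1])]
  rw [Finset.sum_add_distrib, Finset.sum_add_distrib, Finset.sum_const, Finset.sum_const,
    card_erase_lst]
  push_cast
  ring

lemma sum_univ_split (a : Fin (3 * k + 2) → ℕ) :
    (∑ j, a j) = a (lst k) + ∑ i ∈ Finset.univ.erase (lst k), a i :=
  (Finset.add_sum_erase _ _ (Finset.mem_univ _)).symm

def gmap (n t : ℕ) (ht : t < 3) (p : Ctype k n t) : ↥(Uset k n t) := by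
  refine ⟨gfun k t p.1.2, ⟨⟨?_, ?_, ?_⟩, ?_⟩⟩
  · rw [gfun, if_pos rfl]; positivity
  · intro i hi
    simp only [gfun, if_true]
    rw [if_neg hi]
    omega
  · rw [sum_erase_gfun, gfun, if_pos rfl]
    have hp := p.2
    have hs := sum_univ_split k p.1.2
    have hcast : ((p.1.1 + (∑ j, p.1.2 j) + (k + 1) * t : ℕ) : ℤ) = (n : ℤ) := by
      exact_mod_cast congrArg (Nat.cast : ℕ → ℤ) hp
    push_cast [hs] at hcast
    have h0 : (0:ℤ) ≤ p.1.1 := by positivity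
    have h1 : (0:ℤ) ≤ t := by positivity
    nlinarith [hcast, h0, h1]
  · rw [gfun, if_pos rfl]
    omega

lemma gmap_injective (n t : ℕ) (ht : t < 3) : Function.Injective (gmap k n t ht) := by
  rintro ⟨⟨s₁, a₁⟩, hp₁⟩ ⟨⟨s₂, a₂⟩, hp₂⟩ h
  dsimp only at hp₁ hp₂
  have hfun : gfun k t a₁ = gfun k t a₂ := congrArg Subtype.val h
  have hlst : a₁ (lst k) = a₂ (lst k) := by
    have := congrFun hfun (lst k)
    rw [gfun, gfun, if_pos rfl, if_pos rfl] at this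
    omega
  have ha : a₁ = a₂ := by
    funext i
    by_cases hi : i = lst k
    · rw [hi]; exact hlst
    · have := congrFun hfun i
      rw [gfun, gfun, if_neg hi, if_neg hi] at this
      omega
  have hsum : s₁ = s₂ := by
    rw [ha] at hp₁
    omega
  apply Subtype.ext
  show (s₁, a₁) = (s₂, a₂)
  rw [hsum, ha]

lemma gmap_surjective (n t : ℕ) (ht : t < 3) : Function.Surjective (gmap k n t ht) := by
  rintro ⟨y, ⟨⟨h1, h2, h3⟩, hmod⟩⟩
  obtain ⟨A, hA⟩ : ∃ A : ℕ, y (lst k) = 3 * (A : ℤ) + t :=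
    ⟨(y (lst k)).toNat / 3, by omega⟩
  set a : Fin (3 * k + 2) → ℕ :=
    fun i => if i = lst k then A else (y i - 2 * (A : ℤ) - t).toNat with hadef
  have halst : a (lst k) = A := by rw [hadef]; simp
  have ha : ∀ i, i ≠ lst k → (a i : ℤ) = y i - 2 * A - t := by
    intro i hi
    rw [hadef]
    simp only [if_neg hi]
    have := h2 i hi
    omega
  have hsum' : (∑ i ∈ Finset.univ.erase (lst k), (a i : ℤ))
      = (∑ i ∈ Finset.univ.erase (lst k), y i)
        - (3 * k + 1) * (2 * (A : ℤ) + t) := by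
    rw [Finset.sum_congr rfl (fun i hi => ha i (Finset.mem_erase.1 hi).1)]
    rw [Finset.sum_sub_distrib, Finset.sum_sub_distrib, Finset.sum_const, Finset.sum_const,
      card_erase_lst]
    push_cast
    ring
  have hsplit : (∑ j, a j) = A + ∑ i ∈ Finset.univ.erase (lst k), a i := by
    rw [sum_univ_split, halst]
  set M : ℕ := (∑ j, a j) + (k + 1) * t with hM
  have hMle : M ≤ n := by
    have hcastM : (M : ℤ) = (A : ℤ) + (∑ i ∈ Finset.univ.erase (lst k), (a i : ℤ))
        + ((k : ℤ) + 1) * t := by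
      rw [hM, hsplit]
      push_cast
      ring
    have hZ : 3 * (M : ℤ) ≤ 3 * (n : ℤ) + t := by
      rw [hcastM, hsum']
      rw [hA] at h3
      linarith [h3]
    have ht3 : (t : ℤ) < 3 := by exact_mod_cast ht
    omega
  have hkey : n - M + (∑ j, a j) + (k + 1) * t = n := by
    rw [add_assoc, ← hM]
    omega
  refine ⟨⟨(n - M, a), hkey⟩, ?_⟩
  apply Subtype.ext
  show gfun k t a = y
  funext i
  by_cases hi : i = lst k
  · rw [gfun, hi]
    rw [if_pos rfl, halst, hA]
  · show (if i = lst k then 3 * (a (lst k) : ℤ) + t else (a i : ℤ) + 2 * (a (lst k) : ℤ) + t) = y i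
    rw [if_neg hi, halst]
    have := ha i hi
    omega

def consEquiv (r m c : ℕ) (h : c ≤ m) :
    {sa : ℕ × (Fin r → ℕ) // sa.1 + (∑ j, sa.2 j) + c = m}
      ≃ {b : Fin (r + 1) → ℕ // ∑ i, b i = m - c} where
  toFun p := ⟨Fin.cons p.1.1 p.1.2, by
    rw [Fin.sum_cons]
    have := p.2
    omega⟩
  invFun b := ⟨(b.1 0, (Fin.tail b.1 : Fin r → ℕ)), by
    have hb := b.2
    rw [Fin.sum_univ_succ] at hb
    have hts : ∑ i : Fin r, (Fin.tail b.1 : Fin r → ℕ) i = ∑ i : Fin r, b.1 i.succ := rfl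
    dsimp only
    rw [hts]
    omega⟩
  left_inv p := by
    apply Subtype.ext
    show ((Fin.cons p.1.1 p.1.2 : Fin (r + 1) → ℕ) 0,
      (Fin.tail (Fin.cons p.1.1 p.1.2 : Fin (r + 1) → ℕ) : Fin r → ℕ)) = p.1
    rw [Fin.cons_zero, Fin.tail_cons]
  right_inv b := by
    apply Subtype.ext
    show (Fin.cons (b.1 0) (Fin.tail b.1) : Fin (r + 1) → ℕ) = b.1
    exact Fin.cons_self_tail b.1

lemma isEmpty_Ctype (n t : ℕ) (h : ¬ (k + 1) * t ≤ n) : IsEmpty (Ctype k n t) := by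
  constructor
  intro p
  have := p.2
  omega

lemma card_Ctype (n t : ℕ) : Nat.card (Ctype k n t)
    = if (k + 1) * t ≤ n then (n - (k + 1) * t + (3 * k + 2)).choose (3 * k + 2) else 0 := by
  by_cases h : (k + 1) * t ≤ n
  · rw [if_pos h]
    rw [Nat.card_congr (consEquiv (3 * k + 2) n ((k + 1) * t) h)]
    exact equi_card_sumEq (3 * k + 2) (n - (k + 1) * t)
  · rw [if_neg h]
    have := isEmpty_Ctype k n t h
    exact Nat.card_of_isEmpty

lemma finite_Ctype (n t : ℕ) : Finite (Ctype k n t) := by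
  by_cases h : (k + 1) * t ≤ n
  · have e := consEquiv (3 * k + 2) n ((k + 1) * t) h
    have : Finite {b : Fin (3 * k + 2 + 1) → ℕ // ∑ i, b i = n - (k + 1) * t} := by
      have e2 := Equiv.subtypeEquivRight
        (fun b : Fin (3 * k + 2 + 1) → ℕ =>
          (Finset.Nat.mem_antidiagonalTuple (n := n - (k + 1) * t) (x := b)).symm)
      exact Finite.of_equiv _ e2.symm
    exact Finite.of_equiv _ e.symm
  · have := isEmpty_Ctype k n t h
    infer_instance

lemma finite_Uset (n t : ℕ) (ht : t < 3) : (Uset k n t).Finite := by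
  have : Finite (Ctype k n t) := finite_Ctype k n t
  rw [← Set.finite_coe_iff]
  exact Finite.of_surjective (gmap k n t ht) (gmap_surjective k n t ht)

lemma card_Uset (n t : ℕ) (ht : t < 3) :
    (Uset k n t).ncard
      = if (k + 1) * t ≤ n then (n - (k + 1) * t + (3 * k + 2)).choose (3 * k + 2) else 0 := by
  rw [← Nat.card_coe_set_eq]
  rw [← Nat.card_eq_of_bijective (gmap k n t ht) ⟨gmap_injective k n t ht, gmap_surjective k n t ht⟩]
  exact card_Ctype k n t

lemma Uset_union (n : ℕ) :
    {y : Fin (3 * k + 2) → ℤ | cond k n y}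
      = (Uset k n 0 ∪ Uset k n 1) ∪ Uset k n 2 := by
  ext y
  simp only [Uset, Set.mem_union, Set.mem_setOf_eq]
  constructor
  · intro h
    have := Int.emod_emod_of_dvd
    have h3 : y (lst k) % 3 = 0 ∨ y (lst k) % 3 = 1 ∨ y (lst k) % 3 = 2 := by omega
    rcases h3 with h3 | h3 | h3
    · exact Or.inl (Or.inl ⟨h, by exact_mod_cast h3⟩)
    · exact Or.inl (Or.inr ⟨h, by exact_mod_cast h3⟩)
    · exact Or.inr ⟨h, by exact_mod_cast h3⟩
  · rintro ((⟨h, -⟩ | ⟨h, -⟩) | ⟨h, -⟩) <;> exact h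

lemma Uset_disj (n : ℕ) {t₁ t₂ : ℕ} (h : t₁ ≠ t₂) (h₁ : t₁ < 3) (h₂ : t₂ < 3) :
    Disjoint (Uset k n t₁) (Uset k n t₂) := by
  rw [Set.disjoint_left]
  rintro y ⟨-, hm1⟩ ⟨-, hm2⟩
  rw [hm1] at hm2
  have : t₁ = t₂ := by exact_mod_cast hm2
  exact h this

lemma ncard_cond (n : ℕ) :
    {y : Fin (3 * k + 2) → ℤ | cond k n y}.ncard
      = (n + (3 * k + 2)).choose (3 * k + 2)
        + (if k + 1 ≤ n then (n - (k + 1) + (3 * k + 2)).choose (3 * k + 2) else 0)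
        + (if 2 * k + 2 ≤ n then (n - (2 * k + 2) + (3 * k + 2)).choose (3 * k + 2) else 0) := by
  rw [Uset_union k n]
  rw [Set.ncard_union_eq (Set.disjoint_union_left.2
      ⟨Uset_disj k n (by omega) (by omega) (by omega),
       Uset_disj k n (by omega) (by omega) (by omega)⟩)
    ((finite_Uset k n 0 (by omega)).union (finite_Uset k n 1 (by omega)))
    (finite_Uset k n 2 (by omega))]
  rw [Set.ncard_union_eq (Uset_disj k n (by omega) (by omega) (by omega))
    (finite_Uset k n 0 (by omega)) (finite_Uset k n 1 (by omega))]
  rw [card_Uset k n 0 (by omega), card_Uset k n 1 (by omega), card_Uset k n 2 (by omega)]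
  rw [show (k + 1) * 0 = 0 from by ring, show (k + 1) * 1 = k + 1 from by ring,
    show (k + 1) * 2 = 2 * k + 2 from by ring, if_pos (Nat.zero_le n), Nat.sub_zero]

lemma single_mem_vectorSpan (j : Fin (3 * k + 2)) :
    (fun i => if i = j then (1:ℝ) else 0) ∈ vectorSpan ℝ (P k) := by
  have hu : ∀ j, u k j ∈ vectorSpan ℝ (P k) := by
    intro j
    have h1 : u k j ∈ P k := subset_convexHull ℝ _ (u_mem_V k j)
    have h0 : (0 : Fin (3 * k + 2) → ℝ) ∈ P k := subset_convexHull ℝ _ (zero_mem_V k)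
    have := vsub_mem_vectorSpan ℝ h1 h0
    simpa using this
  by_cases hj : j = lst k
  · subst hj
    -- e_lst = 3⁻¹ • (u lst - 2 • ∑_{i ≠ lst} u i)
    have hsum : ∀ i ∈ Finset.univ.erase (lst k), u k i ∈ vectorSpan ℝ (P k) :=
      fun i _ => hu i
    have hmem : u k (lst k) - (2:ℝ) • (∑ i ∈ Finset.univ.erase (lst k), u k i)
        ∈ vectorSpan ℝ (P k) :=
      Submodule.sub_mem _ (hu _) (Submodule.smul_mem _ _ (Submodule.sum_mem _ hsum))
    have heq : (fun i => if i = lst k then (3:ℝ) else 0)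
        = u k (lst k) - (2:ℝ) • (∑ i ∈ Finset.univ.erase (lst k), u k i) := by
      funext i
      have hs : (∑ j ∈ Finset.univ.erase (lst k), u k j) i
          = if i = lst k then 0 else 1 := by
        rw [Finset.sum_apply]
        have hterm : ∀ j ∈ Finset.univ.erase (lst k),
            u k j i = if j = i then 1 else 0 := by
          intro j hj
          have hj' : j ≠ lst k := (Finset.mem_erase.1 hj).1
          rw [u, if_neg hj']
          by_cases hji : j = i
          · subst hji; simp
          · have : ¬ i = j := fun h => hji h.symm
            simp [this, hji]
        rw [Finset.sum_congr rfl hterm, Finset.sum_ite_eq' _ i (fun _ => (1:ℝ))]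
        by_cases hi : i = lst k
        · rw [if_pos hi, if_neg (by simp [hi])]
        · rw [if_neg hi, if_pos (Finset.mem_erase.2 ⟨hi, Finset.mem_univ i⟩)]
      simp only [Pi.sub_apply, Pi.smul_apply, smul_eq_mul, hs]
      rw [u, if_pos rfl]
      by_cases hi : i = lst k
      · rw [if_pos hi, if_pos hi, if_pos hi]; ring
      · rw [if_neg hi, if_neg hi, if_neg hi]; ring
    have : (fun i => if i = lst k then (1:ℝ) else 0)
        = (3:ℝ)⁻¹ • (fun i => if i = lst k then (3:ℝ) else 0) := by
      funext i
      by_cases hi : i = lst k <;> simp [hi]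
    rw [this, heq]
    exact Submodule.smul_mem _ _ hmem
  · have : (fun i => if i = j then (1:ℝ) else 0) = u k j := by
      rw [u, if_neg hj]
    rw [this]
    exact hu j

lemma vectorSpan_P_top : vectorSpan ℝ (P k) = ⊤ := by
  rw [Submodule.eq_top_iff']
  intro x
  have hx : x = ∑ i, x i • fun j => if i = j then (1:ℝ) else 0 := pi_eq_sum_univ x
  rw [hx]
  apply Submodule.sum_mem
  intro i _
  apply Submodule.smul_mem
  have : (fun j => if i = j then (1:ℝ) else 0) = fun j => if j = i then (1:ℝ) else 0 := by
    funext j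
    by_cases h : i = j
    · subst h; simp
    · rw [if_neg h, if_neg (fun hh => h hh.symm)]
  rw [this]
  exact single_mem_vectorSpan k i

lemma finrank_P : Module.finrank ℝ ↥(vectorSpan ℝ (P k)) = 3 * k + 2 := by
  rw [vectorSpan_P_top, finrank_top]
  rw [Module.finrank_pi ℝ]
  simp


lemma cast_injective :
    Function.Injective (fun (y : Fin (3 * k + 2) → ℤ) => (fun i => ((y i : ℝ)))) := by
  intro a b h
  funext i
  exact Int.cast_injective (congrFun h i)

lemma ehrhart_eq (n : ℕ) : ehrhart (P k) n
    = (n + (3 * k + 2)).choose (3 * k + 2)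
      + (if k + 1 ≤ n then (n - (k + 1) + (3 * k + 2)).choose (3 * k + 2) else 0)
      + (if 2 * k + 2 ≤ n then (n - (2 * k + 2) + (3 * k + 2)).choose (3 * k + 2) else 0) := by
  show Set.ncard _ = _
  rw [lattice_set_eq k n, Set.ncard_image_of_injective _ (cast_injective k)]
  exact ncard_cond k n

lemma delta_eq (i : ℕ) : deltaVector (3 * k + 2) (P k) i
    = (if i = 0 then 1 else 0) + (if i = k + 1 then 1 else 0)
      + (if i = 2 * k + 2 then 1 else 0) := by
  show (∑ j ∈ Finset.range (i + 1),
      (-1 : ℤ) ^ j * (Nat.choose (3 * k + 2 + 1) j : ℤ) * (ehrhart (P k) (i - j) : ℤ)) = _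
  have hsplit : ∀ j ∈ Finset.range (i + 1),
      (-1 : ℤ) ^ j * (Nat.choose (3 * k + 2 + 1) j : ℤ) * (ehrhart (P k) (i - j) : ℤ)
      = (-1 : ℤ) ^ j * ((3 * k + 2 + 1).choose j : ℤ)
          * (((i - j) + (3 * k + 2)).choose (3 * k + 2) : ℤ)
        + (-1 : ℤ) ^ j * ((3 * k + 2 + 1).choose j : ℤ)
          * (if k + 1 ≤ i - j
              then (((i - j) - (k + 1) + (3 * k + 2)).choose (3 * k + 2) : ℤ) else 0)
        + (-1 : ℤ) ^ j * ((3 * k + 2 + 1).choose j : ℤ)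
          * (if 2 * k + 2 ≤ i - j
              then (((i - j) - (2 * k + 2) + (3 * k + 2)).choose (3 * k + 2) : ℤ) else 0) := by
    intro j _
    rw [ehrhart_eq k (i - j)]
    push_cast [apply_ite (fun z : ℕ => (z : ℤ))]
    ring
  rw [Finset.sum_congr rfl hsplit, Finset.sum_add_distrib, Finset.sum_add_distrib]
  rw [equi_keyK (3 * k + 2) i, equi_keyK' (3 * k + 2) (k + 1) i,
    equi_keyK' (3 * k + 2) (2 * k + 2) i]

lemma lattice_V : ∀ v ∈ V k, IsLatticePt v := by
  intro v hv
  have hv' : v = 0 ∨ ∃ j, v = u k j := by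
    simp only [V, Finset.mem_insert, Finset.mem_image, Finset.mem_univ, true_and] at hv
    rcases hv with h | ⟨j, hj⟩
    · exact Or.inl h
    · exact Or.inr ⟨j, hj.symm⟩
  rcases hv' with rfl | ⟨j, rfl⟩
  · exact fun i => ⟨0, by simp⟩
  · intro i
    refine ⟨if j = lst k then (if i = lst k then 3 else 2) else if i = j then 1 else 0, ?_⟩
    simp only [u]
    split_ifs <;> simp_all

end EquiAux

end EquiAux

/-- **Lemma 3.1.** For `d = 3k + 2` there exists an integral convex polytope
`P ⊂ ℝ^d` of dimension `d` with `δ_0 = δ_{k+1} = δ_{2k+2} = 1` and all other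
entries of its δ-vector equal to `0`. -/
theorem exists_polytope_delta_equispaced
    (k d : ℕ) (hd : d = 3 * k + 2) :
    ∃ P : Set (Fin d → ℝ), IsIntegralPolytope d d P ∧
      deltaVector d P 0 = 1 ∧
      deltaVector d P (k + 1) = 1 ∧
      deltaVector d P (2 * k + 2) = 1 ∧
      ∀ j ≤ d, j ≠ 0 → j ≠ k + 1 → j ≠ 2 * k + 2 → deltaVector d P j = 0 := by
  subst hd
  classical
  refine ⟨EquiAux.P k, ⟨⟨EquiAux.V k, ⟨0, EquiAux.zero_mem_V k⟩, EquiAux.lattice_V k, rfl⟩,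
    EquiAux.finrank_P k⟩, ?_, ?_, ?_, ?_⟩
  · rw [EquiAux.delta_eq k 0]
    rw [if_pos rfl, if_neg (by omega), if_neg (by omega)]
    norm_num
  · rw [EquiAux.delta_eq k (k + 1)]
    rw [if_neg (by omega), if_pos rfl, if_neg (by omega)]
    norm_num
  · rw [EquiAux.delta_eq k (2 * k + 2)]
    rw [if_neg (by omega), if_neg (by omega), if_pos rfl]
    norm_num
  · intro j _ h0 h1 h2
    rw [EquiAux.delta_eq k j]
    rw [if_neg h0, if_neg h1, if_neg h2]
    norm_num
end

section
/- Let k ≥ 0 and ℓ > 0 be integers, d = 3k + 2, and d' = d + 2ℓ. There exists an integral simplex P ⊂ ℝ^{d'} of dimension d' whose δ-vector (δ_0, …, δ_{d'}) satisfies δ_0 = δ_{k+ℓ+1} = δ_{2k+ℓ+2} = 1 and δ_j = 0 for all j ∉ {0, k+ℓ+1, 2k+ℓ+2}. -/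
open Finset MeasureTheory

namespace DeltaAux

/-- dimension -/
def DD (k l : ℕ) : ℕ := 3 * k + 2 * l + 2

/-- the special vertex's coordinates -/
def uu (k l : ℕ) (j : ℕ) : ℤ := if j < l then 1 else if j < l + k + 2 then 2 else -1

/-- the box lattice points (spatial parts), m = 0,1,2 -/
def zz (k l : ℕ) (m j : ℕ) : ℤ :=
  if j < l then (if m = 0 then 0 else 1) else if j < l + k + 2 then (m : ℤ) else 0

/-- the heights of the box points -/
def hh (k l : ℕ) (m : ℕ) : ℕ := if m = 0 then 0 else if m = 1 then k + l + 1 else 2 * k + l + 2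

lemma sum_split (a b c : ℕ) (hab : a ≤ b) (hbc : b ≤ c) (A B C : ℤ) :
    ∑ j ∈ Finset.range c, (if j < a then A else if j < b then B else C)
      = a * A + (b - a : ℕ) * B + (c - b : ℕ) * C := by
  rw [Finset.range_eq_Ico, ← Finset.sum_Ico_consecutive _ (Nat.zero_le b) hbc,
    ← Finset.sum_Ico_consecutive _ (Nat.zero_le a) hab]
  have h1 : ∑ j ∈ Finset.Ico 0 a, (if j < a then A else if j < b then B else C) = a * A := by
    have hc : ∀ j ∈ Finset.Ico 0 a, (if j < a then A else if j < b then B else C) = A := by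
      intro j hj
      simp only [Finset.mem_Ico] at hj
      simp [hj.2]
    rw [Finset.sum_congr rfl hc, Finset.sum_const, Nat.card_Ico, nsmul_eq_mul]
    simp
  have h2 : ∑ j ∈ Finset.Ico a b, (if j < a then A else if j < b then B else C)
      = (b - a : ℕ) * B := by
    have hc : ∀ j ∈ Finset.Ico a b, (if j < a then A else if j < b then B else C) = B := by
      intro j hj
      simp only [Finset.mem_Ico] at hj
      rw [if_neg (by omega), if_pos hj.2]
    rw [Finset.sum_congr rfl hc, Finset.sum_const, Nat.card_Ico, nsmul_eq_mul]
  have h3 : ∑ j ∈ Finset.Ico b c, (if j < a then A else if j < b then B else C)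
      = (c - b : ℕ) * C := by
    have hc : ∀ j ∈ Finset.Ico b c, (if j < a then A else if j < b then B else C) = C := by
      intro j hj
      simp only [Finset.mem_Ico] at hj
      rw [if_neg (by omega), if_neg (by omega)]
    rw [Finset.sum_congr rfl hc, Finset.sum_const, Nat.card_Ico, nsmul_eq_mul]
  rw [h1, h2, h3]

lemma sum_uu (k l : ℕ) : ∑ j ∈ Finset.range (DD k l), uu k l j = 4 := by
  unfold uu DD
  rw [sum_split l (l + k + 2) (3 * k + 2 * l + 2) (by omega) (by omega)]
  push_cast
  omega

lemma sum_zz (k l m : ℕ) (hm : m < 3) :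
    ∑ j ∈ Finset.range (DD k l), zz k l m j = (hh k l m : ℤ) + m := by
  unfold zz DD hh
  rw [sum_split l (l + k + 2) (3 * k + 2 * l + 2) (by omega) (by omega)]
  interval_cases m <;> push_cast <;> omega

/-- the fractional residues are in [0,3) -/
lemma zz_frac (k l m j : ℕ) (hm : m < 3) :
    0 ≤ 3 * zz k l m j - (m : ℤ) * uu k l j ∧ 3 * zz k l m j - (m : ℤ) * uu k l j < 3 := by
  unfold zz uu
  split_ifs with h1 h2 h3 <;> interval_cases m <;> omega

/-- ceiling property -/
lemma zz_ceil (k l m j : ℕ) (hm : m < 3) (c : ℤ) (hc : (m : ℤ) * uu k l j ≤ 3 * c) :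
    zz k l m j ≤ c := by
  have := zz_frac k l m j hm
  omega


def vtx (k l : ℕ) (t : Fin (DD k l + 1)) (j : Fin (DD k l)) : ℝ :=
  if (t : ℕ) < DD k l then (if (t : ℕ) = (j : ℕ) then 1 else 0) else (uu k l (j : ℕ) : ℝ)

lemma vtx_castSucc (k l : ℕ) (i j : Fin (DD k l)) :
    vtx k l i.castSucc j = if i = j then 1 else 0 := by
  unfold vtx
  rw [if_pos (by simpa using i.isLt)]
  simp [Fin.val_eq_val]

lemma vtx_last (k l : ℕ) (j : Fin (DD k l)) :
    vtx k l (Fin.last _) j = (uu k l (j : ℕ) : ℝ) := by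
  unfold vtx
  rw [if_neg (by simp)]

lemma sum_theta_coord (k l : ℕ) (θ : Fin (DD k l + 1) → ℝ) (j : Fin (DD k l)) :
    ∑ t, θ t * vtx k l t j
      = θ j.castSucc + θ (Fin.last _) * (uu k l (j : ℕ) : ℝ) := by
  rw [Fin.sum_univ_castSucc]
  simp only [vtx_castSucc, vtx_last, mul_ite, mul_one, mul_zero]
  rw [Finset.sum_ite_eq' Finset.univ j (fun i => θ i.castSucc)]
  simp

/-- generic membership characterization for convex hulls of finite ranges -/
lemma mem_convexHull_range_iff {E : Type*} [AddCommGroup E] [Module ℝ E] {ι : Type*} [Fintype ι]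
    (v : ι → E) (x : E) :
    x ∈ convexHull ℝ (Set.range v) ↔
      ∃ w : ι → ℝ, (∀ i, 0 ≤ w i) ∧ ∑ i, w i = 1 ∧ ∑ i, w i • v i = x := by
  classical
  constructor
  · intro hx
    rw [convexHull_range_eq_exists_affineCombination] at hx
    obtain ⟨s, w, h0, h1, hx⟩ := hx
    refine ⟨fun i => if i ∈ s then w i else 0, fun i => ?_, ?_, ?_⟩
    · dsimp only
      split_ifs with h
      · exact h0 i h
      · exact le_refl 0
    · dsimp only
      rw [Finset.sum_ite_mem, Finset.univ_inter]
      exact h1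
    · dsimp only
      rw [← hx, affineCombination_eq_linear_combination s v w h1]
      simp only [ite_smul, zero_smul]
      rw [Finset.sum_ite_mem, Finset.univ_inter]
  · rintro ⟨w, h0, h1, hx⟩
    exact mem_convexHull_of_exists_fintype w v h0 h1 (fun i => Set.mem_range_self i) hx





def Pset (k l : ℕ) : Set (Fin (DD k l) → ℝ) := convexHull ℝ (Set.range (vtx k l))

lemma mem_dilate_iff (k l n : ℕ) (x : Fin (DD k l) → ℝ) :
    x ∈ (fun p => (n : ℝ) • p) '' Pset k l ↔
      ∃ θ : Fin (DD k l + 1) → ℝ, (∀ t, 0 ≤ θ t) ∧ ∑ t, θ t = n ∧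
        ∀ j, x j = ∑ t, θ t * vtx k l t j := by
  rcases Nat.eq_zero_or_pos n with hn | hn
  · subst hn
    constructor
    · rintro ⟨p, hp, hx⟩
      refine ⟨fun _ => 0, fun t => le_refl 0, by simp, fun j => ?_⟩
      have : x j = 0 := by rw [← hx]; simp
      simpa using this
    · rintro ⟨θ, h0, h1, hx⟩
      refine ⟨vtx k l 0, subset_convexHull ℝ _ (Set.mem_range_self 0), ?_⟩
      have hθ : ∀ t, θ t = 0 := by
        intro t
        have := (Finset.sum_eq_zero_iff_of_nonneg (fun i _ => h0 i)).1 (by simpa using h1)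
        exact this t (Finset.mem_univ t)
      funext j
      have : x j = 0 := by rw [hx j]; simp [hθ]
      simp [this]
  · have himg : (fun p => (n : ℝ) • p) '' Pset k l
        = convexHull ℝ (Set.range (fun t => (n : ℝ) • vtx k l t)) := by
      rw [Pset, Set.image_smul, ← convexHull_smul, Set.smul_set_range]
    rw [himg, mem_convexHull_range_iff]
    have hn' : (0 : ℝ) < n := by exact_mod_cast hn
    constructor
    · rintro ⟨w, h0, h1, hx⟩
      refine ⟨fun t => (n : ℝ) * w t, fun t => mul_nonneg (le_of_lt hn') (h0 t), ?_, fun j => ?_⟩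
      · rw [← Finset.mul_sum, h1, mul_one]
      · rw [← hx, Finset.sum_apply]
        exact Finset.sum_congr rfl fun t _ => by
          simp only [Pi.smul_apply, smul_eq_mul]; ring
    · rintro ⟨θ, h0, h1, hx⟩
      refine ⟨fun t => θ t / n, fun t => div_nonneg (h0 t) (le_of_lt hn'), ?_, ?_⟩
      · rw [← Finset.sum_div, h1, div_self (ne_of_gt hn')]
      · funext j
        rw [Finset.sum_apply]
        rw [hx j]
        congr 1
        funext t
        simp only [Pi.smul_apply, smul_eq_mul]
        field_simp



lemma sum_uu_real (k l : ℕ) : ∑ j : Fin (DD k l), (uu k l (j : ℕ) : ℝ) = 4 := by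
  have : ∑ j : Fin (DD k l), (uu k l (j : ℕ) : ℝ)
      = ((∑ j ∈ Finset.range (DD k l), uu k l j : ℤ) : ℝ) := by
    rw [Fin.sum_univ_eq_sum_range (fun j => (uu k l j : ℝ))]
    push_cast
    rfl
  rw [this, sum_uu]
  norm_num

lemma theta_det (k l : ℕ) (θ : Fin (DD k l + 1) → ℝ) (x : Fin (DD k l) → ℝ) (n : ℝ)
    (hs : ∑ t, θ t = n) (hx : ∀ j, x j = ∑ t, θ t * vtx k l t j) :
    3 * θ (Fin.last _) = (∑ j, x j) - n ∧
      ∀ j, θ j.castSucc = x j - θ (Fin.last _) * (uu k l (j : ℕ) : ℝ) := by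
  have hxj : ∀ j, x j = θ j.castSucc + θ (Fin.last _) * (uu k l (j : ℕ) : ℝ) :=
    fun j => by rw [hx j, sum_theta_coord]
  have hcs : ∑ j : Fin (DD k l), θ j.castSucc = n - θ (Fin.last _) := by
    have := Fin.sum_univ_castSucc (f := θ)
    rw [hs] at this
    linarith
  have hsum : ∑ j : Fin (DD k l), x j = (n - θ (Fin.last _)) + θ (Fin.last _) * 4 := by
    rw [Finset.sum_congr rfl (fun j _ => hxj j), Finset.sum_add_distrib, ← Finset.mul_sum,
      sum_uu_real, hcs]
  constructor
  · linarith
  · intro j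
    have := hxj j
    linarith

lemma vtx_affineIndependent (k l : ℕ) : AffineIndependent ℝ (vtx k l) := by
  rw [affineIndependent_iff]
  intro s w hw hsum i hi
  classical
  set W : Fin (DD k l + 1) → ℝ := fun t => if t ∈ s then w t else 0 with hW
  have hWs : ∑ t, W t = (0 : ℝ) := by
    rw [hW]
    rw [Finset.sum_ite_mem, Finset.univ_inter]
    exact hw
  have hWx : ∀ j, (0 : Fin (DD k l) → ℝ) j = ∑ t, W t * vtx k l t j := by
    intro j
    have h0 : (∑ e ∈ s, w e • vtx k l e) j = 0 := by rw [hsum]; rfl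
    rw [Finset.sum_apply] at h0
    have : ∑ t, W t * vtx k l t j = ∑ e ∈ s, w e * vtx k l e j := by
      rw [hW]
      simp only [ite_mul, zero_mul]
      rw [Finset.sum_ite_mem, Finset.univ_inter]
    rw [this]
    simp only [Pi.smul_apply, smul_eq_mul] at h0
    rw [h0]
    rfl
  obtain ⟨hlast, hcast⟩ := theta_det k l W 0 0 hWs hWx
  have hWlast : W (Fin.last _) = 0 := by
    simp only [Pi.zero_apply, Finset.sum_const_zero] at hlast
    linarith
  have hWall : ∀ t, W t = 0 := by
    intro t
    rcases Fin.eq_castSucc_or_eq_last t with ⟨j, rfl⟩ | rfl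
    · have := hcast j
      simp only [Pi.zero_apply, hWlast, zero_mul] at this
      simpa using this
    · exact hWlast
  have := hWall i
  rw [hW] at this
  simpa [hi] using this

lemma finrank_Pset (k l : ℕ) :
    Module.finrank ℝ (vectorSpan ℝ (Pset k l)) = DD k l := by
  have hvs : vectorSpan ℝ (Pset k l) = vectorSpan ℝ (Set.range (vtx k l)) := by
    rw [← direction_affineSpan, ← direction_affineSpan, Pset, affineSpan_convexHull]
  rw [hvs]
  exact (vtx_affineIndependent k l).finrank_vectorSpan (by simp)

def phiZ (k l m : ℕ) (lam : Fin (DD k l + 1) → ℕ) (j : Fin (DD k l)) : ℤ :=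
  zz k l m (j : ℕ) + (lam j.castSucc : ℤ) + (lam (Fin.last _) : ℤ) * uu k l (j : ℕ)

def phi (k l m : ℕ) (lam : Fin (DD k l + 1) → ℕ) : Fin (DD k l) → ℝ :=
  fun j => (phiZ k l m lam j : ℝ)

lemma phi_lattice (k l m : ℕ) (lam : Fin (DD k l + 1) → ℕ) : IsLatticePt (phi k l m lam) :=
  fun j => ⟨phiZ k l m lam j, rfl⟩

lemma sum_zz_fin (k l m : ℕ) (hm : m < 3) :
    ∑ j : Fin (DD k l), zz k l m (j : ℕ) = (hh k l m : ℤ) + m := by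
  rw [Fin.sum_univ_eq_sum_range (fun j => zz k l m j), sum_zz k l m hm]

lemma sum_uu_fin (k l : ℕ) : ∑ j : Fin (DD k l), uu k l (j : ℕ) = 4 := by
  rw [Fin.sum_univ_eq_sum_range (fun j => uu k l j), sum_uu]

lemma sum_phiZ (k l m : ℕ) (hm : m < 3) (lam : Fin (DD k l + 1) → ℕ) :
    ∑ j : Fin (DD k l), phiZ k l m lam j
      = (hh k l m : ℤ) + m + (∑ t, (lam t : ℤ)) + 3 * (lam (Fin.last _) : ℤ) := by
  unfold phiZ
  rw [Finset.sum_add_distrib, Finset.sum_add_distrib, ← Finset.mul_sum, sum_zz_fin k l m hm,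
    sum_uu_fin]
  have hcs : ∑ j : Fin (DD k l), (lam j.castSucc : ℤ)
      = (∑ t, (lam t : ℤ)) - (lam (Fin.last _) : ℤ) := by
    have := Fin.sum_univ_castSucc (f := fun t => (lam t : ℤ))
    omega
  rw [hcs]
  ring

lemma phi_mem (k l n m : ℕ) (hm : m < 3) (lam : Fin (DD k l + 1) → ℕ)
    (hmn : hh k l m ≤ n) (hsl : ∑ t, lam t = n - hh k l m) :
    phi k l m lam ∈ (fun p => (n : ℝ) • p) '' Pset k l := by
  rw [mem_dilate_iff]
  refine ⟨fun t => (lam t : ℝ) +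
    (if h : (t : ℕ) < DD k l
      then ((3 * zz k l m (t : ℕ) - (m : ℤ) * uu k l (t : ℕ) : ℤ) : ℝ) / 3
      else (m : ℝ) / 3), ?_, ?_, ?_⟩
  · intro t
    have h1 : (0 : ℝ) ≤ (lam t : ℝ) := Nat.cast_nonneg _
    dsimp only
    split_ifs with h
    · have := (zz_frac k l m (t : ℕ) hm).1
      have h2 : (0 : ℝ) ≤ ((3 * zz k l m (t : ℕ) - (m : ℤ) * uu k l (t : ℕ) : ℤ) : ℝ) := by
        exact_mod_cast this
      linarith
    · positivity
  · rw [Finset.sum_add_distrib]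
    have hfrac : ∑ t : Fin (DD k l + 1),
        (if h : (t : ℕ) < DD k l
          then ((3 * zz k l m (t : ℕ) - (m : ℤ) * uu k l (t : ℕ) : ℤ) : ℝ) / 3
          else (m : ℝ) / 3) = (hh k l m : ℝ) := by
      rw [Fin.sum_univ_castSucc]
      have hlast : ¬ ((Fin.last (DD k l) : ℕ) < DD k l) := by simp
      rw [dif_neg hlast]
      have hjs : ∀ j : Fin (DD k l),
          (if h : ((j.castSucc : ℕ)) < DD k l
            then ((3 * zz k l m ((j.castSucc : ℕ)) - (m : ℤ) * uu k l ((j.castSucc : ℕ)) : ℤ) : ℝ) / 3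
            else (m : ℝ) / 3)
          = ((3 * zz k l m (j : ℕ) - (m : ℤ) * uu k l (j : ℕ) : ℤ) : ℝ) / 3 := by
        intro j
        rw [dif_pos (by simpa using j.isLt)]
        rfl
      rw [Finset.sum_congr rfl (fun j _ => hjs j)]
      rw [← Finset.sum_div]
      have : ∑ j : Fin (DD k l), ((3 * zz k l m (j : ℕ) - (m : ℤ) * uu k l (j : ℕ) : ℤ) : ℝ)
          = ((∑ j : Fin (DD k l), (3 * zz k l m (j : ℕ) - (m : ℤ) * uu k l (j : ℕ)) : ℤ) : ℝ) := by
        push_cast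
        rfl
      rw [this, Finset.sum_sub_distrib, ← Finset.mul_sum, ← Finset.mul_sum, sum_zz_fin k l m hm,
        sum_uu_fin]
      push_cast
      ring
    rw [hfrac]
    have hlam : ∑ t : Fin (DD k l + 1), (lam t : ℝ) = (n : ℝ) - (hh k l m : ℝ) := by
      have : ∑ t : Fin (DD k l + 1), (lam t : ℝ) = ((∑ t, lam t : ℕ) : ℝ) := by
        push_cast
        rfl
      rw [this, hsl, Nat.cast_sub hmn]
    rw [hlam]
    ring
  · intro j
    rw [sum_theta_coord]
    have hjlt : ((j.castSucc : ℕ)) < DD k l := by simpa using j.isLt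
    rw [dif_pos hjlt, dif_neg (by simp : ¬ ((Fin.last (DD k l) : ℕ) < DD k l))]
    show (phiZ k l m lam j : ℝ) = _
    unfold phiZ
    push_cast
    simp only [Fin.coe_castSucc]
    ring

lemma dilate_lattice_exists (k l n : ℕ) (x : Fin (DD k l) → ℝ)
    (hx : x ∈ (fun p => (n : ℝ) • p) '' Pset k l) (hlat : IsLatticePt x) :
    ∃ m, m < 3 ∧ ∃ lam : Fin (DD k l + 1) → ℕ,
      hh k l m ≤ n ∧ ∑ t, lam t = n - hh k l m ∧ x = phi k l m lam := by
  choose z hz using hlat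
  rw [mem_dilate_iff] at hx
  obtain ⟨θ, h0, h1, hcoord⟩ := hx
  obtain ⟨hlast, hcast⟩ := theta_det k l θ x n h1 hcoord
  -- integer sum of coordinates
  set Z : ℤ := ∑ j : Fin (DD k l), z j with hZ
  have hsumx : ∑ j : Fin (DD k l), x j = (Z : ℝ) := by
    rw [hZ]
    push_cast
    exact Finset.sum_congr rfl fun j _ => hz j
  set T : ℤ := Z - n with hT
  have hTreal : (T : ℝ) = 3 * θ (Fin.last _) := by
    rw [hT]
    push_cast
    rw [← hsumx, hlast]
  have hTnn : 0 ≤ T := by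
    have h3 : (0 : ℝ) ≤ 3 * θ (Fin.last _) := by
      have := h0 (Fin.last _)
      linarith
    rw [← hTreal] at h3
    exact_mod_cast h3
  set m : ℕ := (T % 3).toNat with hmdef
  set q : ℕ := (T / 3).toNat with hqdef
  have hmz : (m : ℤ) = T % 3 := Int.toNat_of_nonneg (Int.emod_nonneg T (by norm_num))
  have hqz : (q : ℤ) = T / 3 := Int.toNat_of_nonneg (Int.ediv_nonneg hTnn (by norm_num))
  have hm3 : m < 3 := by
    have : T % 3 < 3 := Int.emod_lt_of_pos T (by norm_num)
    omega
  have hTqm : T = 3 * q + m := by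
    rw [hqz, hmz]
    omega
  -- coordinatewise inequalities
  have hkey : ∀ j : Fin (DD k l), zz k l m (j : ℕ) ≤ z j - q * uu k l (j : ℕ) := by
    intro j
    have hθj : 0 ≤ θ j.castSucc := h0 _
    rw [hcast j] at hθj
    have hxj : x j = (z j : ℝ) := hz j
    have h3 : (0 : ℝ) ≤ 3 * (z j : ℝ) - (T : ℝ) * (uu k l (j : ℕ) : ℝ) := by
      rw [hTreal]
      nlinarith [hθj, hxj]
    have h3' : (0 : ℤ) ≤ 3 * z j - T * uu k l (j : ℕ) := by exact_mod_cast h3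
    apply zz_ceil k l m (j : ℕ) hm3
    rw [hTqm] at h3'
    linarith
  -- define lam
  set lam : Fin (DD k l + 1) → ℕ := fun t =>
    if h : (t : ℕ) < DD k l then (z ⟨(t : ℕ), h⟩ - q * uu k l (t : ℕ) - zz k l m (t : ℕ)).toNat
    else q with hlamdef
  have hlamcast : ∀ j : Fin (DD k l),
      (lam j.castSucc : ℤ) = z j - q * uu k l (j : ℕ) - zz k l m (j : ℕ) := by
    intro j
    rw [hlamdef]
    have hjlt : ((j.castSucc : ℕ)) < DD k l := by simpa using j.isLt
    simp only [dif_pos hjlt, Fin.coe_castSucc, Fin.eta]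
    rw [dif_pos j.isLt, Int.toNat_of_nonneg (by have := hkey j; omega)]
  have hlamlast : lam (Fin.last _) = q := by
    rw [hlamdef]
    simp
  have hsum_lam : ∑ t : Fin (DD k l + 1), (lam t : ℤ) = (n : ℤ) - hh k l m := by
    rw [Fin.sum_univ_castSucc]
    rw [Finset.sum_congr rfl (fun j (_ : j ∈ Finset.univ) => hlamcast j), hlamlast]
    rw [Finset.sum_sub_distrib, Finset.sum_sub_distrib, ← Finset.mul_sum, sum_uu_fin,
      sum_zz_fin k l m hm3, ← hZ]
    omega
  have hnn : (0 : ℤ) ≤ (n : ℤ) - hh k l m := by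
    rw [← hsum_lam]
    exact Finset.sum_nonneg fun t _ => Int.natCast_nonneg _
  refine ⟨m, hm3, lam, by omega, ?_, ?_⟩
  · have hcastsum : ((∑ t, lam t : ℕ) : ℤ) = (n : ℤ) - hh k l m := by
      push_cast
      exact hsum_lam
    omega
  · funext j
    rw [hz j]
    show _ = (phiZ k l m lam j : ℝ)
    have hint : z j = phiZ k l m lam j := by
      unfold phiZ
      rw [hlamcast j, hlamlast]
      ring
    exact_mod_cast congrArg (Int.cast : ℤ → ℝ) hint

lemma phi_inj (k l n : ℕ) {m m' : ℕ} (hm : m < 3) (hm' : m' < 3)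
    {lam lam' : Fin (DD k l + 1) → ℕ}
    (hs : ∑ t, lam t = n - hh k l m) (hs' : ∑ t, lam' t = n - hh k l m')
    (hn : hh k l m ≤ n) (hn' : hh k l m' ≤ n)
    (heq : phi k l m lam = phi k l m' lam') : m = m' ∧ lam = lam' := by
  have hZeq : ∀ j, phiZ k l m lam j = phiZ k l m' lam' j := by
    intro j
    have h := congrFun heq j
    unfold phi at h
    exact_mod_cast h
  have hcast : ((∑ t, lam t : ℕ) : ℤ) = (n : ℤ) - hh k l m := by
    rw [hs]; omega
  have hcast' : ((∑ t, lam' t : ℕ) : ℤ) = (n : ℤ) - hh k l m' := by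
    rw [hs']; omega
  have hsum : ∑ j : Fin (DD k l), phiZ k l m lam j
      = (n : ℤ) + m + 3 * (lam (Fin.last _) : ℤ) := by
    rw [sum_phiZ k l m hm lam]
    push_cast at hcast
    omega
  have hsum' : ∑ j : Fin (DD k l), phiZ k l m' lam' j
      = (n : ℤ) + m' + 3 * (lam' (Fin.last _) : ℤ) := by
    rw [sum_phiZ k l m' hm' lam']
    push_cast at hcast'
    omega
  have hsums : (n : ℤ) + m + 3 * (lam (Fin.last _) : ℤ)
      = (n : ℤ) + m' + 3 * (lam' (Fin.last _) : ℤ) := by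
    rw [← hsum, ← hsum']
    exact Finset.sum_congr rfl fun j _ => hZeq j
  have hmm : m = m' := by omega
  have hlast : lam (Fin.last _) = lam' (Fin.last _) := by omega
  subst hmm
  refine ⟨rfl, funext fun t => ?_⟩
  induction t using Fin.lastCases with
  | last => exact hlast
  | cast j =>
    have := hZeq j
    unfold phiZ at this
    rw [hlast] at this
    omega

lemma card_tuples (D M : ℕ) :
    (Finset.Nat.antidiagonalTuple (D + 1) M).card = (M + D).choose D := by
  classical
  have e : {x // x ∈ Finset.Nat.antidiagonalTuple (D + 1) M} ≃ Sym (Fin (D + 1)) M :=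
    (Equiv.subtypeEquivRight fun P => Finset.Nat.mem_antidiagonalTuple).trans
      (Sym.equivNatSumOfFintype (Fin (D + 1)) M).symm
  have h := Fintype.card_congr e
  rw [Fintype.card_coe] at h
  rw [h, Sym.card_sym_eq_choose, Fintype.card_fin]
  have h2 : D + 1 + M - 1 = M + D := by omega
  rw [h2, Nat.choose_symm_of_eq_add (by omega : M + D = M + D)]

open scoped Classical in
noncomputable def FF (k l n : ℕ) : Finset (Fin (DD k l) → ℝ) :=
  (Finset.range 3).biUnion fun m =>
    if hh k l m ≤ n then
      (Finset.Nat.antidiagonalTuple (DD k l + 1) (n - hh k l m)).image (phi k l m)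
    else ∅

open scoped Classical in
lemma lattice_set_eq (k l n : ℕ) :
    {x : Fin (DD k l) → ℝ | x ∈ (fun p => (n : ℝ) • p) '' Pset k l ∧ IsLatticePt x}
      = ↑(FF k l n) := by
  ext x
  simp only [Set.mem_setOf_eq, Finset.mem_coe, FF, Finset.mem_biUnion, Finset.mem_range]
  constructor
  · rintro ⟨hx, hlat⟩
    obtain ⟨m, hm3, lam, hmn, hsum, rfl⟩ := dilate_lattice_exists k l n x hx hlat
    refine ⟨m, hm3, ?_⟩
    rw [if_pos hmn, Finset.mem_image]
    exact ⟨lam, Finset.Nat.mem_antidiagonalTuple.2 hsum, rfl⟩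
  · rintro ⟨m, hm3, hx⟩
    by_cases hmn : hh k l m ≤ n
    · rw [if_pos hmn, Finset.mem_image] at hx
      obtain ⟨lam, hlam, rfl⟩ := hx
      exact ⟨phi_mem k l n m hm3 lam hmn (Finset.Nat.mem_antidiagonalTuple.1 hlam),
        phi_lattice k l m lam⟩
    · rw [if_neg hmn] at hx
      exact absurd hx (Finset.notMem_empty x)

open scoped Classical in
lemma card_FF (k l n : ℕ) :
    (FF k l n).card = ∑ m ∈ Finset.range 3,
      if hh k l m ≤ n then (n - hh k l m + DD k l).choose (DD k l) else 0 := by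
  rw [FF, Finset.card_biUnion]
  · refine Finset.sum_congr rfl fun m hm => ?_
    rw [Finset.mem_range] at hm
    by_cases hmn : hh k l m ≤ n
    · rw [if_pos hmn, if_pos hmn]
      rw [Finset.card_image_of_injOn, card_tuples]
      intro lam hlam lam' hlam' heq
      exact (phi_inj k l n hm hm
        (Finset.Nat.mem_antidiagonalTuple.1 hlam)
        (Finset.Nat.mem_antidiagonalTuple.1 hlam') hmn hmn heq).2
    · rw [if_neg hmn, if_neg hmn, Finset.card_empty]
  · intro m hm m' hm' hne
    simp only [Finset.coe_range, Set.mem_Iio] at hm hm'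
    rw [Function.onFun, Finset.disjoint_left]
    intro x hx hx'
    by_cases hmn : hh k l m ≤ n
    · by_cases hmn' : hh k l m' ≤ n
      · rw [if_pos hmn, Finset.mem_image] at hx
        rw [if_pos hmn', Finset.mem_image] at hx'
        obtain ⟨lam, hlam, rfl⟩ := hx
        obtain ⟨lam', hlam', heq⟩ := hx'
        exact hne (phi_inj k l n hm hm'
          (Finset.Nat.mem_antidiagonalTuple.1 hlam)
          (Finset.Nat.mem_antidiagonalTuple.1 hlam') hmn hmn' heq.symm).1
      · rw [if_neg hmn'] at hx'
        exact Finset.notMem_empty x hx'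
    · rw [if_neg hmn] at hx
      exact Finset.notMem_empty x hx

lemma ehrhart_Pset (k l n : ℕ) :
    ehrhart (Pset k l) n = ∑ m ∈ Finset.range 3,
      if hh k l m ≤ n then (n - hh k l m + DD k l).choose (DD k l) else 0 := by
  rw [ehrhart, lattice_set_eq, Set.ncard_coe_finset, card_FF]

lemma coeff_one_sub_X_pow (N n : ℕ) :
    (PowerSeries.coeff (R := ℤ) n) ((1 - PowerSeries.X) ^ N) = (-1 : ℤ) ^ n * (N.choose n : ℤ) := by
  have hpow : ((1 - PowerSeries.X : PowerSeries ℤ)) ^ N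
      = ∑ j ∈ Finset.range (N + 1),
          PowerSeries.C (R := ℤ) ((-1 : ℤ) ^ j * (N.choose j : ℤ)) * PowerSeries.X ^ j := by
    rw [sub_eq_add_neg, add_comm, add_pow]
    refine Finset.sum_congr rfl fun j hj => ?_
    rw [neg_pow]
    simp only [map_mul, map_pow, map_natCast, map_neg, map_one]
    push_cast
    ring
  rw [hpow, map_sum]
  simp only [PowerSeries.coeff_C_mul_X_pow]
  rw [Finset.sum_ite_eq (Finset.range (N + 1)) n
    (fun j => (-1 : ℤ) ^ j * (N.choose j : ℤ))]
  by_cases hn : n ∈ Finset.range (N + 1)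
  · rw [if_pos hn]
  · rw [if_neg hn]
    rw [Finset.mem_range] at hn
    rw [Nat.choose_eq_zero_of_lt (by omega)]
    ring

lemma BID (D s : ℕ) :
    ∑ j ∈ Finset.range (s + 1),
        (-1 : ℤ) ^ j * ((D + 1).choose j : ℤ) * ((s - j + D).choose D : ℤ)
      = if s = 0 then 1 else 0 := by
  have h := PowerSeries.mk_add_choose_mul_one_sub_pow_eq_one (S := ℤ) (d := D)
  have h2 := congrArg (PowerSeries.coeff (R := ℤ) s) h
  rw [PowerSeries.coeff_mul, PowerSeries.coeff_one,
    Finset.Nat.sum_antidiagonal_eq_sum_range_succ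
      (fun a b => (PowerSeries.coeff (R := ℤ) a) (PowerSeries.mk fun n => ((D + n).choose D : ℤ))
        * (PowerSeries.coeff (R := ℤ) b) ((1 - PowerSeries.X) ^ (D + 1)))] at h2
  simp only [PowerSeries.coeff_mk, coeff_one_sub_X_pow] at h2
  rw [← h2, ← Finset.sum_range_reflect]
  refine Finset.sum_congr rfl fun j hj => ?_
  rw [Finset.mem_range] at hj
  have h1 : s + 1 - 1 - j = s - j := by omega
  have h3 : s - (s - j) = j := by omega
  rw [h1, h3]
  ring_nf

lemma inner_sum (D h i : ℕ) :
    ∑ j ∈ Finset.range (i + 1), (-1 : ℤ) ^ j * ((D + 1).choose j : ℤ)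
        * (if h ≤ i - j then ((i - j - h + D).choose D : ℤ) else 0)
      = if i = h then 1 else 0 := by
  by_cases hhi : h ≤ i
  · set s := i - h with hs
    have hsub : Finset.range (s + 1) ⊆ Finset.range (i + 1) := by
      apply Finset.range_subset_range.2
      omega
    rw [← Finset.sum_subset hsub]
    · have : ∀ j ∈ Finset.range (s + 1),
          (-1 : ℤ) ^ j * ((D + 1).choose j : ℤ)
              * (if h ≤ i - j then ((i - j - h + D).choose D : ℤ) else 0)
            = (-1 : ℤ) ^ j * ((D + 1).choose j : ℤ) * ((s - j + D).choose D : ℤ) := by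
        intro j hj
        rw [Finset.mem_range] at hj
        rw [if_pos (by omega)]
        have : i - j - h = s - j := by omega
        rw [this]
      rw [Finset.sum_congr rfl this, BID]
      have : s = 0 ↔ i = h := by omega
      rw [if_congr this rfl rfl]
    · intro j hj hj'
      rw [Finset.mem_range] at hj hj'
      rw [if_neg (by omega)]
      ring
  · have : ∀ j ∈ Finset.range (i + 1),
        (-1 : ℤ) ^ j * ((D + 1).choose j : ℤ)
            * (if h ≤ i - j then ((i - j - h + D).choose D : ℤ) else 0) = 0 := by
      intro j hj
      rw [Finset.mem_range] at hj
      rw [if_neg (by omega)]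
      ring
    rw [Finset.sum_congr rfl this, Finset.sum_const_zero, if_neg (by omega)]

lemma vtx_latticePt (k l : ℕ) (t : Fin (DD k l + 1)) : IsLatticePt (vtx k l t) := by
  intro j
  unfold vtx
  split_ifs with h1 h2
  · exact ⟨1, by norm_num⟩
  · exact ⟨0, by norm_num⟩
  · exact ⟨uu k l (j : ℕ), rfl⟩

lemma delta_Pset (k l i : ℕ) :
    deltaVector (DD k l) (Pset k l) i
      = (if i = 0 then 1 else 0) + (if i = k + l + 1 then 1 else 0)
        + (if i = 2 * k + l + 2 then 1 else 0) := by
  unfold deltaVector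
  have hterm : ∀ j ∈ Finset.range (i + 1),
      (-1 : ℤ) ^ j * ((DD k l + 1).choose j : ℤ) * (ehrhart (Pset k l) (i - j) : ℤ)
        = ∑ m ∈ Finset.range 3, (-1 : ℤ) ^ j * ((DD k l + 1).choose j : ℤ)
            * (if hh k l m ≤ i - j then ((i - j - hh k l m + DD k l).choose (DD k l) : ℤ) else 0) := by
    intro j hj
    rw [ehrhart_Pset k l (i - j)]
    rw [← Finset.mul_sum]
    congr 1
    push_cast
    rfl
  rw [Finset.sum_congr rfl hterm, Finset.sum_comm]
  have hm : ∀ m ∈ Finset.range 3,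
      ∑ j ∈ Finset.range (i + 1), (-1 : ℤ) ^ j * ((DD k l + 1).choose j : ℤ)
          * (if hh k l m ≤ i - j then ((i - j - hh k l m + DD k l).choose (DD k l) : ℤ) else 0)
        = if i = hh k l m then 1 else 0 :=
    fun m _ => inner_sum (DD k l) (hh k l m) i
  rw [Finset.sum_congr rfl hm]
  rw [Finset.sum_range_succ, Finset.sum_range_succ, Finset.sum_range_one]
  rfl

end DeltaAux

/-- **Lemma 3.2.** For `d = 3k + 2`, `ℓ > 0` and `d' = d + 2ℓ`, there exists an
integral simplex `P ⊂ ℝ^{d'}` of dimension `d'` with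
`δ_0 = δ_{k+ℓ+1} = δ_{2k+ℓ+2} = 1` and all other entries of its δ-vector `0`. -/


theorem exists_simplex_delta_shifted
    (k ℓ d d' : ℕ) (hℓ : 0 < ℓ) (hd : d = 3 * k + 2) (hd' : d' = d + 2 * ℓ) :
    ∃ P : Set (Fin d' → ℝ),
      (∃ v : Fin (d' + 1) → Fin d' → ℝ,
        (∀ t, IsLatticePt (v t)) ∧ AffineIndependent ℝ v ∧
        P = convexHull ℝ (Set.range v)) ∧
      Module.finrank ℝ (vectorSpan ℝ P) = d' ∧
      deltaVector d' P 0 = 1 ∧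
      deltaVector d' P (k + ℓ + 1) = 1 ∧
      deltaVector d' P (2 * k + ℓ + 2) = 1 ∧
      ∀ j ≤ d', j ≠ 0 → j ≠ k + ℓ + 1 → j ≠ 2 * k + ℓ + 2 →
        deltaVector d' P j = 0 := by
  obtain rfl : d' = DeltaAux.DD k ℓ := by rw [DeltaAux.DD]; omega
  refine ⟨DeltaAux.Pset k ℓ, ⟨DeltaAux.vtx k ℓ, DeltaAux.vtx_latticePt k ℓ,
    DeltaAux.vtx_affineIndependent k ℓ, rfl⟩, DeltaAux.finrank_Pset k ℓ, ?_, ?_, ?_, ?_⟩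
  · rw [DeltaAux.delta_Pset k ℓ 0]
    norm_num
  · rw [DeltaAux.delta_Pset k ℓ (k + ℓ + 1)]
    have h1 : ¬ (k + ℓ + 1 = 0) := by omega
    have h2 : ¬ (k + ℓ + 1 = 2 * k + ℓ + 2) := by omega
    rw [if_neg h1, if_pos rfl, if_neg h2]
    norm_num
  · rw [DeltaAux.delta_Pset k ℓ (2 * k + ℓ + 2)]
    have h1 : ¬ (2 * k + ℓ + 2 = 0) := by omega
    have h2 : ¬ (2 * k + ℓ + 2 = k + ℓ + 1) := by omega
    rw [if_neg h1, if_neg h2, if_pos rfl]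
    norm_num
  · intro j hj hj0 hj1 hj2
    rw [DeltaAux.delta_Pset k ℓ j, if_neg hj0, if_neg hj1, if_neg hj2]
    norm_num
end

section
/- Let d ≥ 3 and let m, n be integers with 1 < m < n < d satisfying n − m − 1 ≤ m − 1 ≤ d − n. Then there exists an integral convex polytope P ⊂ ℝ^d of dimension d whose δ-vector (δ_0, …, δ_d) satisfies δ_0 = δ_m = δ_n = 1 and δ_j = 0 for all j ∉ {0, m, n}. -/
open Finset MeasureTheory

lemma chooseAlt : ∀ (a b c : ℕ), a ≤ b →
    (∑ j ∈ Finset.range (a+1), (-1:ℤ)^j * (a.choose j) * ((b - j).choose c)) =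
      if a ≤ c then (((b-a).choose (c-a) : ℕ) : ℤ) else 0 := by
  intro a
  induction a with
  | zero => intro b c _; simp
  | succ a ih =>
    intro b c hab
    have hb1 : a ≤ b - 1 := by omega
    have S1 : (∑ j ∈ Finset.range (a+1), (-1:ℤ)^j * (a.choose j) * ((b - j).choose c)) =
        if a ≤ c then (((b-a).choose (c-a) : ℕ) : ℤ) else 0 := ih b c (by omega)
    have S2 : (∑ j ∈ Finset.range (a+1), (-1:ℤ)^j * (a.choose j) * ((b - 1 - j).choose c)) =
        if a ≤ c then ((((b-1)-a).choose (c-a) : ℕ) : ℤ) else 0 := ih (b-1) c hb1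
    have key : (∑ j ∈ Finset.range (a+2), (-1:ℤ)^j * ((a+1).choose j) * ((b - j).choose c))
        = (∑ j ∈ Finset.range (a+1), (-1:ℤ)^j * (a.choose j) * ((b - j).choose c))
          - (∑ j ∈ Finset.range (a+1), (-1:ℤ)^j * (a.choose j) * ((b - 1 - j).choose c)) := by
      have hS1ext : (∑ j ∈ Finset.range (a+2), (-1:ℤ)^j * (a.choose j) * ((b - j).choose c))
          = (∑ j ∈ Finset.range (a+1), (-1:ℤ)^j * (a.choose j) * ((b - j).choose c)) := by
        rw [Finset.sum_range_succ, Nat.choose_succ_self a]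
        simp
      rw [Finset.sum_range_succ' _ (a+1)]
      rw [Finset.sum_range_succ' _ (a+1)] at hS1ext
      have hterm : ∀ j ∈ Finset.range (a+1),
          (-1:ℤ)^(j+1) * ((a+1).choose (j+1)) * ((b - (j+1)).choose c)
          = -((-1:ℤ)^j * (a.choose j) * ((b-1-j).choose c))
            - (-1:ℤ)^j * (a.choose (j+1)) * ((b - (j+1)).choose c) := by
        intro j hj
        have : b - (j+1) = b - 1 - j := by omega
        rw [this, Nat.choose_succ_succ a j]
        push_cast
        ring
      rw [Finset.sum_congr rfl hterm, Finset.sum_sub_distrib]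
      have : (∑ j ∈ Finset.range (a+1), (-1:ℤ)^j * (a.choose (j+1)) * ((b - (j+1)).choose c))
          = (∑ j ∈ Finset.range (a+1), -((-1:ℤ)^(j+1) * (a.choose (j+1)) * ((b - (j+1)).choose c))) := by
        apply Finset.sum_congr rfl; intro j _; ring
      rw [this]
      simp only [Finset.sum_neg_distrib]
      simp only [pow_zero, one_mul, Nat.choose_zero_right, Nat.cast_one, Nat.sub_zero] at hS1ext ⊢
      linarith [hS1ext]
    rw [key, S1, S2]
    by_cases h1 : a + 1 ≤ c
    · rw [if_pos h1, if_pos (by omega : a ≤ c), if_pos (by omega : a ≤ c)]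
      have e1 : b - a = (b - 1 - a) + 1 := by omega
      have e2 : c - a = (c - a - 1) + 1 := by omega
      have e3 : b - (a+1) = b - 1 - a := by omega
      have e4 : c - (a+1) = c - a - 1 := by omega
      rw [e1, e2, e3, e4, Nat.choose_succ_succ]
      push_cast
      ring
    · rw [if_neg h1]
      by_cases h2 : a ≤ c
      · have : c = a := by omega
        subst this
        simp
      · rw [if_neg h2, if_neg h2]; ring

lemma deltaBase (d i : ℕ) (hd : 1 ≤ d) :
    (∑ j ∈ Finset.range (i+1), (-1:ℤ)^j * ((d+1).choose j) * ((i - j + d).choose d))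
      = if i = 0 then 1 else 0 := by
  rcases Nat.eq_zero_or_pos i with rfl | hi
  · simp
  rw [if_neg (by omega)]
  have h1 : (∑ j ∈ Finset.range (i+1), (-1:ℤ)^j * ((d+1).choose j) * ((i - j + d).choose d))
      = ∑ j ∈ Finset.range (i+d+2), (-1:ℤ)^j * ((d+1).choose j) * (((i+d) - j).choose d) := by
    have e0 : (∑ j ∈ Finset.range (i+1), (-1:ℤ)^j * ((d+1).choose j) * ((i - j + d).choose d))
        = ∑ j ∈ Finset.range (i+1), (-1:ℤ)^j * ((d+1).choose j) * (((i+d) - j).choose d) := by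
      apply Finset.sum_congr rfl
      intro j hj
      simp only [Finset.mem_range] at hj
      have e : i - j + d = i + d - j := by omega
      rw [e]
    rw [e0]
    apply Finset.sum_subset
    · intro x hx; simp only [Finset.mem_range] at hx ⊢; omega
    · intro x hx hnx
      simp only [Finset.mem_range] at hx hnx
      have : ((i+d) - x).choose d = 0 := Nat.choose_eq_zero_of_lt (by omega)
      rw [this]; simp
  have h2 : (∑ j ∈ Finset.range ((d+1)+1), (-1:ℤ)^j * ((d+1).choose j) * (((i+d) - j).choose d))
      = ∑ j ∈ Finset.range (i+d+2), (-1:ℤ)^j * ((d+1).choose j) * (((i+d) - j).choose d) := by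
    apply Finset.sum_subset
    · intro x hx; simp only [Finset.mem_range] at hx ⊢; omega
    · intro x hx hnx
      simp only [Finset.mem_range] at hx hnx
      have : (d+1).choose x = 0 := Nat.choose_eq_zero_of_lt (by omega)
      rw [this]; simp
  have h3 := chooseAlt (d+1) (i+d) d (by omega)
  rw [if_neg (by omega)] at h3
  rw [h1, ← h2, h3]

/-- `BFin t c` : tuples `Fin t → ℕ` with sum at most `c`. -/
def BFin : (t : ℕ) → (c : ℕ) → Finset (Fin t → ℕ)
  | 0, _ => Finset.univ
  | t+1, c => (Finset.range (c+1)).biUnion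
      (fun j => ((BFin t (c - j)).image (fun y => Fin.snoc y j)))

lemma mem_BFin : ∀ (t c : ℕ) (g : Fin t → ℕ), g ∈ BFin t c ↔ (∑ i, g i) ≤ c := by
  intro t
  induction t with
  | zero =>
    intro c g
    rw [BFin]
    constructor
    · intro _; simp
    · intro _; exact Finset.mem_univ g
  | succ t ih =>
    intro c g
    simp only [BFin, Finset.mem_biUnion, Finset.mem_range, Finset.mem_image]
    constructor
    · rintro ⟨j, hj, y, hy, rfl⟩
      rw [ih] at hy
      rw [Fin.sum_univ_castSucc]
      simp only [Fin.snoc_castSucc, Fin.snoc_last]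
      omega
    · intro hg
      rw [Fin.sum_univ_castSucc] at hg
      refine ⟨g (Fin.last t), by omega, Fin.init g, ?_, Fin.snoc_init_self g⟩
      rw [ih]
      have : ∀ i : Fin t, Fin.init g i = g i.castSucc := fun i => rfl
      simp only [this]
      omega

lemma snoc_inj {t : ℕ} (j : ℕ) : Function.Injective (fun y : Fin t → ℕ => Fin.snoc y j : _ → Fin (t+1) → ℕ) := by
  intro y y' h
  funext i
  have := congrFun h i.castSucc
  simpa [Fin.snoc_castSucc] using this

lemma card_BFin : ∀ (t c : ℕ), (BFin t c).card = (c + t).choose t := by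
  intro t
  induction t with
  | zero =>
    intro c
    rw [BFin, Finset.card_univ, Nat.choose_zero_right]
    exact Fintype.card_unique
  | succ t ih =>
    intro c
    rw [BFin, Finset.card_biUnion]
    · have : ∀ j ∈ Finset.range (c+1),
          ((BFin t (c - j)).image (fun y => Fin.snoc y j : _ → Fin (t+1) → ℕ)).card
          = ((c - j) + t).choose t := by
        intro j _
        rw [Finset.card_image_of_injective _ (snoc_inj j), ih]
      rw [Finset.sum_congr rfl this]
      have hr : (∑ j ∈ Finset.range (c+1), ((c - j) + t).choose t)
          = ∑ j ∈ Finset.range (c+1), (j + t).choose t := by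
        rw [← Finset.sum_range_reflect]
        apply Finset.sum_congr rfl
        intro j hj
        simp only [Finset.mem_range] at hj
        congr 2
        omega
      rw [hr, Nat.sum_range_add_choose c t, Nat.add_assoc]
    · intro j hj j' hj' hne
      simp only [Finset.disjoint_left, Finset.mem_image]
      rintro g ⟨y, _, rfl⟩ ⟨y', _, h⟩
      apply hne
      have := congrFun h (Fin.last t)
      simpa [Fin.snoc_last] using this.symm

/-- Integer-bound version. -/
def BFinI (t : ℕ) (c : ℤ) : Finset (Fin t → ℕ) := if 0 ≤ c then BFin t c.toNat else ∅

lemma mem_BFinI {t : ℕ} {c : ℤ} {g : Fin t → ℕ} :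
    g ∈ BFinI t c ↔ (∑ i, (g i : ℤ)) ≤ c := by
  rw [BFinI]
  split_ifs with h
  · rw [mem_BFin]
    have : (∑ i, (g i : ℤ)) = ((∑ i, g i : ℕ) : ℤ) := by push_cast; rfl
    rw [this]
    omega
  · simp only [Finset.notMem_empty, false_iff, not_le]
    calc c < 0 := by omega
    _ ≤ ∑ i, (g i : ℤ) := Finset.sum_nonneg (fun i _ => by positivity)

lemma card_BFinI (t : ℕ) (c : ℤ) (hc : 0 ≤ c) : (BFinI t c).card = (c.toNat + t).choose t := by
  rw [BFinI, if_pos hc, card_BFin]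

lemma card_BFinI_neg (t : ℕ) (c : ℤ) (hc : c < 0) : (BFinI t c).card = 0 := by
  rw [BFinI, if_neg (by omega)]
  simp

lemma sum_ind (D s : ℕ) : (∑ i : Fin D, if (i:ℕ) < s then 1 else 0) = min s D := by
  induction D with
  | zero => simp
  | succ D ih =>
    rw [Fin.sum_univ_castSucc]
    simp only [Fin.coe_castSucc, Fin.val_last]
    rw [ih]
    split_ifs with h <;> omega

/-! ### The simplex -/

def av (p q : ℕ) {D : ℕ} (i : Fin D) : ℕ :=
  (if (i:ℕ) < q then 1 else 0) + (if (i:ℕ) < p + q then 1 else 0)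

def Wv (D p q : ℕ) : Fin (D+1) → ℝ := Fin.snoc (fun i : Fin D => (av p q i : ℝ)) 3

def vert (D p q : ℕ) : Fin (D+1) → (Fin (D+1) → ℝ) :=
  Fin.snoc (fun i : Fin D => Pi.single i.castSucc (1:ℝ)) (Wv D p q)

noncomputable def Vset (D p q : ℕ) : Finset (Fin (D+1) → ℝ) := insert 0 (Finset.image (vert D p q) Finset.univ)

def Pset (D p q : ℕ) : Set (Fin (D+1) → ℝ) := convexHull ℝ (Vset D p q : Set (Fin (D+1) → ℝ))

lemma sum_vert (D p q : ℕ) (μ : Fin (D+1) → ℝ) :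
    (∑ i, μ i • vert D p q i) =
      Fin.snoc (fun j : Fin D => μ j.castSucc + μ (Fin.last D) * (av p q j : ℝ))
        (μ (Fin.last D) * 3) := by
  funext j
  have hc : (∑ i, μ i • vert D p q i) j = ∑ i, μ i * vert D p q i j := by
    rw [Finset.sum_apply]
    rfl
  rw [hc, Fin.sum_univ_castSucc]
  simp only [vert, Fin.snoc_castSucc, Fin.snoc_last]
  induction j using Fin.lastCases with
  | last =>
    have h1 : ∀ i : Fin D, μ i.castSucc * (Pi.single i.castSucc (1:ℝ) : Fin (D+1) → ℝ) (Fin.last D) = 0 := by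
      intro i
      rw [Pi.single_eq_of_ne (Fin.castSucc_lt_last i).ne']
      ring
    rw [Finset.sum_congr rfl (fun i _ => h1 i)]
    simp [Wv, Fin.snoc_last]
  | cast j' =>
    have h1 : ∀ i : Fin D, μ i.castSucc * (Pi.single i.castSucc (1:ℝ) : Fin (D+1) → ℝ) j'.castSucc
        = if i = j' then μ i.castSucc else 0 := by
      intro i
      rw [Pi.single_apply]
      split_ifs with h h2 h3
      · ring
      · exact absurd (Fin.castSucc_injective D h).symm h2
      · exact absurd (congrArg Fin.castSucc h3).symm h
      · ring
    rw [Finset.sum_congr rfl (fun i _ => h1 i), Finset.sum_ite_eq' Finset.univ j']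
    simp [Wv, Fin.snoc_castSucc]

lemma mem_Pset (D p q : ℕ) (x : Fin (D+1) → ℝ) :
    x ∈ Pset D p q ↔ ∃ μ : Fin (D+1) → ℝ,
      (∀ i, 0 ≤ μ i) ∧ (∑ i, μ i) ≤ 1 ∧ x = ∑ i, μ i • vert D p q i := by
  constructor
  · intro hx
    have : x ∈ {y : Fin (D+1) → ℝ | ∃ μ : Fin (D+1) → ℝ,
        (∀ i, 0 ≤ μ i) ∧ (∑ i, μ i) ≤ 1 ∧ y = ∑ i, μ i • vert D p q i} := by
      refine convexHull_min ?_ ?_ hx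
      · intro v hv
        simp only [Vset, Finset.coe_insert, Set.mem_insert_iff, Finset.coe_image,
          Set.mem_image, Finset.mem_coe, Finset.mem_univ] at hv
        rcases hv with rfl | ⟨i, _, rfl⟩
        · exact ⟨0, fun i => le_refl 0, by simp, by simp⟩
        · refine ⟨Pi.single i 1, fun j => by
            rw [Pi.single_apply]; split_ifs <;> norm_num, by simp, ?_⟩
          have : ∀ j : Fin (D+1), (Pi.single i (1:ℝ) : Fin (D+1) → ℝ) j • vert D p q j
              = if j = i then vert D p q i else 0 := by
            intro j
            rw [Pi.single_apply]
            split_ifs with h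
            · rw [h]; simp
            · simp
          rw [Finset.sum_congr rfl (fun j _ => this j), Finset.sum_ite_eq' Finset.univ i]
          simp
      · rintro y ⟨μy, hy0, hy1, rfl⟩ z ⟨μz, hz0, hz1, rfl⟩ α β hα hβ hαβ
        refine ⟨fun i => α * μy i + β * μz i, fun i => add_nonneg (mul_nonneg hα (hy0 i)) (mul_nonneg hβ (hz0 i)), ?_, ?_⟩
        · rw [Finset.sum_add_distrib, ← Finset.mul_sum, ← Finset.mul_sum]
          nlinarith [Finset.sum_nonneg (fun i (_ : i ∈ Finset.univ) => hy0 i),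
            Finset.sum_nonneg (fun i (_ : i ∈ Finset.univ) => hz0 i)]
        · rw [Finset.smul_sum, Finset.smul_sum, ← Finset.sum_add_distrib]
          apply Finset.sum_congr rfl
          intro i _
          rw [add_smul, smul_smul, smul_smul]
    exact this
  · rintro ⟨μ, h0, h1, rfl⟩
    have hw : ∀ i ∈ (Finset.univ : Finset (Fin (D+2))), (0:ℝ) ≤ (Fin.cons (1 - ∑ i, μ i) μ : Fin (D+2) → ℝ) i := by
      intro i _
      induction i using Fin.cases with
      | zero => simp only [Fin.cons_zero]; linarith
      | succ i => simp only [Fin.cons_succ]; exact h0 i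
    have hz : ∀ i ∈ Finset.univ,
        (Fin.cons 0 (vert D p q) : Fin (D+2) → (Fin (D+1) → ℝ)) i ∈ (Vset D p q : Set (Fin (D+1) → ℝ)) := by
      intro i _
      induction i using Fin.cases with
      | zero =>
        simp only [Fin.cons_zero]
        simp [Vset]
      | succ i =>
        simp only [Fin.cons_succ, Vset, Finset.coe_insert]
        right
        simp only [Finset.coe_image, Set.mem_image, Finset.mem_coe]
        exact ⟨i, Finset.mem_univ i, rfl⟩
    have hsw : (∑ i, (Fin.cons (1 - ∑ i, μ i) μ : Fin (D+2) → ℝ) i) = 1 := by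
      rw [Fin.sum_univ_succ]
      simp only [Fin.cons_zero, Fin.cons_succ]
      ring
    have := Finset.centerMass_mem_convexHull (Finset.univ : Finset (Fin (D+2)))
      hw (by rw [hsw]; norm_num) hz
    have hcm : Finset.univ.centerMass (Fin.cons (1 - ∑ i, μ i) μ)
        (Fin.cons 0 (vert D p q) : Fin (D+2) → (Fin (D+1) → ℝ)) = ∑ i, μ i • vert D p q i := by
      rw [Finset.centerMass, hsw]
      rw [inv_one, one_smul, Fin.sum_univ_succ]
      simp only [Fin.cons_zero, Fin.cons_succ, smul_zero, zero_add]
    rw [hcm] at this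
    exact this

lemma mem_dilate (D p q k : ℕ) (x : Fin (D+1) → ℝ) :
    x ∈ (fun y => (k:ℝ) • y) '' Pset D p q ↔ ∃ μ : Fin (D+1) → ℝ,
      (∀ i, 0 ≤ μ i) ∧ (∑ i, μ i) ≤ (k:ℝ) ∧ x = ∑ i, μ i • vert D p q i := by
  constructor
  · rintro ⟨y, hy, rfl⟩
    rw [mem_Pset] at hy
    obtain ⟨μ, h0, h1, rfl⟩ := hy
    refine ⟨fun i => (k:ℝ) * μ i, fun i => mul_nonneg (Nat.cast_nonneg k) (h0 i), ?_, ?_⟩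
    · rw [← Finset.mul_sum]
      calc (k:ℝ) * ∑ i, μ i ≤ (k:ℝ) * 1 :=
        mul_le_mul_of_nonneg_left h1 (Nat.cast_nonneg k)
      _ = k := by ring
    · show (k:ℝ) • (∑ i, μ i • vert D p q i) = _
      rw [Finset.smul_sum]
      apply Finset.sum_congr rfl
      intro i _
      rw [smul_smul]
  · rintro ⟨μ, h0, h1, rfl⟩
    rcases Nat.eq_zero_or_pos k with rfl | hk
    · have hμ : ∀ i, μ i = 0 := by
        intro i
        have hs : (∑ i, μ i) = 0 := le_antisymm (by exact_mod_cast h1)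
          (Finset.sum_nonneg (fun i _ => h0 i))
        by_contra hne
        have : 0 < μ i := lt_of_le_of_ne (h0 i) (Ne.symm hne)
        have : 0 < ∑ j, μ j := Finset.sum_pos' (fun j _ => h0 j) ⟨i, Finset.mem_univ i, this⟩
        linarith [hs]
      refine ⟨0, ?_, ?_⟩
      · rw [Pset]
        apply subset_convexHull
        simp [Vset]
      · simp only [Nat.cast_zero, zero_smul]
        symm
        apply Finset.sum_eq_zero
        intro i _
        rw [hμ i, zero_smul]
    · have hkR : (0:ℝ) < k := by exact_mod_cast hk
      refine ⟨∑ i, (μ i / k) • vert D p q i, ?_, ?_⟩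
      · rw [mem_Pset]
        refine ⟨fun i => μ i / k, fun i => div_nonneg (h0 i) hkR.le, ?_, rfl⟩
        rw [← Finset.sum_div]
        rw [div_le_one hkR]
        exact h1
      · show (k:ℝ) • _ = _
        rw [Finset.smul_sum]
        apply Finset.sum_congr rfl
        intro i _
        rw [smul_smul]
        congr 1
        field_simp

/-- The integer conditions cutting out lattice points of the `k`-th dilate. -/
def ZCond (D p q k : ℕ) (z : Fin (D+1) → ℤ) : Prop :=
  0 ≤ z (Fin.last D) ∧
  (∀ i : Fin D, (av p q i : ℤ) * z (Fin.last D) ≤ 3 * z i.castSucc) ∧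
  3 * (∑ i : Fin D, z i.castSucc) + z (Fin.last D)
    ≤ 3 * k + (∑ i : Fin D, (av p q i : ℤ)) * z (Fin.last D)

def castR {D : ℕ} (z : Fin (D+1) → ℤ) : Fin (D+1) → ℝ := fun j => (z j : ℝ)

lemma castR_inj {D : ℕ} : Function.Injective (castR (D := D)) := by
  intro z z' h
  funext j
  have := congrFun h j
  simpa [castR] using this

lemma sol_iff (D p q k : ℕ) (x : Fin (D+1) → ℝ) :
    (x ∈ (fun y => (k:ℝ) • y) '' Pset D p q ∧ IsLatticePt x) ↔
    ∃ z : Fin (D+1) → ℤ, ZCond D p q k z ∧ castR z = x := by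
  constructor
  · rintro ⟨hx, hlat⟩
    choose z hz using hlat
    rw [mem_dilate] at hx
    obtain ⟨μ, h0, h1, hxe⟩ := hx
    rw [sum_vert] at hxe
    have hlast : (z (Fin.last D) : ℝ) = μ (Fin.last D) * 3 := by
      rw [← hz (Fin.last D)]
      rw [hxe]
      rw [Fin.snoc_last]
    have hcs : ∀ i : Fin D, (z i.castSucc : ℝ) = μ i.castSucc + μ (Fin.last D) * (av p q i : ℝ) := by
      intro i
      rw [← hz i.castSucc, hxe, Fin.snoc_castSucc]
    refine ⟨z, ⟨?_, ?_, ?_⟩, by funext j; exact (hz j).symm⟩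
    · have : (0:ℝ) ≤ (z (Fin.last D) : ℝ) := by
        rw [hlast]; have := h0 (Fin.last D); linarith
      exact_mod_cast this
    · intro i
      have h3 : ((av p q i : ℤ) * z (Fin.last D) : ℝ) ≤ ((3 * z i.castSucc : ℤ) : ℝ) := by
        push_cast
        rw [hlast, hcs i]
        have := h0 i.castSucc
        nlinarith [Nat.cast_nonneg (α := ℝ) (av p q i)]
      exact_mod_cast h3
    · have hsum : (∑ i, μ i) = (∑ i : Fin D, μ i.castSucc) + μ (Fin.last D) :=
        Fin.sum_univ_castSucc μ
      have hR : ((3 * (∑ i : Fin D, z i.castSucc) + z (Fin.last D) : ℤ) : ℝ)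
          ≤ ((3 * k + (∑ i : Fin D, (av p q i : ℤ)) * z (Fin.last D) : ℤ) : ℝ) := by
        push_cast
        have e1 : (∑ i : Fin D, (z i.castSucc : ℝ))
            = (∑ i : Fin D, μ i.castSucc) + μ (Fin.last D) * (∑ i : Fin D, (av p q i : ℝ)) := by
          rw [Finset.mul_sum, ← Finset.sum_add_distrib]
          exact Finset.sum_congr rfl (fun i _ => hcs i)
        rw [e1, hlast]
        rw [hsum] at h1
        ring_nf
        nlinarith [h1]
      exact_mod_cast hR
  · rintro ⟨z, ⟨hz0, hz1, hz2⟩, rfl⟩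
    constructor
    · rw [mem_dilate]
      refine ⟨Fin.snoc (fun i : Fin D => (z i.castSucc : ℝ) - (z (Fin.last D) : ℝ) * (av p q i : ℝ) / 3)
        ((z (Fin.last D) : ℝ) / 3), ?_, ?_, ?_⟩
      · intro i
        induction i using Fin.lastCases with
        | last =>
          rw [Fin.snoc_last]
          have : (0:ℝ) ≤ (z (Fin.last D) : ℝ) := by exact_mod_cast hz0
          linarith
        | cast i =>
          rw [Fin.snoc_castSucc]
          have h3 : ((av p q i : ℤ) * z (Fin.last D) : ℝ) ≤ ((3 * z i.castSucc : ℤ) : ℝ) := by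
            exact_mod_cast hz1 i
          push_cast at h3
          linarith
      · rw [Fin.sum_univ_castSucc]
        simp only [Fin.snoc_castSucc, Fin.snoc_last]
        have hR : ((3 * (∑ i : Fin D, z i.castSucc) + z (Fin.last D) : ℤ) : ℝ)
            ≤ ((3 * k + (∑ i : Fin D, (av p q i : ℤ)) * z (Fin.last D) : ℤ) : ℝ) := by
          exact_mod_cast hz2
        push_cast at hR
        rw [Finset.sum_sub_distrib]
        have e2 : (∑ i : Fin D, (z (Fin.last D) : ℝ) * (av p q i : ℝ) / 3)
            = (z (Fin.last D) : ℝ) * (∑ i : Fin D, (av p q i : ℝ)) / 3 := by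
          rw [Finset.mul_sum, Finset.sum_div]
        rw [e2]
        linarith
      · rw [sum_vert]
        funext j
        induction j using Fin.lastCases with
        | last =>
          rw [Fin.snoc_last, Fin.snoc_last]
          simp only [castR]
          field_simp
        | cast j =>
          rw [Fin.snoc_castSucc, Fin.snoc_castSucc, Fin.snoc_last]
          simp only [castR]
          field_simp
          ring
    · intro j
      exact ⟨z j, rfl⟩

/-! ### Counting the lattice points -/

def tv (p q r : ℕ) {D : ℕ} (i : Fin D) : ℕ := (av p q i * r + 2)/3

lemma av_cases {D : ℕ} (p q : ℕ) (i : Fin D) :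
    (av p q i = 2 ∧ (i:ℕ) < q ∧ (i:ℕ) < p + q) ∨
    (av p q i = 1 ∧ ¬(i:ℕ) < q ∧ (i:ℕ) < p + q) ∨
    (av p q i = 0 ∧ ¬(i:ℕ) < q ∧ ¬(i:ℕ) < p + q) := by
  unfold av
  split_ifs with h1 h2 h2 <;> omega

lemma tv_zero {D : ℕ} (p q : ℕ) (i : Fin D) : tv p q 0 i = 0 := by
  unfold tv; omega

lemma tv_one {D : ℕ} (p q : ℕ) (i : Fin D) :
    tv p q 1 i = if (i:ℕ) < p + q then 1 else 0 := by
  rcases av_cases p q i with ⟨h, h1, h2⟩ | ⟨h, h1, h2⟩ | ⟨h, h1, h2⟩ <;>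
    (unfold tv; rw [h]; simp [h2])

lemma tv_two {D : ℕ} (p q : ℕ) (i : Fin D) : tv p q 2 i = av p q i := by
  rcases av_cases p q i with ⟨h, h1, h2⟩ | ⟨h, h1, h2⟩ | ⟨h, h1, h2⟩ <;> (unfold tv; rw [h])

lemma sum_av {D p q : ℕ} (hpq : p + q ≤ D) :
    (∑ i : Fin D, av p q i) = p + 2*q := by
  unfold av
  rw [Finset.sum_add_distrib, sum_ind, sum_ind]
  omega

lemma sum_tv_one {D p q : ℕ} (hpq : p + q ≤ D) :
    (∑ i : Fin D, tv p q 1 i) = p + q := by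
  have : ∀ i : Fin D, tv p q 1 i = if (i:ℕ) < p + q then 1 else 0 := tv_one p q
  rw [Finset.sum_congr rfl (fun i _ => this i), sum_ind]
  omega

lemma sum_tv_two {D p q : ℕ} (hpq : p + q ≤ D) :
    (∑ i : Fin D, tv p q 2 i) = p + 2*q := by
  have : ∀ i : Fin D, tv p q 2 i = av p q i := tv_two p q
  rw [Finset.sum_congr rfl (fun i _ => this i), sum_av hpq]

def phi (D p q r : ℕ) (g : Fin (D+1) → ℕ) : Fin (D+1) → ℤ :=
  Fin.snoc (fun i : Fin D => (g i.castSucc : ℤ) + av p q i * g (Fin.last D) + tv p q r i)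
    (3 * g (Fin.last D) + r)

lemma phi_last (D p q r : ℕ) (g : Fin (D+1) → ℕ) :
    phi D p q r g (Fin.last D) = 3 * g (Fin.last D) + r := by
  unfold phi; rw [Fin.snoc_last]

lemma phi_cs (D p q r : ℕ) (g : Fin (D+1) → ℕ) (i : Fin D) :
    phi D p q r g i.castSucc = (g i.castSucc : ℤ) + av p q i * g (Fin.last D) + tv p q r i := by
  unfold phi; rw [Fin.snoc_castSucc]

lemma phi_inj (D p q r : ℕ) : Function.Injective (phi D p q r) := by
  intro g g' h
  have hl : g (Fin.last D) = g' (Fin.last D) := by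
    have := congrFun h (Fin.last D)
    rw [phi_last, phi_last] at this
    omega
  funext j
  induction j using Fin.lastCases with
  | last => exact hl
  | cast i =>
    have := congrFun h i.castSucc
    rw [phi_cs, phi_cs, hl] at this
    omega

noncomputable def ZFin (D p q m n k : ℕ) : Finset (Fin (D+1) → ℤ) :=
  ((BFinI (D+1) (k:ℤ)).image (phi D p q 0)) ∪
  ((BFinI (D+1) ((k:ℤ) - m)).image (phi D p q 1)) ∪
  ((BFinI (D+1) ((k:ℤ) - n)).image (phi D p q 2))

lemma sum_g_split {D : ℕ} (g : Fin (D+1) → ℕ) :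
    (∑ i, (g i : ℤ)) = (∑ i : Fin D, (g i.castSucc : ℤ)) + (g (Fin.last D) : ℤ) :=
  Fin.sum_univ_castSucc (fun i => (g i : ℤ))

lemma zcond_of_phi (D p q m n k : ℕ) (hpq : p + q ≤ D)
    (hm1 : 2*p + q + 1 ≤ 3*m) (hm2 : 3*m ≤ 2*p + q + 3)
    (hn1 : p + 2*q + 2 ≤ 3*n) (hn2 : 3*n ≤ p + 2*q + 4)
    {z : Fin (D+1) → ℤ} (hz : z ∈ ZFin D p q m n k) : ZCond D p q k z := by
  have hS : (∑ i : Fin D, (av p q i : ℤ)) = (p : ℤ) + 2*q := by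
    have h := sum_av (D := D) (p := p) (q := q) hpq
    exact_mod_cast h
  simp only [ZFin, Finset.mem_union, Finset.mem_image] at hz
  have key : ∀ (r T : ℕ) (K : ℤ) (g : Fin (D+1) → ℕ), (∑ i, (g i : ℤ)) ≤ K →
      (∑ i : Fin D, (tv p q r i : ℤ)) = T →
      3*(K : ℤ) - ((p:ℤ) + 2*q) * r + 3*T + r ≤ 3*k →
      ZCond D p q k (phi D p q r g) := by
    intro r T K g hg hT hineq
    refine ⟨?_, ?_, ?_⟩
    · rw [phi_last]; positivity
    · intro i
      rw [phi_last, phi_cs]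
      rcases av_cases p q i with ⟨h, h1, h2⟩ | ⟨h, h1, h2⟩ | ⟨h, h1, h2⟩ <;>
        · unfold tv
          rw [h]
          push_cast
          omega
    · rw [phi_last]
      have hcs : (∑ i : Fin D, phi D p q r g i.castSucc)
          = (∑ i : Fin D, (g i.castSucc : ℤ)) + ((p:ℤ) + 2*q) * (g (Fin.last D) : ℤ)
            + (∑ i : Fin D, (tv p q r i : ℤ)) := by
        have : ∀ i : Fin D, phi D p q r g i.castSucc
            = (g i.castSucc : ℤ) + (av p q i : ℤ) * g (Fin.last D) + (tv p q r i : ℤ) :=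
          fun i => phi_cs D p q r g i
        rw [Finset.sum_congr rfl (fun i _ => this i), Finset.sum_add_distrib,
          Finset.sum_add_distrib, ← Finset.sum_mul, hS]
      rw [hcs, hT]
      rw [sum_g_split] at hg
      rw [hS]
      have hexp : ((p:ℤ)+2*q) * (3*(g (Fin.last D):ℤ) + r)
          = 3*(((p:ℤ)+2*q) * (g (Fin.last D):ℤ)) + ((p:ℤ)+2*q)*r := by ring
      linarith [hg, hineq, hexp]
  rcases hz with (⟨g, hg, rfl⟩ | ⟨g, hg, rfl⟩) | ⟨g, hg, rfl⟩
  · rw [mem_BFinI] at hg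
    refine key 0 0 (k : ℤ) g hg ?_ ?_
    · simp [tv_zero]
    · push_cast; ring_nf; omega
  · rw [mem_BFinI] at hg
    refine key 1 (p + q) ((k:ℤ) - m) g hg ?_ ?_
    · have := sum_tv_one (D := D) (p := p) (q := q) hpq
      push_cast [← this]
      rfl
    · push_cast; ring_nf; omega
  · rw [mem_BFinI] at hg
    refine key 2 (p + 2*q) ((k:ℤ) - n) g hg ?_ ?_
    · have := sum_tv_two (D := D) (p := p) (q := q) hpq
      push_cast [← this]
      rfl
    · push_cast; ring_nf; omega


lemma phi_of_zcond (D p q m n k : ℕ) (hpq : p + q ≤ D)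
    (hm1 : 2*p + q + 1 ≤ 3*m) (hm2 : 3*m ≤ 2*p + q + 3)
    (hn1 : p + 2*q + 2 ≤ 3*n) (hn2 : 3*n ≤ p + 2*q + 4)
    {z : Fin (D+1) → ℤ} (hz : ZCond D p q k z) : z ∈ ZFin D p q m n k := by
  obtain ⟨h0, h1, h2⟩ := hz
  have hS : (∑ i : Fin D, (av p q i : ℤ)) = (p : ℤ) + 2*q := by
    have h := sum_av (D := D) (p := p) (q := q) hpq
    exact_mod_cast h
  set L := z (Fin.last D) with hL
  have hu : 0 ≤ L / 3 := Int.ediv_nonneg h0 (by norm_num)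
  have key : ∀ (r T : ℕ) (K : ℤ), (r : ℤ) = L % 3 →
      (∑ i : Fin D, (tv p q r i : ℤ)) = T →
      3*k + ((p:ℤ) + 2*q) * r - 3*T - r ≤ 3*K + 2 →
      ∃ g : Fin (D+1) → ℕ, (∑ i, (g i : ℤ)) ≤ K ∧ phi D p q r g = z := by
    intro r T K hrL hT hK
    have ci : ∀ i : Fin D, 0 ≤ z i.castSucc - (av p q i : ℤ) * (L / 3) - (tv p q r i : ℤ) := by
      intro i
      have hi := h1 i
      rcases av_cases p q i with ⟨h, _, _⟩ | ⟨h, _, _⟩ | ⟨h, _, _⟩ <;>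
        · unfold tv
          rw [h] at hi ⊢
          push_cast
          omega
    refine ⟨Fin.snoc (fun i : Fin D =>
      (z i.castSucc - (av p q i : ℤ) * (L / 3) - (tv p q r i : ℤ)).toNat) (L / 3).toNat, ?_, ?_⟩
    · rw [sum_g_split]
      simp only [Fin.snoc_castSucc, Fin.snoc_last]
      have e1 : (∑ i : Fin D, ((z i.castSucc - (av p q i : ℤ) * (L / 3) - (tv p q r i : ℤ)).toNat : ℤ))
          = (∑ i : Fin D, z i.castSucc) - ((p:ℤ) + 2*q) * (L/3) - T := by
        have : ∀ i : Fin D, ((z i.castSucc - (av p q i : ℤ) * (L / 3) - (tv p q r i : ℤ)).toNat : ℤ)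
            = z i.castSucc - (av p q i : ℤ) * (L / 3) - (tv p q r i : ℤ) :=
          fun i => Int.toNat_of_nonneg (ci i)
        rw [Finset.sum_congr rfl (fun i _ => this i)]
        rw [Finset.sum_sub_distrib, Finset.sum_sub_distrib, ← Finset.sum_mul, hS, hT]
      rw [e1, Int.toNat_of_nonneg hu]
      have e3 : 3*(L/3) = L - r := by omega
      have e4 : 3*(((p:ℤ)+2*q)*(L/3)) = ((p:ℤ)+2*q)*L - ((p:ℤ)+2*q)*r := by
        calc 3*(((p:ℤ)+2*q)*(L/3)) = ((p:ℤ)+2*q)*(3*(L/3)) := by ring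
        _ = ((p:ℤ)+2*q)*(L - r) := by rw [e3]
        _ = ((p:ℤ)+2*q)*L - ((p:ℤ)+2*q)*r := by ring
      rw [hS] at h2
      linarith [h2, hK, e4, e3]
    · funext j
      induction j using Fin.lastCases with
      | last =>
        rw [phi_last, Fin.snoc_last, Int.toNat_of_nonneg hu]
        omega
      | cast i =>
        rw [phi_cs, Fin.snoc_castSucc, Fin.snoc_last, Int.toNat_of_nonneg (ci i),
          Int.toNat_of_nonneg hu]
        ring
  simp only [ZFin, Finset.mem_union, Finset.mem_image]
  have hr3 : L % 3 = 0 ∨ L % 3 = 1 ∨ L % 3 = 2 := by omega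
  rcases hr3 with hr | hr | hr
  · obtain ⟨g, hg, hphi⟩ := key 0 0 (k : ℤ) (by omega) (by simp [tv_zero]) (by push_cast; ring_nf; omega)
    exact Or.inl (Or.inl ⟨g, mem_BFinI.mpr hg, hphi⟩)
  · obtain ⟨g, hg, hphi⟩ := key 1 (p + q) ((k:ℤ) - m) (by omega)
      (by exact_mod_cast congrArg (fun t : ℕ => (t:ℤ)) (sum_tv_one (D := D) hpq))
      (by push_cast; ring_nf; omega)
    exact Or.inl (Or.inr ⟨g, mem_BFinI.mpr hg, hphi⟩)
  · obtain ⟨g, hg, hphi⟩ := key 2 (p + 2*q) ((k:ℤ) - n) (by omega)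
      (by exact_mod_cast congrArg (fun t : ℕ => (t:ℤ)) (sum_tv_two (D := D) hpq))
      (by push_cast; ring_nf; omega)
    exact Or.inr ⟨g, mem_BFinI.mpr hg, hphi⟩

lemma mem_image_phi_mod (D p q r : ℕ) (S : Finset (Fin (D+1) → ℕ)) {z : Fin (D+1) → ℤ}
    (hz : z ∈ S.image (phi D p q r)) : z (Fin.last D) % 3 = (r : ℤ) % 3 := by
  simp only [Finset.mem_image] at hz
  obtain ⟨g, _, rfl⟩ := hz
  rw [phi_last]
  omega

lemma card_ZFin (D p q m n k : ℕ) (hm0 : 1 ≤ m) (hmn : m < n) :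
    (ZFin D p q m n k).card =
      (k + (D+1)).choose (D+1)
      + (if m ≤ k then ((k-m) + (D+1)).choose (D+1) else 0)
      + (if n ≤ k then ((k-n) + (D+1)).choose (D+1) else 0) := by
  have hd01 : Disjoint ((BFinI (D+1) (k:ℤ)).image (phi D p q 0))
      ((BFinI (D+1) ((k:ℤ) - m)).image (phi D p q 1)) := by
    rw [Finset.disjoint_left]
    intro z hz0 hz1
    have := mem_image_phi_mod D p q 0 _ hz0
    have := mem_image_phi_mod D p q 1 _ hz1
    omega
  have hd2 : Disjoint (((BFinI (D+1) (k:ℤ)).image (phi D p q 0)) ∪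
      ((BFinI (D+1) ((k:ℤ) - m)).image (phi D p q 1)))
      ((BFinI (D+1) ((k:ℤ) - n)).image (phi D p q 2)) := by
    rw [Finset.disjoint_left]
    intro z hz0 hz2
    have h2 := mem_image_phi_mod D p q 2 _ hz2
    rcases Finset.mem_union.mp hz0 with h | h
    · have := mem_image_phi_mod D p q 0 _ h
      omega
    · have := mem_image_phi_mod D p q 1 _ h
      omega
  rw [ZFin, Finset.card_union_of_disjoint hd2, Finset.card_union_of_disjoint hd01]
  rw [Finset.card_image_of_injective _ (phi_inj D p q 0),
    Finset.card_image_of_injective _ (phi_inj D p q 1),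
    Finset.card_image_of_injective _ (phi_inj D p q 2)]
  have c0 : (BFinI (D+1) (k:ℤ)).card = (k + (D+1)).choose (D+1) := by
    rw [card_BFinI _ _ (by positivity)]
    simp
  have c1 : (BFinI (D+1) ((k:ℤ) - m)).card
      = if m ≤ k then ((k-m) + (D+1)).choose (D+1) else 0 := by
    by_cases h : m ≤ k
    · rw [if_pos h, card_BFinI _ _ (by omega)]
      congr 2
      omega
    · rw [if_neg h, card_BFinI_neg _ _ (by omega)]
  have c2 : (BFinI (D+1) ((k:ℤ) - n)).card
      = if n ≤ k then ((k-n) + (D+1)).choose (D+1) else 0 := by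
    by_cases h : n ≤ k
    · rw [if_pos h, card_BFinI _ _ (by omega)]
      congr 2
      omega
    · rw [if_neg h, card_BFinI_neg _ _ (by omega)]
  rw [c0, c1, c2]

lemma ehrhart_Pset (D p q m n : ℕ) (hpq : p + q ≤ D)
    (hm1 : 2*p + q + 1 ≤ 3*m) (hm2 : 3*m ≤ 2*p + q + 3)
    (hn1 : p + 2*q + 2 ≤ 3*n) (hn2 : 3*n ≤ p + 2*q + 4)
    (hm0 : 1 ≤ m) (hmn : m < n) (k : ℕ) :
    ehrhart (Pset D p q) k =
      (k + (D+1)).choose (D+1)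
      + (if m ≤ k then ((k-m) + (D+1)).choose (D+1) else 0)
      + (if n ≤ k then ((k-n) + (D+1)).choose (D+1) else 0) := by
  rw [ehrhart]
  have hset : {x : Fin (D+1) → ℝ | x ∈ (fun y => (k:ℝ) • y) '' Pset D p q ∧ IsLatticePt x}
      = castR '' ((ZFin D p q m n k : Finset (Fin (D+1) → ℤ)) : Set (Fin (D+1) → ℤ)) := by
    ext x
    rw [Set.mem_setOf_eq, sol_iff]
    simp only [Set.mem_image, Finset.mem_coe]
    constructor
    · rintro ⟨z, hc, he⟩
      exact ⟨z, phi_of_zcond D p q m n k hpq hm1 hm2 hn1 hn2 hc, he⟩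
    · rintro ⟨z, hz, he⟩
      exact ⟨z, zcond_of_phi D p q m n k hpq hm1 hm2 hn1 hn2 hz, he⟩
  rw [hset, Set.ncard_image_of_injective _ castR_inj, Set.ncard_coe_finset,
    card_ZFin D p q m n k hm0 hmn]

lemma shiftSum (d M i : ℕ) (hd : 1 ≤ d) (hM : 1 ≤ M) :
    (∑ j ∈ Finset.range (i+1), (-1:ℤ)^j * ((d+1).choose j)
      * (if M ≤ i - j then (((i-j-M) + d).choose d : ℤ) else 0)) = if i = M then 1 else 0 := by
  by_cases him : M ≤ i
  · have h1 : (∑ j ∈ Finset.range (i+1), (-1:ℤ)^j * ((d+1).choose j)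
        * (if M ≤ i - j then (((i-j-M) + d).choose d : ℤ) else 0))
        = ∑ j ∈ Finset.range ((i-M)+1), (-1:ℤ)^j * ((d+1).choose j)
          * (((i-M) - j + d).choose d : ℤ) := by
      rw [← Finset.sum_subset (Finset.range_subset_range.mpr (by omega : (i-M)+1 ≤ i+1))]
      · apply Finset.sum_congr rfl
        intro j hj
        simp only [Finset.mem_range] at hj
        rw [if_pos (by omega : M ≤ i - j)]
        congr 3
        omega
      · intro j hj hnj
        simp only [Finset.mem_range] at hj hnj
        rw [if_neg (by omega : ¬ M ≤ i - j)]
        ring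
    rw [h1, deltaBase d (i-M) hd]
    by_cases h : i = M
    · rw [if_pos (by omega), if_pos h]
    · rw [if_neg (by omega), if_neg h]
  · rw [if_neg (by omega : ¬ i = M)]
    apply Finset.sum_eq_zero
    intro j hj
    simp only [Finset.mem_range] at hj
    rw [if_neg (by omega : ¬ M ≤ i - j)]
    ring

lemma delta_Pset (D p q m n : ℕ) (hpq : p + q ≤ D)
    (hm1 : 2*p + q + 1 ≤ 3*m) (hm2 : 3*m ≤ 2*p + q + 3)
    (hn1 : p + 2*q + 2 ≤ 3*n) (hn2 : 3*n ≤ p + 2*q + 4)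
    (hm0 : 1 ≤ m) (hmn : m < n) (i : ℕ) :
    deltaVector (D+1) (Pset D p q) i =
      (if i = 0 then 1 else 0) + (if i = m then 1 else 0) + (if i = n then 1 else 0) := by
  rw [deltaVector]
  have hE : ∀ k : ℕ, (ehrhart (Pset D p q) k : ℤ)
      = ((k + (D+1)).choose (D+1) : ℤ)
        + (if m ≤ k then (((k-m) + (D+1)).choose (D+1) : ℤ) else 0)
        + (if n ≤ k then (((k-n) + (D+1)).choose (D+1) : ℤ) else 0) := by
    intro k
    rw [ehrhart_Pset D p q m n hpq hm1 hm2 hn1 hn2 hm0 hmn k]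
    push_cast [apply_ite (fun t : ℕ => (t:ℤ))]
    ring
  have hsplit : ∀ j ∈ Finset.range (i+1),
      (-1:ℤ)^j * (((D+1)+1).choose j) * (ehrhart (Pset D p q) (i-j) : ℤ)
      = (-1:ℤ)^j * (((D+1)+1).choose j) * (((i-j) + (D+1)).choose (D+1) : ℤ)
        + (-1:ℤ)^j * (((D+1)+1).choose j)
          * (if m ≤ i - j then (((i-j-m) + (D+1)).choose (D+1) : ℤ) else 0)
        + (-1:ℤ)^j * (((D+1)+1).choose j)
          * (if n ≤ i - j then (((i-j-n) + (D+1)).choose (D+1) : ℤ) else 0) := by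
    intro j _
    rw [hE (i-j)]
    ring
  rw [Finset.sum_congr rfl hsplit]
  rw [Finset.sum_add_distrib, Finset.sum_add_distrib]
  rw [deltaBase (D+1) i (by omega), shiftSum (D+1) m i (by omega) hm0,
    shiftSum (D+1) n i (by omega) (by omega)]

lemma isPolytope_Pset (D p q : ℕ) : IsIntegralPolytope (D+1) (D+1) (Pset D p q) := by
  constructor
  · refine ⟨Vset D p q, ⟨0, by simp [Vset]⟩, ?_, rfl⟩
    intro v hv
    simp only [Vset, Finset.mem_insert, Finset.mem_image, Finset.mem_univ, true_and] at hv
    rcases hv with rfl | ⟨i, rfl⟩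
    · intro j; exact ⟨0, by simp⟩
    · intro j
      induction i using Fin.lastCases with
      | last =>
        rw [vert, Fin.snoc_last, Wv]
        induction j using Fin.lastCases with
        | last => exact ⟨3, by rw [Fin.snoc_last]; norm_num⟩
        | cast j' => exact ⟨(av p q j' : ℤ), by rw [Fin.snoc_castSucc]; push_cast; rfl⟩
      | cast i' =>
        rw [vert, Fin.snoc_castSucc]
        rw [Pi.single_apply]
        by_cases h : j = i'.castSucc
        · exact ⟨1, by rw [if_pos h]; norm_num⟩
        · exact ⟨0, by rw [if_neg h]; norm_num⟩
  · have h1 : vectorSpan ℝ (Pset D p q) = vectorSpan ℝ ((Vset D p q : Set (Fin (D+1) → ℝ))) := by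
      rw [Pset, ← direction_affineSpan, ← direction_affineSpan, affineSpan_convexHull]
    have h0V : (0 : Fin (D+1) → ℝ) ∈ (Vset D p q : Set (Fin (D+1) → ℝ)) := by simp [Vset]
    have hvV : ∀ i, vert D p q i ∈ (Vset D p q : Set (Fin (D+1) → ℝ)) := by
      intro i
      simp only [Vset, Finset.coe_insert, Set.mem_insert_iff, Finset.coe_image, Set.mem_image,
        Finset.mem_coe, Finset.mem_univ, true_and]
      right
      exact ⟨i, rfl⟩
    have hmem : ∀ i, vert D p q i ∈ vectorSpan ℝ (Vset D p q : Set (Fin (D+1) → ℝ)) := by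
      intro i
      have := vsub_mem_vectorSpan ℝ (hvV i) h0V
      simpa using this
    have hsingle : ∀ j : Fin (D+1),
        Pi.single j (1:ℝ) ∈ vectorSpan ℝ (Vset D p q : Set (Fin (D+1) → ℝ)) := by
      intro j
      induction j using Fin.lastCases with
      | cast i =>
        have := hmem i.castSucc
        rw [vert, Fin.snoc_castSucc] at this
        exact this
      | last =>
        have hw : Wv D p q ∈ vectorSpan ℝ (Vset D p q : Set (Fin (D+1) → ℝ)) := by
          have := hmem (Fin.last D)
          rw [vert, Fin.snoc_last] at this
          exact this
        have hkey : Pi.single (Fin.last D) (1:ℝ) = (3:ℝ)⁻¹ •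
            (Wv D p q - ∑ i : Fin D, (av p q i : ℝ) • vert D p q i.castSucc) := by
          funext j
          induction j using Fin.lastCases with
          | last =>
            have hsum0 : (∑ i : Fin D, (av p q i : ℝ) • vert D p q i.castSucc) (Fin.last D) = 0 := by
              rw [Finset.sum_apply]
              apply Finset.sum_eq_zero
              intro i _
              rw [vert, Fin.snoc_castSucc, Pi.smul_apply,
                Pi.single_eq_of_ne (Fin.castSucc_lt_last i).ne']
              simp
            rw [Pi.single_eq_same, Pi.smul_apply, Pi.sub_apply, hsum0, Wv, Fin.snoc_last]
            norm_num
          | cast j' =>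
            have hsum1 : (∑ i : Fin D, (av p q i : ℝ) • vert D p q i.castSucc) j'.castSucc
                = (av p q j' : ℝ) := by
              rw [Finset.sum_apply]
              have : ∀ i : Fin D, ((av p q i : ℝ) • vert D p q i.castSucc) j'.castSucc
                  = if i = j' then (av p q i : ℝ) else 0 := by
                intro i
                rw [vert, Fin.snoc_castSucc, Pi.smul_apply, Pi.single_apply]
                split_ifs with hh h2 h3
                · simp
                · exact absurd (Fin.castSucc_injective D hh).symm h2
                · exact absurd (congrArg Fin.castSucc h3).symm hh
                · simp
              rw [Finset.sum_congr rfl (fun i _ => this i), Finset.sum_ite_eq' Finset.univ j']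
              simp
            rw [Pi.single_eq_of_ne (Fin.castSucc_lt_last j').ne, Pi.smul_apply, Pi.sub_apply,
              hsum1, Wv, Fin.snoc_castSucc]
            norm_num
        rw [hkey]
        apply Submodule.smul_mem
        apply Submodule.sub_mem _ hw
        apply Submodule.sum_mem
        intro i _
        apply Submodule.smul_mem
        have := hmem i.castSucc
        exact this
    have htop : vectorSpan ℝ (Vset D p q : Set (Fin (D+1) → ℝ)) = ⊤ := by
      rw [eq_top_iff]
      have hb : ⇑(Pi.basisFun ℝ (Fin (D+1))) = fun j => Pi.single j (1:ℝ) :=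
        funext fun j => Pi.basisFun_apply ℝ (Fin (D+1)) j
      rw [← (Pi.basisFun ℝ (Fin (D+1))).span_eq, hb, Submodule.span_le]
      rintro x ⟨j, rfl⟩
      exact hsingle j
    rw [h1, htop]
    rw [finrank_top, Module.finrank_fintype_fun_eq_card, Fintype.card_fin]

/-- For `d ≥ 3` and integers `1 < m < n < d` with `n − m − 1 ≤ m − 1 ≤ d − n`,
there exists an integral convex polytope `P ⊂ ℝ^d` of dimension `d` with
`δ_0 = δ_m = δ_n = 1` and all other entries of its δ-vector `0`. -/
theorem exists_polytope_delta_sum_three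
    (d m n : ℕ) (hd : 3 ≤ d) (hm : 1 < m) (hmn : m < n) (hnd : n < d)
    (hqp : n - m - 1 ≤ m - 1) (hpr : m - 1 ≤ d - n) :
    ∃ P : Set (Fin d → ℝ), IsIntegralPolytope d d P ∧
      deltaVector d P 0 = 1 ∧ deltaVector d P m = 1 ∧ deltaVector d P n = 1 ∧
      ∀ j ≤ d, j ≠ 0 → j ≠ m → j ≠ n → deltaVector d P j = 0 := by
  obtain ⟨D, rfl⟩ : ∃ D, d = D + 1 := ⟨d - 1, by omega⟩
  obtain ⟨p, q, hpq, hm1, hm2, hn1, hn2⟩ : ∃ p q : ℕ, p + q ≤ D ∧ 2*p+q+1 ≤ 3*m ∧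
      3*m ≤ 2*p+q+3 ∧ p+2*q+2 ≤ 3*n ∧ 3*n ≤ p+2*q+4 := by
    by_cases hc : m + n ≤ D + 1
    · exact ⟨2*m - n, 2*n - m - 1, by omega, by omega, by omega, by omega, by omega⟩
    · exact ⟨2*m - n, 2*n - m - 2, by omega, by omega, by omega, by omega, by omega⟩
  have hδ := delta_Pset D p q m n hpq hm1 hm2 hn1 hn2 (by omega) hmn
  refine ⟨Pset D p q, isPolytope_Pset D p q, ?_, ?_, ?_, ?_⟩
  · rw [hδ 0]; split_ifs <;> omega
  · rw [hδ m]; split_ifs <;> omega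
  · rw [hδ n]; split_ifs <;> omega
  · intro j _ hj0 hjm hjn
    rw [hδ j]; split_ifs <;> omega
end
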